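/- arXiv:1304.0227 — 7 statements merged into one kernel-verified Lean document; each statement's English description precedes it below -/
import Mathlib

section
/- The Banach space c₀(ℕ,K) equipped with its norm topology is homeomorphic, as a topological space, to the countable product K^ℕ equipped with the Tychonoff product topology. -/
open Metric Filter TopologicalSpace Set Topology
open scoped ZeroAtInfty
set_option linter.unusedSectionVars false

namespace AUX

/-- Nodes of the tree indexed along a branch. -/
def node (a : ℕ → ℕ) : ℕ → List ℕ
  | 0 => []
  | k + 1 => a k :: node a k

@[simp] lemma node_length (a : ℕ → ℕ) (k : ℕ) : (node a k).length = k := by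
  induction k with
  | zero => rfl
  | succ k ih => simp [node, ih]

lemma node_congr {a b : ℕ → ℕ} {k : ℕ} (h : ∀ i < k, a i = b i) : node a k = node b k := by
  induction k with
  | zero => rfl
  | succ k ih =>
    simp only [node]
    rw [h k (Nat.lt_succ_self k), ih fun i hi => h i (hi.trans (Nat.lt_succ_self k))]

variable {X : Type*}

/-- The tree of balls: centers and radii. -/
noncomputable def tree (cf : X → ℝ → ℕ → X) (δf : X → ℝ → ℝ) (c0 : ℕ → X) (δ0 : ℝ) :
    List ℕ → X × ℝ
  | [] => (c0 0, 1)
  | [n] => (c0 n, δ0)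
  | n :: m :: t =>
    (cf (tree cf δf c0 δ0 (m :: t)).1 (tree cf δf c0 δ0 (m :: t)).2 n,
      δf (tree cf δf c0 δ0 (m :: t)).1 (tree cf δf c0 δ0 (m :: t)).2)

lemma tree_cons (cf : X → ℝ → ℕ → X) (δf : X → ℝ → ℝ) (c0 : ℕ → X) (δ0 : ℝ)
    (n : ℕ) {s : List ℕ} (hs : s ≠ []) :
    tree cf δf c0 δ0 (n :: s) =
      (cf (tree cf δf c0 δ0 s).1 (tree cf δf c0 δ0 s).2 n,
        δf (tree cf δf c0 δ0 s).1 (tree cf δf c0 δ0 s).2) := by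
  cases s with
  | nil => exact absurd rfl hs
  | cons a t => rfl

lemma ne_nil_of_len {α : Type*} {s : List α} {k : ℕ} (h : s.length = k + 1) : s ≠ [] := by
  intro hn; rw [hn] at h; simp at h

variable {X : Type*} [MetricSpace X] [IsUltrametricDist X]

lemma sep_contra {c c' z : X} {δ : ℝ} (hz : z ∈ closedBall c δ) (hz' : z ∈ closedBall c' δ)
    (hs : ¬ dist c c' ≤ δ) : False :=
  hs (le_trans (dist_triangle_max c z c') (max_le (mem_closedBall'.mp hz) hz'))

lemma sub_ball {x y : X} {r δ : ℝ} (hδ : δ ≤ r) (hy : y ∈ closedBall x r) :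
    closedBall y δ ⊆ closedBall x r := by
  intro z hz
  rw [mem_closedBall] at *
  exact le_trans (dist_triangle_max z y x) (max_le (hz.trans hδ) hy)

lemma exists_partition [TopologicalSpace.SeparableSpace X]
    (C : Set X) (hnc : ¬ TotallyBounded C) {ε : ℝ} (hε : 0 < ε) :
    ∃ (δ : ℝ) (c : ℕ → X), 0 < δ ∧ δ ≤ ε ∧ (∀ n : ℕ, c n ∈ C) ∧
      (∀ m n : ℕ, m ≠ n → ¬ dist (c m) (c n) ≤ δ) ∧
      C ⊆ ⋃ n : ℕ, closedBall (c n) δ := by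
  rw [Metric.totallyBounded_iff] at hnc
  push_neg at hnc
  obtain ⟨ε₀, hε₀, hcov⟩ := hnc
  set δ : ℝ := min ε (ε₀ / 2) with hδdef
  have hδpos : 0 < δ := lt_min hε (by linarith)
  have hδε : δ ≤ ε := min_le_left _ _
  have hδε₀ : δ < ε₀ := (min_le_right _ _).trans_lt (by linarith)
  set 𝓑 : Set (Set X) := {b | ∃ y ∈ C, b = closedBall y δ} with h𝓑
  have hwit : ∀ b : 𝓑, ∃ y, y ∈ C ∧ (b : Set X) = closedBall y δ := fun ⟨b, hb⟩ => by
    obtain ⟨y, hy, hb'⟩ := hb; exact ⟨y, hy, hb'⟩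
  choose w hwC hwb using hwit
  obtain ⟨S, hSc, hSd⟩ : TopologicalSpace.IsSeparable C :=
    TopologicalSpace.IsSeparable.of_separableSpace C
  have hcount : 𝓑.Countable := by
    refine (hSc.image (fun s => closedBall s δ)).mono ?_
    rintro b ⟨y, hy, rfl⟩
    have hyc : y ∈ closure S := hSd hy
    rw [Metric.mem_closure_iff] at hyc
    obtain ⟨s, hsS, hs⟩ := hyc δ hδpos
    refine ⟨s, hsS, ?_⟩
    exact (IsUltrametricDist.closedBall_eq_of_mem (by
      rw [mem_closedBall, dist_comm]; exact hs.le)).symm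
  have hinf : 𝓑.Infinite := by
    intro hfin
    haveI := hfin.to_subtype
    refine hcov (Set.range w) (Set.finite_range w) ?_
    intro z hz
    have hz𝓑 : closedBall z δ ∈ 𝓑 := ⟨z, hz, rfl⟩
    have hzb : z ∈ closedBall (w ⟨_, hz𝓑⟩) δ := by
      rw [← hwb ⟨_, hz𝓑⟩]; exact mem_closedBall_self hδpos.le
    exact mem_biUnion (mem_range_self _) (closedBall_subset_ball hδε₀ hzb)
  -- enumerate
  haveI := hcount.to_subtype
  haveI : Infinite 𝓑 := hinf.to_subtype
  obtain ⟨e⟩ : Nonempty (ℕ ≃ 𝓑) := nonempty_equiv_of_countable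
  refine ⟨δ, fun n => w (e n), hδpos, hδε, fun n => hwC _, ?_, ?_⟩
  · intro m n hmn hd
    have : (e m : Set X) = e n := by
      rw [hwb (e m), hwb (e n)]
      exact IsUltrametricDist.closedBall_eq_of_mem (mem_closedBall'.mpr hd)
    exact hmn (e.injective (Subtype.ext this))
  · intro z hz
    have hz𝓑 : closedBall z δ ∈ 𝓑 := ⟨z, hz, rfl⟩
    refine mem_iUnion.mpr ⟨e.symm ⟨_, hz𝓑⟩, ?_⟩
    show z ∈ closedBall (w (e (e.symm ⟨_, hz𝓑⟩))) δ
    rw [← hwb (e (e.symm ⟨_, hz𝓑⟩)), e.apply_symm_apply]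
    exact mem_closedBall_self hδpos.le

section Main
variable {X : Type*} [MetricSpace X] [IsUltrametricDist X] [CompleteSpace X]
  [TopologicalSpace.SeparableSpace X] [Nonempty X]

theorem au_main (h : ∀ (x : X) (r : ℝ), 0 < r → ¬ IsCompact (closedBall x r)) :
    Nonempty (X ≃ₜ (ℕ → ℕ)) := by
  -- no closed ball is totally bounded
  have hballntb : ∀ (x : X) (r : ℝ), 0 < r → ¬ TotallyBounded (closedBall x r) := by
    intro x r hr htb
    exact h x r hr (isCompact_iff_totallyBounded_isComplete.mpr
      ⟨htb, Metric.isClosed_closedBall.isComplete⟩)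
  have huntb : ¬ TotallyBounded (univ : Set X) := by
    intro htb
    have x : X := Classical.arbitrary X
    obtain ⟨r, hr, hsub⟩ := htb.isBounded.subset_closedBall_lt 0 x
    have hu : closedBall x r = univ := eq_univ_of_univ_subset hsub
    refine h x r hr ?_
    rw [hu]
    exact isCompact_iff_totallyBounded_isComplete.mpr
      ⟨htb, completeSpace_iff_isComplete_univ.mp ‹_›⟩
  -- children for balls
  have hch : ∀ (x : X) (r : ℝ), 0 < r → ∃ (δ : ℝ) (c : ℕ → X), 0 < δ ∧ δ ≤ r / 2 ∧
      (∀ n, c n ∈ closedBall x r) ∧ (∀ m n, m ≠ n → ¬ dist (c m) (c n) ≤ δ) ∧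
      closedBall x r ⊆ ⋃ n, closedBall (c n) δ := by
    intro x r hr
    exact exists_partition _ (hballntb x r hr) (by linarith : (0:ℝ) < r / 2)
  choose! δf cf hδpos hδhalf hcmem hcsep hccov using hch
  -- root partition
  obtain ⟨δ0, c0, hδ0pos, -, -, hc0sep, hc0cov⟩ :=
    exists_partition (univ : Set X) huntb one_pos
  set T : List ℕ → X × ℝ := tree cf δf c0 δ0 with hTdef
  have hTsing : ∀ n : ℕ, T [n] = (c0 n, δ0) := fun n => rfl
  have hTcons : ∀ (n : ℕ) {s : List ℕ}, s ≠ [] →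
      T (n :: s) = (cf (T s).1 (T s).2 n, δf (T s).1 (T s).2) :=
    fun n s hs => tree_cons cf δf c0 δ0 n hs
  -- positivity of radii
  have hpos : ∀ s : List ℕ, s ≠ [] → 0 < (T s).2 := by
    intro s
    induction s with
    | nil => intro hs; exact absurd rfl hs
    | cons n s ih =>
      intro _
      cases s with
      | nil => rw [hTsing]; exact hδ0pos
      | cons m t =>
        rw [hTcons n (by simp)]
        exact hδpos _ _ (ih (by simp))
  -- nesting
  have hsub : ∀ (n : ℕ) (s : List ℕ), s ≠ [] →
      closedBall (T (n :: s)).1 (T (n :: s)).2 ⊆ closedBall (T s).1 (T s).2 := by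
    intro n s hs
    have hr := hpos s hs
    rw [hTcons n hs]
    show closedBall (cf (T s).1 (T s).2 n) (δf (T s).1 (T s).2) ⊆ closedBall (T s).1 (T s).2
    refine sub_ball ?_ (hcmem _ _ hr n)
    linarith [hδhalf (T s).1 (T s).2 hr]
  -- radius bound
  have hrad : ∀ s : List ℕ, s ≠ [] → (T s).2 ≤ δ0 * (1/2)^(s.length - 1) := by
    intro s
    induction s with
    | nil => intro hs; exact absurd rfl hs
    | cons n s ih =>
      intro _
      cases s with
      | nil => rw [hTsing]; simp
      | cons m t =>
        have hne : (m :: t) ≠ [] := by simp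
        have hr := hpos _ hne
        have h1 := hδhalf (T (m :: t)).1 (T (m :: t)).2 hr
        have h2 := ih hne
        rw [hTcons n hne]
        show δf (T (m :: t)).1 (T (m :: t)).2 ≤ δ0 * (1/2) ^ ((n :: m :: t).length - 1)
        simp only [List.length_cons, Nat.add_sub_cancel] at h2 ⊢
        calc δf (T (m :: t)).1 (T (m :: t)).2 ≤ (T (m :: t)).2 / 2 := h1
          _ ≤ (δ0 * (1/2)^(t.length)) / 2 := by linarith
          _ = δ0 * (1/2)^(t.length + 1) := by ring
  -- same length distinct nodes are disjoint
  have hdisj : ∀ (k : ℕ) (s t : List ℕ), s.length = k + 1 → t.length = k + 1 → s ≠ t →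
      ∀ z : X, z ∈ closedBall (T s).1 (T s).2 → z ∈ closedBall (T t).1 (T t).2 → False := by
    intro k
    induction k with
    | zero =>
      intro s t hs ht hst z hzs hzt
      obtain ⟨a, rfl⟩ : ∃ a, s = [a] := by
        cases s with
        | nil => simp at hs
        | cons a s' => cases s' with
          | nil => exact ⟨a, rfl⟩
          | cons b t' => simp at hs
      obtain ⟨b, rfl⟩ : ∃ b, t = [b] := by
        cases t with
        | nil => simp at ht
        | cons b s' => cases s' with
          | nil => exact ⟨b, rfl⟩
          | cons c t' => simp at ht
      have hab : a ≠ b := fun hc => hst (by rw [hc])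
      rw [hTsing] at hzs
      rw [hTsing] at hzt
      exact sep_contra hzs hzt (hc0sep a b hab)
    | succ k ih =>
      intro s t hs ht hst z hzs hzt
      obtain ⟨a, s', rfl⟩ : ∃ a s', s = a :: s' := by
        cases s with
        | nil => simp at hs
        | cons a s' => exact ⟨a, s', rfl⟩
      obtain ⟨b, t', rfl⟩ : ∃ b t', t = b :: t' := by
        cases t with
        | nil => simp at ht
        | cons b t' => exact ⟨b, t', rfl⟩
      simp only [List.length_cons, Nat.add_left_inj] at hs ht
      have hs'ne : s' ≠ [] := ne_nil_of_len hs
      have ht'ne : t' ≠ [] := ne_nil_of_len ht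
      by_cases hst' : s' = t'
      · subst hst'
        have hab : a ≠ b := fun hc => hst (by rw [hc])
        rw [hTcons a hs'ne] at hzs
        rw [hTcons b hs'ne] at hzt
        exact sep_contra hzs hzt (hcsep _ _ (hpos s' hs'ne) a b hab)
      · exact ih s' t' hs ht hst' z (hsub a s' hs'ne hzs) (hsub b t' ht'ne hzt)
  -- covering
  have hcov1 : ∀ z : X, ∃ n : ℕ, z ∈ closedBall (T [n]).1 (T [n]).2 := by
    intro z
    obtain ⟨n, hn⟩ := mem_iUnion.mp (hc0cov (mem_univ z))
    exact ⟨n, by rw [hTsing]; exact hn⟩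
  have hcovs : ∀ (s : List ℕ), s ≠ [] → ∀ z ∈ closedBall (T s).1 (T s).2,
      ∃ n : ℕ, z ∈ closedBall (T (n :: s)).1 (T (n :: s)).2 := by
    intro s hs z hz
    obtain ⟨n, hn⟩ := mem_iUnion.mp (hccov _ _ (hpos s hs) hz)
    exact ⟨n, by rw [hTcons n hs]; exact hn⟩
  -- decoder
  have hdec : ∀ z : X, ∃ u : ℕ → List ℕ, (∀ k, (u k).length = k + 1) ∧
      (∀ k, z ∈ closedBall (T (u k)).1 (T (u k)).2) ∧
      (∀ k, ∃ n, u (k+1) = n :: u k) := by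
    intro z
    let v : ∀ k : ℕ, {s : List ℕ // s.length = k + 1 ∧ z ∈ closedBall (T s).1 (T s).2} :=
      fun k => Nat.rec
        (motive := fun k => {s : List ℕ // s.length = k + 1 ∧ z ∈ closedBall (T s).1 (T s).2})
        ⟨[(hcov1 z).choose], by simp, (hcov1 z).choose_spec⟩
        (fun k p =>
          ⟨(hcovs p.1 (ne_nil_of_len p.2.1) z p.2.2).choose :: p.1,
            by simp [p.2.1],
            (hcovs p.1 (ne_nil_of_len p.2.1) z p.2.2).choose_spec⟩) k
    exact ⟨fun k => (v k).1, fun k => (v k).2.1, fun k => (v k).2.2, fun k => ⟨_, rfl⟩⟩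
  choose uu hulen humem hucons using hdec
  -- nodes along a branch are nonempty lists
  have hnne : ∀ (a : ℕ → ℕ) (k : ℕ), node a (k + 1) ≠ [] := by
    intro a k
    show (a k :: node a k) ≠ []
    simp
  -- nesting along branches
  have hnest : ∀ (a : ℕ → ℕ) (k j : ℕ), k ≤ j →
      closedBall (T (node a (j+1))).1 (T (node a (j+1))).2 ⊆
        closedBall (T (node a (k+1))).1 (T (node a (k+1))).2 := by
    intro a k j hkj
    induction j, hkj using Nat.le_induction with
    | base => exact subset_rfl
    | succ j hkj ih =>
      refine subset_trans ?_ ih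
      exact hsub (a (j+1)) (node a (j+1)) (hnne a j)
  have hcenter : ∀ (a : ℕ → ℕ) (k : ℕ),
      (T (node a (k+1))).1 ∈ closedBall (T (node a (k+1))).1 (T (node a (k+1))).2 :=
    fun a k => mem_closedBall_self (hpos _ (hnne a k)).le
  have hradk : ∀ (a : ℕ → ℕ) (k : ℕ), (T (node a (k+1))).2 ≤ δ0 * (1/2)^k := by
    intro a k
    have := hrad (node a (k+1)) (hnne a k)
    rwa [node_length, Nat.add_sub_cancel] at this
  have hdistb : ∀ (a : ℕ → ℕ) (k j : ℕ), k ≤ j →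
      dist (T (node a (j+1))).1 (T (node a (k+1))).1 ≤ δ0 * (1/2)^k := by
    intro a k j hkj
    have h1 : (T (node a (j+1))).1 ∈ closedBall (T (node a (k+1))).1 (T (node a (k+1))).2 :=
      hnest a k j hkj (hcenter a j)
    exact (mem_closedBall.mp h1).trans (hradk a k)
  have hcauchy : ∀ a : ℕ → ℕ, CauchySeq (fun k => (T (node a (k+1))).1) := by
    intro a
    refine cauchySeq_of_le_geometric (1/2) δ0 (by norm_num) ?_
    intro n
    rw [dist_comm]
    exact hdistb a n (n+1) (Nat.le_succ n)
  choose f hf using fun a => cauchySeq_tendsto_of_complete (hcauchy a)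
  have hfmem : ∀ (a : ℕ → ℕ) (k : ℕ),
      f a ∈ closedBall (T (node a (k+1))).1 (T (node a (k+1))).2 := by
    intro a k
    refine Metric.isClosed_closedBall.mem_of_tendsto (hf a) ?_
    filter_upwards [eventually_ge_atTop k] with j hj
    exact hnest a k j hj (hcenter a j)
  have hlim0 : Tendsto (fun k : ℕ => δ0 * (1/2:ℝ)^k) atTop (𝓝 0) := by
    have := (tendsto_pow_atTop_nhds_zero_of_lt_one (by norm_num : (0:ℝ) ≤ 1/2)
      (by norm_num)).const_mul δ0
    simpa using this
  have hunique : ∀ (a : ℕ → ℕ) (z : X),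
      (∀ k, z ∈ closedBall (T (node a (k+1))).1 (T (node a (k+1))).2) → z = f a := by
    intro a z hz
    have hd : ∀ k : ℕ, dist z (f a) ≤ δ0 * (1/2)^k := by
      intro k
      refine le_trans (dist_triangle_max z (T (node a (k+1))).1 (f a)) ?_
      refine le_trans (max_le (mem_closedBall.mp (hz k))
        (mem_closedBall'.mp (hfmem a k))) (hradk a k)
    have h0 : dist z (f a) ≤ 0 := ge_of_tendsto hlim0 (Eventually.of_forall hd)
    exact dist_le_zero.mp h0
  have hinj : Function.Injective f := by
    intro a b hab
    by_contra hne
    obtain ⟨k, hk⟩ : ∃ k, a k ≠ b k := by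
      by_contra hc; push_neg at hc; exact hne (funext hc)
    have hnodene : node a (k+1) ≠ node b (k+1) := by
      show (a k :: node a k) ≠ (b k :: node b k)
      intro hcontra
      exact hk (List.cons_eq_cons.mp hcontra).1
    exact hdisj k _ _ (node_length a (k+1)) (node_length b (k+1)) hnodene (f a)
      (hfmem a k) (hab ▸ hfmem b k)
  -- the decoding map
  set g : X → ℕ → ℕ := fun z k => (uu z k).head! with hgdef
  have hnodeg : ∀ (z : X) (k : ℕ), node (g z) (k+1) = uu z k := by
    intro z k
    induction k with
    | zero =>
      have hl := hulen z 0
      show (g z 0 :: node (g z) 0) = uu z 0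
      cases hu : uu z 0 with
      | nil => rw [hu] at hl; simp at hl
      | cons n t =>
        cases t with
        | nil => simp [hgdef, hu, node]
        | cons m t' => rw [hu] at hl; simp at hl
    | succ k ih =>
      obtain ⟨n, hn⟩ := hucons z k
      show (g z (k+1) :: node (g z) (k+1)) = uu z (k+1)
      rw [ih, hn]
      simp [hgdef, hn]
  have hfg : ∀ z : X, f (g z) = z := by
    intro z
    refine (hunique (g z) z ?_).symm
    intro k
    rw [hnodeg z k]
    exact humem z k
  have hgf : ∀ a : ℕ → ℕ, g (f a) = a := fun a => hinj (hfg (f a))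
  -- continuity of g
  have hgc : Continuous g := by
    refine continuous_pi ?_
    intro k
    rw [continuous_iff_continuousAt]
    intro z
    have hne := ne_nil_of_len (hulen z k)
    have hopen : IsOpen (closedBall (T (uu z k)).1 (T (uu z k)).2) :=
      IsUltrametricDist.isOpen_closedBall _ (hpos _ hne).ne'
    have hev : ∀ᶠ w in 𝓝 z, g w k = g z k := by
      filter_upwards [hopen.mem_nhds (humem z k)] with w hw
      have : uu w k = uu z k := by
        by_contra hneq
        exact hdisj k (uu w k) (uu z k) (hulen w k) (hulen z k) hneq w (humem w k) hw
      rw [hgdef]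
      simp only
      rw [this]
    exact tendsto_nhds_of_eventually_eq hev
  -- continuity of f
  have hfc : Continuous f := by
    rw [continuous_iff_continuousAt]
    intro a
    rw [ContinuousAt, Metric.tendsto_nhds]
    intro ε hε
    obtain ⟨k, hk⟩ : ∃ k : ℕ, δ0 * (1/2:ℝ)^k < ε :=
      (hlim0.eventually (gt_mem_nhds hε)).exists
    have hev : ∀ᶠ b in 𝓝 a, ∀ i ∈ Set.Iio (k+1), b i = a i := by
      rw [eventually_all_finite (Set.finite_Iio (k+1))]
      intro i _
      have : IsOpen ((fun b : ℕ → ℕ => b i) ⁻¹' {a i}) :=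
        (continuous_apply i).isOpen_preimage _ (isOpen_discrete _)
      exact this.mem_nhds rfl
    filter_upwards [hev] with b hb
    have hnode : node b (k+1) = node a (k+1) := node_congr (fun i hi => hb i hi)
    have h1 : f b ∈ closedBall (T (node a (k+1))).1 (T (node a (k+1))).2 := by
      rw [← hnode]; exact hfmem b k
    have h2 := hfmem a k
    calc dist (f b) (f a)
        ≤ max (dist (f b) (T (node a (k+1))).1) (dist (T (node a (k+1))).1 (f a)) :=
          dist_triangle_max _ _ _
      _ ≤ (T (node a (k+1))).2 := max_le (mem_closedBall.mp h1) (mem_closedBall'.mp h2)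
      _ ≤ δ0 * (1/2)^k := hradk a k
      _ < ε := hk
  exact ⟨⟨⟨g, f, hfg, hgf⟩, hgc, hfc⟩⟩

end Main

section PiMetric

variable {E : Type*} [MetricSpace E] [IsUltrametricDist E]

/-- The sup-min distance on a countable product of metric spaces. -/
noncomputable def pd (x y : ℕ → E) : ℝ :=
  ⨆ i : ℕ, min ((1/2 : ℝ)^i) (dist (x i) (y i))

lemma pd_bdd (x y : ℕ → E) :
    BddAbove (Set.range fun i : ℕ => min ((1/2 : ℝ)^i) (dist (x i) (y i))) := by
  refine ⟨1, ?_⟩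
  rintro r ⟨i, rfl⟩
  exact le_trans (min_le_left _ _) (pow_le_one₀ (by norm_num) (by norm_num))

lemma le_pd (x y : ℕ → E) (i : ℕ) :
    min ((1/2 : ℝ)^i) (dist (x i) (y i)) ≤ pd x y :=
  le_ciSup (pd_bdd x y) i

lemma pd_nonneg (x y : ℕ → E) : 0 ≤ pd x y :=
  le_trans (le_min (by norm_num) dist_nonneg) (le_pd x y 0)

lemma pd_comm (x y : ℕ → E) : pd x y = pd y x := by
  simp only [pd, dist_comm]

lemma pd_max (x y z : ℕ → E) : pd x z ≤ max (pd x y) (pd y z) := by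
  refine ciSup_le fun i => ?_
  calc min ((1/2 : ℝ)^i) (dist (x i) (z i))
      ≤ min ((1/2 : ℝ)^i) (max (dist (x i) (y i)) (dist (y i) (z i))) :=
        min_le_min le_rfl (dist_triangle_max _ _ _)
    _ = max (min ((1/2 : ℝ)^i) (dist (x i) (y i))) (min ((1/2 : ℝ)^i) (dist (y i) (z i))) :=
        min_max_distrib_left _ _ _
    _ ≤ max (pd x y) (pd y z) := max_le_max (le_pd x y i) (le_pd y z i)

lemma pd_lt_pow {x y : ℕ → E} {i : ℕ} (h : pd x y < (1/2 : ℝ)^i) :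
    dist (x i) (y i) ≤ pd x y := by
  have h1 := le_pd x y i
  simpa only [not_le.2 (lt_of_le_of_lt (le_pd x y i) h |> fun _ => h), false_or] using
    min_le_iff.1 h1

/-- The ultrametric space structure on a countable product,
with uniformity definitionally the product uniformity. -/
noncomputable def piUltraMetric : MetricSpace (ℕ → E) where
  dist := pd
  dist_self x := by
    have : ∀ i : ℕ, min ((1/2 : ℝ)^i) (dist (x i) (x i)) = 0 := by
      intro i
      simp [min_eq_right, pow_nonneg]
    simp only [pd, this, ciSup_const]
  dist_comm := pd_comm
  dist_triangle x y z :=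
    le_trans (pd_max x y z)
      (max_le (le_add_of_nonneg_right (pd_nonneg _ _)) (le_add_of_nonneg_left (pd_nonneg _ _)))
  eq_of_dist_eq_zero := by
    intro x y h
    funext i
    have h1 := le_pd x y i
    rw [show pd x y = 0 from h] at h1
    rcases min_le_iff.1 h1 with h2 | h2
    · exact absurd h2 (not_le.2 (by positivity))
    · exact eq_of_dist_eq_zero (le_antisymm h2 dist_nonneg)
  toUniformSpace := Pi.uniformSpace _
  uniformity_dist := by
    simp only [Pi.uniformity, comap_iInf, preimage_setOf_eq, comap_principal,
      PseudoMetricSpace.uniformity_dist]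
    apply le_antisymm
    · simp only [le_iInf_iff, le_principal_iff]
      intro ε εpos
      obtain ⟨k, hk⟩ : ∃ k : ℕ, (1/2 : ℝ)^k < ε := exists_pow_lt_of_lt_one εpos (by norm_num)
      apply @mem_iInf_of_iInter _ _ _ _ _ (Finset.range k).finite_toSet
        (fun i => { p : (ℕ → E) × (ℕ → E) | dist (p.1 (i : ℕ)) (p.2 (i : ℕ)) < (1/2 : ℝ)^k })
      · rintro ⟨i, hi⟩
        refine mem_iInf_of_mem ((1/2 : ℝ)^k) (mem_iInf_of_mem (by positivity) ?_)
        simp only [mem_principal]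
        exact Subset.rfl
      · rintro ⟨x, y⟩ hxy
        simp only [mem_iInter, mem_setOf_eq, SetCoe.forall, Finset.mem_coe,
          Finset.mem_range] at hxy
        have hle : pd x y ≤ (1/2 : ℝ)^k := by
          refine ciSup_le fun i => ?_
          rcases lt_or_ge i k with hik | hik
          · exact le_trans (min_le_right _ _) (hxy i hik).le
          · exact le_trans (min_le_left _ _)
              (pow_le_pow_of_le_one (by norm_num) (by norm_num) hik)
        exact lt_of_le_of_lt hle hk
    · simp only [le_iInf_iff, le_principal_iff]
      intro i ε εpos
      refine mem_iInf_of_mem (min ((1/2 : ℝ)^i) ε) (mem_iInf_of_mem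
        (lt_min (by positivity) εpos) ?_)
      simp only [mem_principal, setOf_subset_setOf, Prod.forall]
      intro x y hxy
      have h1 : pd x y < (1/2 : ℝ)^i := lt_of_lt_of_le hxy (min_le_left _ _)
      have h2 : dist (x i) (y i) ≤ pd x y := by
        have h1' := le_pd x y i
        rcases min_le_iff.1 h1' with h3 | h3
        · exact absurd h3 (not_le.2 h1)
        · exact h3
      exact lt_of_le_of_lt h2 (lt_of_lt_of_le hxy (min_le_right _ _))


end PiMetric


lemma not_compact_of_sep {Y : Type*} [MetricSpace Y] {s : Set Y} {y : ℕ → Y} {ε : ℝ}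
    (hε : 0 < ε) (hmem : ∀ n, y n ∈ s) (hsep : ∀ m n : ℕ, m ≠ n → ε ≤ dist (y m) (y n)) :
    ¬ IsCompact s := by
  intro hc
  obtain ⟨t, htf, hcov⟩ := (Metric.totallyBounded_iff.mp hc.totallyBounded) (ε/2) (by linarith)
  choose ctr hctr hmemb using fun n => mem_iUnion₂.mp (hcov (hmem n))
  haveI := htf.to_subtype
  obtain ⟨m, n, hmn, heq⟩ :=
    Finite.exists_ne_map_eq_of_infinite (fun n => (⟨ctr n, hctr n⟩ : t))
  have h1 : dist (y m) (y n) < ε := by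
    have hm := hmemb m
    have hn := hmemb n
    have hce : ctr m = ctr n := congrArg Subtype.val heq
    rw [hce] at hm
    calc dist (y m) (y n) ≤ dist (y m) (ctr n) + dist (ctr n) (y n) := dist_triangle _ _ _
      _ < ε/2 + ε/2 := add_lt_add (mem_ball.mp hm) (by rw [dist_comm]; exact mem_ball.mp hn)
      _ = ε := by linarith
  exact absurd (hsep m n hmn) (not_le.2 h1)

section C0
variable {K : Type*} [NontriviallyNormedField K]

lemma c0_dist_coe_le (f g : C₀(ℕ, K)) (x : ℕ) : dist (f x) (g x) ≤ dist f g := by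
  exact BoundedContinuousFunction.dist_coe_le_dist (f := f.toBCF) (g := g.toBCF) x

lemma c0_dist_le {f g : C₀(ℕ, K)} {C : ℝ} (hC : 0 ≤ C)
    (h : ∀ x : ℕ, dist (f x) (g x) ≤ C) : dist f g ≤ C := by
  exact (BoundedContinuousFunction.dist_le (f := f.toBCF) (g := g.toBCF) hC).mpr h

lemma c0_ultra [IsUltrametricDist K] : IsUltrametricDist C₀(ℕ, K) := by
  constructor
  intro f g h
  refine c0_dist_le (le_max_iff.2 (Or.inl dist_nonneg)) fun x => ?_
  exact le_trans (dist_triangle_max (f x) (g x) (h x))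
    (max_le_max (c0_dist_coe_le f g x) (c0_dist_coe_le g h x))

/-- Truncation of a sequence to a finitely supported `C₀` function. -/
noncomputable def trunc (v : ℕ → K) (N : ℕ) : C₀(ℕ, K) where
  toFun := fun n => if n < N then v n else 0
  continuous_toFun := continuous_of_discreteTopology
  zero_at_infty' := by
    rw [cocompact_eq_cofinite, Nat.cofinite_eq_atTop]
    refine Tendsto.congr' ?_ (tendsto_const_nhds (x := (0 : K)))
    filter_upwards [eventually_ge_atTop N] with n hn
    simp [Nat.not_lt.2 hn]

@[simp] lemma trunc_apply (v : ℕ → K) (N n : ℕ) :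
    trunc v N n = if n < N then v n else 0 := rfl




lemma c0_separable [CompleteSpace K] [LocallyCompactSpace K] :
    TopologicalSpace.SeparableSpace C₀(ℕ, K) := by
  haveI : ProperSpace K := .of_nontriviallyNormedField_of_weaklyLocallyCompactSpace K
  haveI : SecondCountableTopology K := secondCountable_of_proper
  obtain ⟨D, hDc, hDd⟩ := TopologicalSpace.exists_countable_dense K
  set Dz : Set K := D ∪ {0} with hDzdef
  have hDzc : Dz.Countable := hDc.union (countable_singleton 0)
  have hDzd : Dense Dz := hDd.mono subset_union_left
  haveI := hDzc.to_subtype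
  set ψ : (Σ N : ℕ, (Fin N → Dz)) → C₀(ℕ, K) :=
    fun p => trunc (fun n => if h : n < p.1 then (p.2 ⟨n, h⟩ : K) else 0) p.1 with hψ
  refine ⟨⟨Set.range ψ, countable_range ψ, ?_⟩⟩
  show DenseRange ψ
  rw [Metric.denseRange_iff]
  intro f ε hε
  have hz : Tendsto (⇑f) (cocompact ℕ) (𝓝 0) := zero_at_infty f
  rw [cocompact_eq_cofinite, Nat.cofinite_eq_atTop, Metric.tendsto_nhds] at hz
  obtain ⟨N, hN⟩ := eventually_atTop.mp (hz (ε/2) (by linarith))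
  choose d hd1 hd2 using fun n => hDzd.exists_dist_lt (f n) (show (0:ℝ) < ε/2 by linarith)
  refine ⟨⟨N, fun i => ⟨d i, hd1 i⟩⟩, ?_⟩
  have hle : dist f (ψ ⟨N, fun i => ⟨d i, hd1 i⟩⟩) ≤ ε/2 := by
    refine c0_dist_le (by linarith) fun n => ?_
    by_cases hn : n < N
    · have hv : ψ ⟨N, fun i => ⟨d i, hd1 i⟩⟩ n = d n := by simp [hψ, trunc_apply, hn]
      rw [hv]
      exact (hd2 n).le
    · have hv : ψ ⟨N, fun i => ⟨d i, hd1 i⟩⟩ n = 0 := by simp [hψ, trunc_apply, hn]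
      rw [hv]
      exact (hN n (Nat.le_of_not_lt hn)).le
  exact lt_of_le_of_lt hle (by linarith)

lemma c0_balls [IsUltrametricDist K] :
    ∀ (f : C₀(ℕ, K)) (r : ℝ), 0 < r → ¬ IsCompact (closedBall f r) := by
  intro f r hr
  obtain ⟨c, hc0, hcr⟩ := NormedField.exists_norm_lt K hr
  set sing : ℕ → C₀(ℕ, K) := fun n => trunc (fun j => if j = n then c else 0) (n+1) with hsing
  have hsing_apply : ∀ n j : ℕ, sing n j = if j = n then c else 0 := by
    intro n j
    by_cases hj : j = n
    · subst hj; simp [hsing, trunc_apply]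
    · simp [hsing, trunc_apply, hj]
  have hadd : ∀ (g : C₀(ℕ, K)) (n j : ℕ), (f + g) j = f j + g j := fun g n j => rfl
  refine not_compact_of_sep (ε := ‖c‖) hc0 (y := fun n => f + sing n) ?_ ?_
  · intro n
    rw [mem_closedBall]
    refine c0_dist_le hr.le fun j => ?_
    rw [hadd _ n j, dist_eq_norm, add_sub_cancel_left, hsing_apply]
    by_cases hj : j = n
    · rw [if_pos hj]; exact hcr.le
    · rw [if_neg hj, norm_zero]; exact hr.le
  · intro m n hmn
    have h1 := c0_dist_coe_le (f + sing m) (f + sing n) n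
    have h2 : (f + sing m) n = f n := by
      rw [hadd _ m n, hsing_apply, if_neg (fun hc' => hmn hc'.symm), add_zero]
    have h3 : (f + sing n) n = f n + c := by
      rw [hadd _ n n, hsing_apply, if_pos rfl]
    rw [h2, h3] at h1
    have h4 : dist (f n) (f n + c) = ‖c‖ := by
      rw [dist_eq_norm]
      simp
    rw [h4] at h1
    exact h1

end C0
end AUX

/-- Let `K` be a field with a complete non-Archimedean multiplicative
norm whose value group is nontrivial, and assume `K` is locally compact.  Then the Banach
space `c₀(ℕ, K)` with its norm topology is homeomorphic to the countable product `K^ℕ`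
with the Tychonoff product topology. -/
theorem c0_homeomorph_pi (K : Type*) [NontriviallyNormedField K] [IsUltrametricDist K]
    [CompleteSpace K] [LocallyCompactSpace K] :
    Nonempty (C₀(ℕ, K) ≃ₜ (ℕ → K)) := by
  haveI := AUX.c0_ultra (K := K)
  haveI := AUX.c0_separable (K := K)
  obtain ⟨h1⟩ := AUX.au_main (X := C₀(ℕ, K)) (AUX.c0_balls (K := K))
  letI mK : MetricSpace (ℕ → K) := AUX.piUltraMetric
  haveI : IsUltrametricDist (ℕ → K) := ⟨fun x y z => AUX.pd_max x y z⟩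
  haveI : @CompleteSpace (ℕ → K) mK.toUniformSpace := by exact Pi.complete _
  haveI : @TopologicalSpace.SeparableSpace (ℕ → K) mK.toUniformSpace.toTopologicalSpace := by
    haveI : ProperSpace K := .of_nontriviallyNormedField_of_weaklyLocallyCompactSpace K
    haveI : SecondCountableTopology K := secondCountable_of_proper
    exact inferInstanceAs (@TopologicalSpace.SeparableSpace (ℕ → K) Pi.topologicalSpace)
  have hb : ∀ (x : ℕ → K) (r : ℝ), 0 < r → ¬ IsCompact (closedBall x r) := by
    intro x r hr
    obtain ⟨N, hN⟩ : ∃ N : ℕ, (1/2 : ℝ)^N < r := exists_pow_lt_of_lt_one hr (by norm_num)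
    obtain ⟨c, hc⟩ := NormedField.exists_one_lt_norm K
    set y : ℕ → (ℕ → K) := fun n => Function.update x N (c^(n+1)) with hy
    have happ : ∀ n j, y n j = if j = N then c^(n+1) else x j := by
      intro n j
      by_cases hj : j = N
      · subst hj; simp [hy]
      · simp [hy, hj]
    refine AUX.not_compact_of_sep (y := y) (ε := min ((1/2:ℝ)^N) (‖c‖ - 1))
      (lt_min (by positivity) (by linarith)) ?_ ?_
    · intro n
      rw [mem_closedBall]
      show AUX.pd (y n) x ≤ r
      refine le_trans (ciSup_le fun i => ?_) hN.le
      by_cases hi : i = N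
      · subst hi; exact min_le_left _ _
      · have hyi : y n i = x i := by rw [happ, if_neg hi]
        rw [hyi]
        exact le_trans (min_le_right _ _) (by rw [dist_self]; positivity)
    · intro m n hmn
      have h1 : min ((1/2:ℝ)^N) (dist (y m N) (y n N)) ≤ AUX.pd (y m) (y n) :=
        AUX.le_pd _ _ N
      have h2 : y m N = c^(m+1) := by rw [happ, if_pos rfl]
      have h3 : y n N = c^(n+1) := by rw [happ, if_pos rfl]
      have haux : ∀ a b : ℕ, a < b → ‖c‖ - 1 ≤ ‖c^(a+1) - c^(b+1)‖ := by
        intro a b hab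
        have e0 := norm_sub_norm_le (c^(b+1)) (c^(a+1))
        rw [norm_sub_rev (c^(b+1)) (c^(a+1))] at e0
        have e1 : (1:ℝ) ≤ ‖c‖^(a+1) := one_le_pow₀ hc.le
        have e2 : ‖c‖^(a+1) * ‖c‖ ≤ ‖c‖^(b+1) := by
          rw [← pow_succ]
          exact pow_le_pow_right₀ hc.le (by omega)
        rw [norm_pow, norm_pow] at e0
        nlinarith
      have h4 : ‖c‖ - 1 ≤ dist (y m N) (y n N) := by
        rw [h2, h3, dist_eq_norm]
        rcases Nat.lt_or_ge m n with hlt | hge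
        · exact haux m n hlt
        · have hlt : n < m := lt_of_le_of_ne hge (Ne.symm hmn)
          rw [norm_sub_rev]
          exact haux n m hlt
      exact le_trans (min_le_min le_rfl h4) h1
  obtain ⟨h2⟩ := AUX.au_main (X := ℕ → K) hb
  exact ⟨h1.trans h2.symm⟩
end

section
/- The topological spaces K and B \ {1} are homeomorphic, where B = {x ∈ K : |x| ≤ 1} is the closed unit ball of K. -/
namespace FHB

open IsUltrametricDist

variable {K : Type*} [NontriviallyNormedField K] [IsUltrametricDist K]

/-! ### Ultrametric helper lemmas -/

lemma norm_add_eq_right {a b : K} (h : ‖a‖ < ‖b‖) : ‖a + b‖ = ‖b‖ := by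
  rw [norm_add_eq_max_of_norm_ne_norm h.ne, max_eq_right h.le]

lemma norm_eq_of_close {a b : K} (h : ‖a - b‖ < ‖b‖) : ‖a‖ = ‖b‖ := by
  have he : a = (a - b) + b := by ring
  rw [he, norm_add_eq_right h]

lemma ball_transfer {a b c : K} {r : ℝ} (hab : ‖a - b‖ ≤ r) (h : ‖a - c‖ ≤ r) :
    ‖b - c‖ ≤ r := by
  have he : b - c = (b - a) + (a - c) := by ring
  rw [he]
  refine le_trans (norm_add_le_max _ _) (max_le ?_ h)
  rwa [norm_sub_rev] at hab

lemma norm_sub_one_le {z : K} (h : ‖z‖ ≤ 1) : ‖z - 1‖ ≤ 1 := by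
  rw [sub_eq_add_neg]
  refine le_trans (norm_add_le_max _ _) (max_le h ?_)
  simp

/-! ### The maps -/

variable (π : K)

/-- membership in one of the shifted balls `Q k`, `k ≥ 2` -/
def qmem (y : K) : Prop := ∃ k : ℕ, 2 ≤ k ∧ ‖y - (π ^ k)⁻¹‖ ≤ (‖π‖ ^ (k + 1))⁻¹

/-- the norm is a positive power of `‖π‖` -/
def smem (x : K) : Prop := ∃ k : ℕ, 1 ≤ k ∧ ‖x‖ = ‖π‖ ^ k

/-- the norm is a nonpositive power of `‖π‖` -/
def tmem (w : K) : Prop := ∃ k : ℕ, ‖w‖ = (‖π‖ ^ k)⁻¹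

open Classical in
noncomputable def phi (x : K) : K :=
  if ‖x‖ ≤ 1 then 1 + π⁻¹ + (π ^ 2)⁻¹ * x
  else if qmem π x⁻¹ ∨ ¬ smem π x then 1 + x⁻¹
  else 1 + π * x⁻¹

open Classical in
noncomputable def psi (z : K) : K :=
  if ‖z - 1 - π⁻¹‖ ≤ (‖π‖ ^ 2)⁻¹ then π ^ 2 * (z - 1 - π⁻¹)
  else if qmem π (z - 1) ∨ ¬ tmem π (z - 1) then (z - 1)⁻¹
  else π * (z - 1)⁻¹

variable {π}

section Basic

variable (hπ : 1 < ‖π‖)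
include hπ

lemma hp0 : (0:ℝ) < ‖π‖ := lt_trans one_pos hπ

lemma hπ0 : π ≠ 0 := by
  intro h; rw [h, norm_zero] at hπ; linarith

lemma npow (k : ℕ) : ‖((π : K) ^ k)⁻¹‖ = (‖π‖ ^ k)⁻¹ := by
  rw [norm_inv, norm_pow]

lemma ppow_pos (k : ℕ) : (0:ℝ) < ‖π‖ ^ k := pow_pos (hp0 hπ) k

lemma powinv_lt {j k : ℕ} (h : j < k) : ((‖π‖ ^ k)⁻¹ : ℝ) < (‖π‖ ^ j)⁻¹ :=
  inv_strictAnti₀ (ppow_pos hπ j) (pow_lt_pow_right₀ hπ h)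

lemma powinv_le {j k : ℕ} (h : j ≤ k) : ((‖π‖ ^ k)⁻¹ : ℝ) ≤ (‖π‖ ^ j)⁻¹ := by
  rcases h.lt_or_eq with h | h
  · exact (powinv_lt hπ h).le
  · rw [h]

lemma powinv_inj {j k : ℕ} (h : ((‖π‖ ^ j)⁻¹ : ℝ) = (‖π‖ ^ k)⁻¹) : j = k :=
  pow_right_injective₀ (hp0 hπ) hπ.ne' (inv_inj.mp h)

lemma powinv_le_one (k : ℕ) : ((‖π‖ ^ k)⁻¹ : ℝ) ≤ 1 :=
  inv_le_one_of_one_le₀ (one_le_pow₀ hπ.le)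

lemma powinv_pos (k : ℕ) : (0:ℝ) < (‖π‖ ^ k)⁻¹ := inv_pos.mpr (ppow_pos hπ k)

lemma powinv_lt_one {k : ℕ} (hk : 1 ≤ k) : ((‖π‖ ^ k)⁻¹ : ℝ) < 1 := by
  have := powinv_lt hπ (show 0 < k from hk)
  simpa using this

/-- a point of a `Q k` ball has norm exactly `‖π‖⁻ᵏ` -/
lemma qmem_norm {y : K} (h : qmem π y) :
    ∃ k : ℕ, 2 ≤ k ∧ ‖y‖ = (‖π‖ ^ k)⁻¹ ∧ ‖y - (π ^ k)⁻¹‖ ≤ (‖π‖ ^ (k + 1))⁻¹ := by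
  obtain ⟨k, hk, hle⟩ := h
  refine ⟨k, hk, ?_, hle⟩
  have h1 : ‖y - (π ^ k)⁻¹‖ < ‖((π : K) ^ k)⁻¹‖ := by
    rw [npow hπ]
    exact lt_of_le_of_lt hle (powinv_lt hπ k.lt_succ_self)
  rw [norm_eq_of_close h1, npow hπ]

lemma pi_shift (m : ℕ) : π * ((π : K) ^ (m + 1))⁻¹ = ((π : K) ^ m)⁻¹ := by
  have h := hπ0 hπ
  field_simp
  ring

lemma pi_mul_le {a : K} {m : ℕ} :
    ‖π * a‖ ≤ (‖π‖ ^ m)⁻¹ ↔ ‖a‖ ≤ (‖π‖ ^ (m + 1))⁻¹ := by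
  rw [norm_mul, pow_succ, mul_inv, mul_comm ‖π‖ ‖a‖, ← le_div_iff₀ (hp0 hπ), div_eq_mul_inv]

lemma norm_pi_inv : ‖(π : K)⁻¹‖ = (‖π‖ ^ 1)⁻¹ := by
  rw [norm_inv, pow_one]

/-! ### `phi` lands in the right set -/

lemma phi_sub_one (x : K) : 0 < ‖phi π x - 1‖ ∧ ‖phi π x - 1‖ ≤ 1 := by
  have hne := hπ0 hπ
  rw [phi]
  split_ifs with h1 h2
  · have he : 1 + π⁻¹ + (π ^ 2)⁻¹ * x - 1 = (π ^ 2)⁻¹ * x + π⁻¹ := by ring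
    rw [he, norm_add_eq_right ?_]
    · constructor
      · rw [norm_inv]; positivity
      · rw [norm_pi_inv hπ]; exact powinv_le_one hπ 1
    · rw [norm_pi_inv hπ, norm_mul, npow hπ]
      calc (‖π‖ ^ 2)⁻¹ * ‖x‖ ≤ (‖π‖ ^ 2)⁻¹ * 1 := by
            exact mul_le_mul_of_nonneg_left h1 (powinv_pos hπ 2).le
        _ = (‖π‖ ^ 2)⁻¹ := mul_one _
        _ < (‖π‖ ^ 1)⁻¹ := powinv_lt hπ one_lt_two
  · have hx0 : x ≠ 0 := by
      intro h; rw [h, norm_zero] at h1; exact h1 zero_le_one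
    have he : 1 + x⁻¹ - 1 = x⁻¹ := by ring
    rw [he, norm_inv]
    push_neg at h1
    constructor
    · positivity
    · exact (inv_le_one_of_one_le₀ h1.le)
  · push_neg at h2
    obtain ⟨hq, k, hk1, hkx⟩ := h2
    have hx0 : x ≠ 0 := by
      intro h; rw [h, norm_zero] at h1; exact h1 zero_le_one
    have he : 1 + π * x⁻¹ - 1 = π * x⁻¹ := by ring
    rw [he, norm_mul, norm_inv, hkx]
    obtain ⟨j, rfl⟩ : ∃ j, k = j + 1 := ⟨k - 1, (Nat.succ_pred_eq_of_pos hk1).symm⟩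
    have hval : ‖π‖ * (‖π‖ ^ (j + 1))⁻¹ = (‖π‖ ^ j)⁻¹ := by
      have h0 : (‖π‖ : ℝ) ≠ 0 := (hp0 hπ).ne'
      field_simp
      ring
    rw [hval]
    exact ⟨powinv_pos hπ j, powinv_le_one hπ j⟩

lemma phi_mem (x : K) : phi π x ∈ Metric.closedBall (0 : K) 1 \ {1} := by
  obtain ⟨h0, h1⟩ := phi_sub_one hπ x
  constructor
  · rw [Metric.mem_closedBall, dist_zero_right]
    have he : phi π x = (phi π x - 1) + 1 := by ring
    rw [he]
    refine le_trans (norm_add_le_max _ _) (max_le h1 (by simp))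
  · intro h
    rw [Set.mem_singleton_iff] at h
    rw [h] at h0
    simp at h0

/-! ### Left inverse -/

lemma psi_phi (x : K) : psi π (phi π x) = x := by
  have hne := hπ0 hπ
  have hp2 : ((π : K) ^ 2) ≠ 0 := pow_ne_zero _ hne
  by_cases hx : ‖x‖ ≤ 1
  · rw [phi, if_pos hx, psi]
    have ht : 1 + π⁻¹ + (π ^ 2)⁻¹ * x - 1 - π⁻¹ = (π ^ 2)⁻¹ * x := by ring
    rw [ht, if_pos ?_]
    · rw [← mul_assoc, mul_inv_cancel₀ hp2, one_mul]
    · rw [norm_mul, npow hπ]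
      calc (‖π‖ ^ 2)⁻¹ * ‖x‖ ≤ (‖π‖ ^ 2)⁻¹ * 1 :=
            mul_le_mul_of_nonneg_left hx (powinv_pos hπ 2).le
        _ = (‖π‖ ^ 2)⁻¹ := mul_one _
  · push_neg at hx
    have hx0 : x ≠ 0 := by
      intro h; rw [h, norm_zero] at hx; linarith
    by_cases hq : qmem π x⁻¹ ∨ ¬ smem π x
    · rw [phi, if_neg (not_le.mpr hx), if_pos hq, psi]
      have ht : 1 + x⁻¹ - 1 = x⁻¹ := by ring
      rw [ht]
      have test1 : ¬ ‖x⁻¹ - π⁻¹‖ ≤ (‖π‖ ^ 2)⁻¹ := by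
        intro hle
        have hxn : ‖x⁻¹‖ = (‖π‖ ^ 1)⁻¹ := by
          rw [← norm_pi_inv hπ]
          refine norm_eq_of_close (lt_of_le_of_lt hle ?_)
          rw [norm_pi_inv hπ]
          exact powinv_lt hπ one_lt_two
        rcases hq with hq | hq
        · obtain ⟨k, hk2, hkn, _⟩ := qmem_norm hπ hq
          have : 1 = k := powinv_inj hπ (hxn ▸ hkn)
          omega
        · refine hq ⟨1, le_refl _, ?_⟩
          rw [norm_inv] at hxn
          rw [← inv_inv ‖x‖, hxn, inv_inv]
      have test2 : qmem π x⁻¹ ∨ ¬ tmem π x⁻¹ := by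
        rcases hq with hq | hq
        · exact Or.inl hq
        · refine Or.inr fun ⟨k, hk⟩ => ?_
          rcases Nat.eq_zero_or_pos k with rfl | hk1
          · rw [pow_zero, inv_one, norm_inv] at hk
            rw [← inv_inv ‖x‖, hk] at hx
            simp at hx
          · refine hq ⟨k, hk1, ?_⟩
            rw [norm_inv] at hk
            rw [← inv_inv ‖x‖, hk, inv_inv]
      rw [if_neg test1, if_pos test2, inv_inv]
    · push_neg at hq
      obtain ⟨hq1, hq2⟩ := hq
      rw [phi, if_neg (not_le.mpr hx), if_neg (by tauto), psi]
      have ht : 1 + π * x⁻¹ - 1 = π * x⁻¹ := by ring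
      rw [ht]
      obtain ⟨k, hk1, hkx⟩ := hq2
      obtain ⟨j, rfl⟩ : ∃ j, k = j + 1 := ⟨k - 1, (Nat.succ_pred_eq_of_pos hk1).symm⟩
      have hxinv : ‖x⁻¹‖ = (‖π‖ ^ (j + 1))⁻¹ := by rw [norm_inv, hkx]
      have hw : ‖π * x⁻¹‖ = (‖π‖ ^ j)⁻¹ := by
        rw [norm_mul, hxinv]
        have h0 : (‖π‖ : ℝ) ≠ 0 := (hp0 hπ).ne'
        field_simp
        ring
      have test1 : ¬ ‖π * x⁻¹ - π⁻¹‖ ≤ (‖π‖ ^ 2)⁻¹ := by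
        intro hle
        refine hq1 ⟨2, le_refl _, ?_⟩
        have he : π * x⁻¹ - π⁻¹ = π * (x⁻¹ - (π ^ 2)⁻¹) := by
          have h2 := pi_shift hπ 1
          norm_num at h2
          rw [mul_sub, h2]
        rw [he, pi_mul_le hπ] at hle
        exact hle
      have test2 : ¬ (qmem π (π * x⁻¹) ∨ ¬ tmem π (π * x⁻¹)) := by
        rw [not_or, not_not]
        constructor
        · intro h
          obtain ⟨m, hm2, hmn, hmb⟩ := qmem_norm hπ h
          have hjm : j = m := powinv_inj hπ (hw ▸ hmn)
          subst hjm
          refine hq1 ⟨j + 1, by omega, ?_⟩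
          have he : π * x⁻¹ - (π ^ j)⁻¹ = π * (x⁻¹ - (π ^ (j + 1))⁻¹) := by
            rw [mul_sub, pi_shift hπ]
          rw [he, pi_mul_le hπ] at hmb
          exact hmb
        · exact ⟨j, hw⟩
      rw [if_neg test1, if_neg test2, mul_inv, inv_inv, ← mul_assoc,
        mul_inv_cancel₀ hne, one_mul]

/-! ### Right inverse -/

lemma phi_psi {z : K} (hz : z ∈ Metric.closedBall (0 : K) 1 \ {1}) :
    phi π (psi π z) = z := by
  have hne := hπ0 hπ
  have hp2 : ((π : K) ^ 2) ≠ 0 := pow_ne_zero _ hne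
  obtain ⟨hz1, hz2⟩ := hz
  rw [Metric.mem_closedBall, dist_zero_right] at hz1
  rw [Set.mem_singleton_iff] at hz2
  have hw0 : z - 1 ≠ 0 := sub_ne_zero.mpr hz2
  have hw1 : ‖z - 1‖ ≤ 1 := norm_sub_one_le hz1
  by_cases t1 : ‖z - 1 - π⁻¹‖ ≤ (‖π‖ ^ 2)⁻¹
  · rw [psi, if_pos t1, phi, if_pos ?_]
    · rw [← mul_assoc, inv_mul_cancel₀ hp2, one_mul]; ring
    · rw [norm_mul, norm_pow]
      calc ‖π‖ ^ 2 * ‖z - 1 - π⁻¹‖ ≤ ‖π‖ ^ 2 * (‖π‖ ^ 2)⁻¹ :=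
            mul_le_mul_of_nonneg_left t1 (ppow_pos hπ 2).le
        _ = 1 := mul_inv_cancel₀ (ppow_pos hπ 2).ne'
  · by_cases t2 : qmem π (z - 1) ∨ ¬ tmem π (z - 1)
    · rw [psi, if_neg t1, if_pos t2]
      have hlt : ‖z - 1‖ < 1 := by
        rcases t2 with h | h
        · obtain ⟨k, hk2, hkn, _⟩ := qmem_norm hπ h
          rw [hkn]
          exact powinv_lt_one hπ (by omega)
        · rcases lt_or_eq_of_le hw1 with h' | h'
          · exact h'
          · exact absurd ⟨0, by rw [pow_zero, inv_one]; exact h'⟩ h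
      have hx : 1 < ‖(z - 1)⁻¹‖ := by
        rw [norm_inv]
        exact (one_lt_inv₀ (norm_pos_iff.mpr hw0)).mpr hlt
      rw [phi, if_neg (not_le.mpr hx), if_pos ?_, inv_inv]
      · ring
      · rw [inv_inv]
        rcases t2 with h | h
        · exact Or.inl h
        · refine Or.inr fun ⟨k, hk1, hk⟩ => ?_
          refine h ⟨k, ?_⟩
          rw [norm_inv] at hk
          rw [← inv_inv ‖z - 1‖, hk]
    · push_neg at t2
      obtain ⟨hq, j, hj⟩ := t2
      rw [psi, if_neg t1, if_neg (by rw [not_or, not_not]; exact ⟨hq, j, hj⟩)]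
      have hxn : ‖π * (z - 1)⁻¹‖ = ‖π‖ ^ (j + 1) := by
        rw [norm_mul, norm_inv, hj, inv_inv, pow_succ, mul_comm]
      have hx : 1 < ‖π * (z - 1)⁻¹‖ := by
        rw [hxn]; exact one_lt_pow₀ hπ (Nat.succ_ne_zero j)
      have hxinv : (π * (z - 1)⁻¹)⁻¹ = π⁻¹ * (z - 1) := by
        rw [mul_inv, inv_inv]
      rw [phi, if_neg (not_le.mpr hx), if_neg ?_]
      · rw [hxinv, ← mul_assoc, mul_inv_cancel₀ hne, one_mul]; ring
      · rw [not_or, not_not]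
        constructor
        · rw [hxinv]
          intro h
          obtain ⟨m, hm2, hmn, hmb⟩ := qmem_norm hπ h
          have hyn : ‖π⁻¹ * (z - 1)‖ = (‖π‖ ^ (j + 1))⁻¹ := by
            rw [norm_mul, norm_inv, hj, pow_succ, mul_inv, mul_comm]
          have hjm : j + 1 = m := powinv_inj hπ (hyn ▸ hmn)
          subst hjm
          have he : π * (π⁻¹ * (z - 1) - (π ^ (j + 1))⁻¹) = z - 1 - (π ^ j)⁻¹ := by
            rw [mul_sub, pi_shift hπ, ← mul_assoc, mul_inv_cancel₀ hne, one_mul]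
          have hb : ‖z - 1 - (π ^ j)⁻¹‖ ≤ (‖π‖ ^ (j + 1))⁻¹ := by
            rw [← he, pi_mul_le hπ]
            exact hmb
          rcases Nat.lt_or_ge j 2 with hj2 | hj2
          · have hj1 : j = 1 := by omega
            subst hj1
            rw [pow_one] at hb
            exact t1 hb
          · exact hq ⟨j, hj2, hb⟩
        · exact ⟨j + 1, by omega, hxn⟩

/-! ### Continuity of `phi` -/

lemma qmem_inv_congr {x x₀ : K} (hx₀ : 1 < ‖x₀‖) (hnorm : ‖x‖ = ‖x₀‖)
    (hclose : ‖x - x₀‖ < 1) (h : qmem π x⁻¹) : qmem π x₀⁻¹ := by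
  obtain ⟨k, hk2, hkn, hkb⟩ := qmem_norm hπ h
  have hx0 : x ≠ 0 := by
    intro h'
    rw [h', norm_zero] at hnorm
    rw [← hnorm] at hx₀
    linarith
  have hx₀0 : x₀ ≠ 0 := by
    intro h'
    rw [h', norm_zero] at hx₀
    linarith
  have hxk : ‖x‖ = ‖π‖ ^ k := by
    rw [norm_inv] at hkn
    rw [← inv_inv ‖x‖, hkn, inv_inv]
  have hx₀k : ‖x₀‖ = ‖π‖ ^ k := by rw [← hnorm]; exact hxk
  have h2k : ‖π‖ ^ k * ‖π‖ ^ k = ‖π‖ ^ (k + 1) * ‖π‖ ^ (k - 1) := by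
    rw [← pow_add, ← pow_add]
    congr 1
    omega
  have hd : ‖x⁻¹ - x₀⁻¹‖ ≤ (‖π‖ ^ (k + 1))⁻¹ := by
    rw [inv_sub_inv hx0 hx₀0, norm_div, norm_mul, norm_sub_rev, hxk, hx₀k,
      div_le_iff₀ (by positivity)]
    calc ‖x - x₀‖ ≤ 1 := hclose.le
      _ ≤ ‖π‖ ^ (k - 1) := one_le_pow₀ hπ.le
      _ = (‖π‖ ^ (k + 1))⁻¹ * (‖π‖ ^ k * ‖π‖ ^ k) := by
          rw [h2k, inv_mul_cancel_left₀ (ppow_pos hπ (k + 1)).ne']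
  exact ⟨k, hk2, ball_transfer hd hkb⟩

lemma phi_continuous : Continuous (phi π) := by
  rw [continuous_iff_continuousAt]
  intro x₀
  by_cases hx : ‖x₀‖ ≤ 1
  · have hev : phi π =ᶠ[nhds x₀] fun x => 1 + π⁻¹ + (π ^ 2)⁻¹ * x := by
      filter_upwards [Metric.ball_mem_nhds x₀ one_pos] with x hx'
      rw [Metric.mem_ball, dist_eq_norm] at hx'
      have hle : ‖x‖ ≤ 1 := by
        have he : x = (x - x₀) + x₀ := by ring
        rw [he]
        exact le_trans (norm_add_le_max _ _) (max_le hx'.le hx)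
      rw [phi, if_pos hle]
    refine ContinuousAt.congr ?_ hev.symm
    exact (continuous_const.add (continuous_const.mul continuous_id)).continuousAt
  · push_neg at hx
    have hx0 : x₀ ≠ 0 := by
      intro h; rw [h, norm_zero] at hx; linarith
    have key : ∀ x ∈ Metric.ball x₀ (1:ℝ), ‖x‖ = ‖x₀‖ ∧
        ((qmem π x⁻¹ ∨ ¬ smem π x) ↔ (qmem π x₀⁻¹ ∨ ¬ smem π x₀)) := by
      intro x hx'
      rw [Metric.mem_ball, dist_eq_norm] at hx'
      have hn : ‖x‖ = ‖x₀‖ := norm_eq_of_close (lt_trans hx' hx)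
      refine ⟨hn, ?_⟩
      have hs : smem π x ↔ smem π x₀ := by unfold smem; rw [hn]
      have hq : qmem π x⁻¹ ↔ qmem π x₀⁻¹ := by
        constructor
        · exact qmem_inv_congr hπ hx hn hx'
        · exact qmem_inv_congr hπ (hn ▸ hx) hn.symm (by rwa [norm_sub_rev] at hx')
      rw [hs, hq]
    by_cases hb : qmem π x₀⁻¹ ∨ ¬ smem π x₀
    · have hev : phi π =ᶠ[nhds x₀] fun x => 1 + x⁻¹ := by
        filter_upwards [Metric.ball_mem_nhds x₀ one_pos] with x hx'
        obtain ⟨hn, hiff⟩ := key x hx'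
        rw [phi, if_neg (by rw [hn]; exact not_le.mpr hx), if_pos (hiff.mpr hb)]
      refine ContinuousAt.congr ?_ hev.symm
      exact continuousAt_const.add (continuousAt_inv₀ hx0)
    · have hev : phi π =ᶠ[nhds x₀] fun x => 1 + π * x⁻¹ := by
        filter_upwards [Metric.ball_mem_nhds x₀ one_pos] with x hx'
        obtain ⟨hn, hiff⟩ := key x hx'
        rw [phi, if_neg (by rw [hn]; exact not_le.mpr hx), if_neg (fun h => hb (hiff.mp h))]
      refine ContinuousAt.congr ?_ hev.symm
      exact continuousAt_const.add (continuousAt_const.mul (continuousAt_inv₀ hx0))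

/-! ### Continuity of `psi` -/

lemma qmem_congr {w w₀ : K} (hn : ‖w‖ = ‖w₀‖)
    (hd : ‖w - w₀‖ ≤ (‖π‖ ^ 2)⁻¹ * ‖w₀‖) (h : qmem π w) : qmem π w₀ := by
  obtain ⟨k, hk2, hkn, hkb⟩ := qmem_norm hπ h
  have hw₀ : ‖w₀‖ = (‖π‖ ^ k)⁻¹ := by rw [← hn]; exact hkn
  have hd' : ‖w - w₀‖ ≤ (‖π‖ ^ (k + 1))⁻¹ := by
    refine le_trans hd ?_
    rw [hw₀]
    calc (‖π‖ ^ 2)⁻¹ * (‖π‖ ^ k)⁻¹ = (‖π‖ ^ (k + 2))⁻¹ := by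
          rw [← mul_inv, ← pow_add, add_comm]
      _ ≤ (‖π‖ ^ (k + 1))⁻¹ := powinv_le hπ (by omega)
  exact ⟨k, hk2, ball_transfer hd' hkb⟩

lemma psi_continuousAt {z₀ : K} (h0 : z₀ ≠ 1) (h1 : ‖z₀ - 1‖ ≤ 1) :
    ContinuousAt (psi π) z₀ := by
  have hw0 : z₀ - 1 ≠ 0 := sub_ne_zero.mpr h0
  have hwpos : 0 < ‖z₀ - 1‖ := norm_pos_iff.mpr hw0
  have hrpos : 0 < (‖π‖ ^ 2)⁻¹ * ‖z₀ - 1‖ := mul_pos (powinv_pos hπ 2) hwpos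
  have key : ∀ z ∈ Metric.ball z₀ ((‖π‖ ^ 2)⁻¹ * ‖z₀ - 1‖), ‖z - 1‖ = ‖z₀ - 1‖ ∧
      ‖z - 1 - (z₀ - 1)‖ ≤ (‖π‖ ^ 2)⁻¹ * ‖z₀ - 1‖ := by
    intro z hz
    rw [Metric.mem_ball, dist_eq_norm] at hz
    have he : z - 1 - (z₀ - 1) = z - z₀ := by ring
    have hlt : ‖z - 1 - (z₀ - 1)‖ < ‖z₀ - 1‖ := by
      rw [he]
      refine lt_of_lt_of_le hz ?_
      calc (‖π‖ ^ 2)⁻¹ * ‖z₀ - 1‖ ≤ 1 * ‖z₀ - 1‖ :=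
            mul_le_mul_of_nonneg_right (powinv_le_one hπ 2) hwpos.le
        _ = ‖z₀ - 1‖ := one_mul _
    exact ⟨norm_eq_of_close hlt, by rw [he]; exact hz.le⟩
  have hrle : (‖π‖ ^ 2)⁻¹ * ‖z₀ - 1‖ ≤ (‖π‖ ^ 2)⁻¹ := by
    calc (‖π‖ ^ 2)⁻¹ * ‖z₀ - 1‖ ≤ (‖π‖ ^ 2)⁻¹ * 1 :=
          mul_le_mul_of_nonneg_left h1 (powinv_pos hπ 2).le
      _ = (‖π‖ ^ 2)⁻¹ := mul_one _
  -- equivalence of the branch tests on the small ball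
  have keyiff : ∀ z ∈ Metric.ball z₀ ((‖π‖ ^ 2)⁻¹ * ‖z₀ - 1‖),
      (‖z - 1 - π⁻¹‖ ≤ (‖π‖ ^ 2)⁻¹ ↔ ‖z₀ - 1 - π⁻¹‖ ≤ (‖π‖ ^ 2)⁻¹) ∧
      ((qmem π (z - 1) ∨ ¬ tmem π (z - 1)) ↔ (qmem π (z₀ - 1) ∨ ¬ tmem π (z₀ - 1))) := by
    intro z hz
    obtain ⟨hn, hd⟩ := key z hz
    have hd2 : ‖z - 1 - (z₀ - 1)‖ ≤ (‖π‖ ^ 2)⁻¹ := le_trans hd hrle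
    constructor
    · constructor
      · intro h
        exact ball_transfer hd2 h
      · intro h
        exact ball_transfer (by rwa [norm_sub_rev] at hd2) h
    · have ht : tmem π (z - 1) ↔ tmem π (z₀ - 1) := by unfold tmem; rw [hn]
      have hq : qmem π (z - 1) ↔ qmem π (z₀ - 1) := by
        constructor
        · exact qmem_congr hπ hn hd
        · refine qmem_congr hπ hn.symm ?_
          rw [norm_sub_rev, hn]
          exact hd
      rw [ht, hq]
  by_cases t1 : ‖z₀ - 1 - π⁻¹‖ ≤ (‖π‖ ^ 2)⁻¹
  · have hev : psi π =ᶠ[nhds z₀] fun z => π ^ 2 * (z - 1 - π⁻¹) := by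
      filter_upwards [Metric.ball_mem_nhds z₀ hrpos] with z hz
      rw [psi, if_pos ((keyiff z hz).1.mpr t1)]
    refine ContinuousAt.congr ?_ hev.symm
    fun_prop
  · by_cases t2 : qmem π (z₀ - 1) ∨ ¬ tmem π (z₀ - 1)
    · have hev : psi π =ᶠ[nhds z₀] fun z => (z - 1)⁻¹ := by
        filter_upwards [Metric.ball_mem_nhds z₀ hrpos] with z hz
        rw [psi, if_neg (fun h => t1 ((keyiff z hz).1.mp h)), if_pos ((keyiff z hz).2.mpr t2)]
      refine ContinuousAt.congr ?_ hev.symm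
      exact ((continuous_id.sub continuous_const).continuousAt).inv₀ hw0
    · have hev : psi π =ᶠ[nhds z₀] fun z => π * (z - 1)⁻¹ := by
        filter_upwards [Metric.ball_mem_nhds z₀ hrpos] with z hz
        rw [psi, if_neg (fun h => t1 ((keyiff z hz).1.mp h)),
          if_neg (fun h => t2 ((keyiff z hz).2.mp h))]
      refine ContinuousAt.congr ?_ hev.symm
      exact continuousAt_const.mul (((continuous_id.sub continuous_const).continuousAt).inv₀ hw0)

end Basic

end FHB

/-- Let `K` be a field with a complete non-Archimedean multiplicative
norm whose value group is nontrivial.  Then `K` is homeomorphic to `B \ {1}`, where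
`B = {x ∈ K : ‖x‖ ≤ 1}` is the closed unit ball of `K`. -/
theorem field_homeomorph_ball_sdiff_one (K : Type*) [NontriviallyNormedField K]
    [IsUltrametricDist K] [CompleteSpace K] :
    Nonempty (K ≃ₜ ↥(Metric.closedBall (0 : K) 1 \ {1})) := by
  obtain ⟨π, hπ⟩ := NormedField.exists_one_lt_norm K
  refine ⟨Homeomorph.mk ⟨fun x => ⟨FHB.phi π x, FHB.phi_mem hπ x⟩,
    fun z => FHB.psi π z.1, fun x => FHB.psi_phi hπ x,
    fun z => Subtype.ext (FHB.phi_psi hπ z.2)⟩ ?_ ?_⟩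
  · exact (FHB.phi_continuous hπ).subtype_mk _
  · rw [continuous_iff_continuousAt]
    intro z
    obtain ⟨hz1, hz2⟩ := z.2
    rw [Metric.mem_closedBall, dist_zero_right] at hz1
    rw [Set.mem_singleton_iff] at hz2
    exact (FHB.psi_continuousAt hπ hz2 (FHB.norm_sub_one_le hz1)).comp
      continuous_subtype_val.continuousAt
end

section
/- The topological spaces A₁* and s_* are homeomorphic. A homeomorphism q : A₁* → s_* is given coordinate-wise by y₁ = x₁ and y_{m+1} = x_{m+1}/(1 − x₁ − ⋯ − x_m) for m ≥ 1, with inverse x₁ = y₁ and x_{m+1} = y_{m+1}(1−y_m)⋯(1−y₁). -/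
open scoped ZeroAtInfty
open Filter

noncomputable section

variable (K : Type*) [NontriviallyNormedField K] [IsUltrametricDist K] [CompleteSpace K]

/-- The partial sum `x_1 + ⋯ + x_m` of the first `m` coordinates of a sequence. -/
def pSum (x : ℕ → K) (m : ℕ) : K := ∑ j ∈ Finset.range m, x j

/-- The set `A₁` of the paper: sequences `x ∈ c₀` with `sup_k |Σ_{j=1}^k x_j| = 1`,
`|1 − Σ_{j=1}^{k+1} x_j| ≤ |1 − Σ_{j=1}^k x_j|` for all `k ≥ 1`, and `Σ_{j=1}^∞ x_j = 1`. -/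
def A1 : Set C₀(ℕ, K) :=
  {x | (⨆ k : ℕ, ‖pSum K (⇑x) (k + 1)‖) = 1 ∧
    (∀ k : ℕ, ‖1 - pSum K (⇑x) (k + 2)‖ ≤ ‖1 - pSum K (⇑x) (k + 1)‖) ∧
    Tendsto (fun m => pSum K (⇑x) m) atTop (nhds 1)}

/-- The union `⋃ₙ Eⁿ` of the sets `Eⁿ = {x ∈ c₀ : x_k = 0 ∀ k > n}`,
i.e. the eventually-zero sequences. -/
def evZero : Set C₀(ℕ, K) := ⋃ n : ℕ, {x | ∀ k, n ≤ k → x k = 0}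

/-- `A₁* = A₁ \ ⋃ₙ Eⁿ`, with the topology inherited from `c₀`. -/
def A1star : Set C₀(ℕ, K) := A1 K \ evZero K

/-- `s̃ = ∏_{j=1}^∞ (B \ {1})`, where `B` is the closed unit ball of `K`, with the
Tychonoff product topology. -/
abbrev sTilde : Type _ := ℕ → ↥(Metric.closedBall (0 : K) 1 \ {1})

/-- `s_* = {y ∈ s̃ : limₘ (1−y_m)⋯(1−y₁) = 0} \ ⋃ₙ {y : y_k = 0 ∀ k > n}`. -/
def sStar : Set (sTilde K) :=
  {y | Tendsto (fun m => ∏ j ∈ Finset.range m, (1 - (y j : K))) atTop (nhds 0)} \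
    ⋃ n : ℕ, {y | ∀ k, n ≤ k → (y k : K) = 0}

/-! ### Auxiliary material -/

variable {K}

lemma pSum_zero' (f : ℕ → K) : pSum K f 0 = 0 := by simp [pSum]

lemma pSum_succ' (f : ℕ → K) (m : ℕ) : pSum K f (m + 1) = pSum K f m + f m :=
  Finset.sum_range_succ f m

lemma norm_sub_le_max' (a b : K) : ‖a - b‖ ≤ max ‖a‖ ‖b‖ := by
  simpa [sub_eq_add_neg] using IsUltrametricDist.norm_add_le_max a (-b)

lemma norm_one_sub_le' {a : K} (h : ‖a‖ ≤ 1) : ‖1 - a‖ ≤ 1 :=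
  (norm_sub_le_max' 1 a).trans (by simp [h])

lemma norm_one_sub_eq' {a : K} (h : ‖a‖ < 1) : ‖1 - a‖ = 1 := by
  have hne : ‖(1 : K)‖ ≠ ‖-a‖ := by simpa using h.ne'
  have := IsUltrametricDist.norm_add_eq_max_of_norm_ne_norm hne
  rw [sub_eq_add_neg, this]
  simp [max_eq_left h.le]

/-- Norms of coordinates of points of `s̃`. -/
lemma sT_norm_le (y : sTilde K) (j : ℕ) : ‖(y j : K)‖ ≤ 1 := by
  have := (y j).2.1
  rwa [Metric.mem_closedBall, dist_zero_right] at this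

lemma sT_ne_one (y : sTilde K) (j : ℕ) : (y j : K) ≠ 1 := by
  have := (y j).2.2
  simpa using this

/-- The partial product `∏_{j<m} (1 - y_j)` for `y ∈ s̃`. -/
def Pfun (y : sTilde K) (m : ℕ) : K := ∏ j ∈ Finset.range m, (1 - (y j : K))

lemma Pfun_zero (y : sTilde K) : Pfun y 0 = 1 := by simp [Pfun]

lemma Pfun_succ (y : sTilde K) (m : ℕ) :
    Pfun y (m + 1) = Pfun y m * (1 - (y m : K)) :=
  Finset.prod_range_succ _ m

lemma Pfun_ne_zero (y : sTilde K) (m : ℕ) : Pfun y m ≠ 0 := by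
  induction m with
  | zero => simp [Pfun_zero]
  | succ m ih =>
    rw [Pfun_succ]
    exact mul_ne_zero ih (sub_ne_zero.mpr fun h => sT_ne_one y m h.symm)

lemma Pfun_norm_succ_le (y : sTilde K) (m : ℕ) : ‖Pfun y (m + 1)‖ ≤ ‖Pfun y m‖ := by
  rw [Pfun_succ, norm_mul]
  calc ‖Pfun y m‖ * ‖1 - (y m : K)‖ ≤ ‖Pfun y m‖ * 1 :=
        mul_le_mul_of_nonneg_left (norm_one_sub_le' (sT_norm_le y m)) (norm_nonneg _)
    _ = ‖Pfun y m‖ := mul_one _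

lemma Pfun_norm_anti (y : sTilde K) : Antitone fun m => ‖Pfun y m‖ :=
  antitone_nat_of_succ_le (Pfun_norm_succ_le y)

lemma Pfun_norm_le_one (y : sTilde K) (m : ℕ) : ‖Pfun y m‖ ≤ 1 := by
  have := Pfun_norm_anti y (Nat.zero_le m)
  simpa [Pfun_zero] using this

lemma continuous_Pfun (m : ℕ) : Continuous fun y : sTilde K => Pfun y m := by
  refine continuous_finset_prod _ fun j _ => ?_
  exact continuous_const.sub (continuous_subtype_val.comp (continuous_apply j))

/-! ### Facts about members of `A1star` -/

section A1facts

variable {x : C₀(ℕ, K)}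

lemma r_succ (x : C₀(ℕ, K)) (m : ℕ) :
    1 - pSum K (⇑x) (m + 1) = (1 - pSum K (⇑x) m) - x m := by
  rw [pSum_succ']; ring

lemma norm_r_anti (hx : x ∈ A1 K) {a b : ℕ} (ha : 1 ≤ a) (hab : a ≤ b) :
    ‖1 - pSum K (⇑x) b‖ ≤ ‖1 - pSum K (⇑x) a‖ := by
  induction b, hab using Nat.le_induction with
  | base => exact le_rfl
  | succ b hb ih =>
    refine le_trans ?_ ih
    obtain ⟨c, rfl⟩ := Nat.exists_eq_add_of_le (ha.trans hb)
    simpa [add_comm 1 c] using hx.2.1 c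

lemma bddAbove_pSum (hx : x ∈ A1 K) :
    BddAbove (Set.range fun k : ℕ => ‖pSum K (⇑x) (k + 1)‖) := by
  by_contra h
  have h1 := hx.1
  rw [Real.iSup_of_not_bddAbove h] at h1
  exact zero_ne_one h1

lemma norm_pSum_le_one (hx : x ∈ A1 K) (k : ℕ) : ‖pSum K (⇑x) (k + 1)‖ ≤ 1 :=
  hx.1 ▸ le_ciSup (bddAbove_pSum hx) k

lemma r_ne_zero (hx : x ∈ A1star K) (m : ℕ) : 1 - pSum K (⇑x) m ≠ 0 := by
  intro h
  rcases Nat.eq_zero_or_pos m with rfl | hm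
  · rw [pSum_zero', sub_zero] at h
    exact one_ne_zero h
  · refine hx.2 (Set.mem_iUnion.mpr ⟨m, fun k hk => ?_⟩)
    have hz : ∀ k, m ≤ k → 1 - pSum K (⇑x) k = 0 := by
      intro k hk
      have := norm_r_anti hx.1 hm hk
      rw [h, norm_zero] at this
      exact norm_le_zero_iff.mp this
    have h1 := hz k hk
    have h2 := hz (k + 1) (hk.trans (Nat.le_succ k))
    have := r_succ x k
    rw [h1, h2] at this
    simpa using this.symm

/-- The norm bound for the forward map's coordinates. -/
lemma fwd_norm_le (hx : x ∈ A1star K) (m : ℕ) :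
    ‖x m / (1 - pSum K (⇑x) m)‖ ≤ 1 := by
  rw [norm_div, div_le_one (norm_pos_iff.mpr (r_ne_zero hx m))]
  rcases Nat.eq_zero_or_pos m with rfl | hm
  · have h0 : (x : ℕ → K) 0 = pSum K (⇑x) 1 := by simp [pSum]
    rw [h0, pSum_zero', sub_zero, norm_one]
    exact norm_pSum_le_one hx.1 0
  · obtain ⟨k, rfl⟩ := Nat.exists_eq_add_of_lt hm
    rw [zero_add]
    have hx' : (x : ℕ → K) (k + 1)
        = (1 - pSum K (⇑x) (k + 1)) - (1 - pSum K (⇑x) (k + 2)) := by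
      rw [r_succ x (k + 1)]; ring
    rw [hx']
    exact (norm_sub_le_max' _ _).trans (max_le le_rfl (hx.1.2.1 k))

lemma fwd_ne_one (hx : x ∈ A1star K) (m : ℕ) :
    x m / (1 - pSum K (⇑x) m) ≠ 1 := by
  intro h
  have := (div_eq_one_iff_eq (r_ne_zero hx m)).mp h
  have h2 := r_succ x m
  rw [← this] at h2
  simp only [sub_self] at h2
  exact r_ne_zero hx (m + 1) h2

/-- The forward map into `s̃`. -/
def fwd (x : ↥(A1star K)) : sTilde K := fun m =>
  ⟨(x : C₀(ℕ, K)) m / (1 - pSum K (⇑(x : C₀(ℕ, K))) m),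
    ⟨by rw [Metric.mem_closedBall, dist_zero_right]; exact fwd_norm_le x.2 m,
     by simpa using fwd_ne_one x.2 m⟩⟩

lemma Pfun_fwd (x : ↥(A1star K)) (m : ℕ) :
    Pfun (fwd x) m = 1 - pSum K (⇑(x : C₀(ℕ, K))) m := by
  induction m with
  | zero => simp [Pfun_zero, pSum_zero']
  | succ m ih =>
    rw [Pfun_succ, ih, r_succ (x : C₀(ℕ, K)) m]
    have hr := r_ne_zero x.2 m
    show (1 - pSum K _ m) * (1 - (x : C₀(ℕ, K)) m / (1 - pSum K _ m)) = _
    field_simp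

lemma fwd_mem_sStar (x : ↥(A1star K)) : fwd x ∈ sStar K := by
  constructor
  · show Tendsto (fun m => ∏ j ∈ Finset.range m, (1 - ((fwd x) j : K))) atTop (nhds 0)
    have heq : (fun m => ∏ j ∈ Finset.range m, (1 - ((fwd x) j : K)))
        = fun m => 1 - pSum K (⇑(x : C₀(ℕ, K))) m := funext fun m => Pfun_fwd x m
    rw [heq]
    have := (x.2.1.2.2).const_sub 1
    simpa using this
  · intro hmem
    obtain ⟨n, hn⟩ := Set.mem_iUnion.mp hmem
    refine x.2.2 (Set.mem_iUnion.mpr ⟨n, fun k hk => ?_⟩)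
    have := hn k hk
    show (x : C₀(ℕ, K)) k = 0
    rcases div_eq_zero_iff.mp this with h | h
    · exact h
    · exact absurd h (r_ne_zero x.2 k)

end A1facts

/-! ### The backward map -/

section Bwd

lemma bwd_zero_at_infty (y : ↥(sStar K)) :
    Tendsto (fun m => ((y : sTilde K) m : K) * Pfun (y : sTilde K) m) atTop (nhds 0) := by
  have hg : Tendsto (fun m => ‖Pfun (y : sTilde K) m‖) atTop (nhds 0) := by
    have := y.2.1
    simpa [Pfun] using this.norm
  refine squeeze_zero_norm (fun m => ?_) hg
  rw [norm_mul]
  calc ‖((y : sTilde K) m : K)‖ * ‖Pfun (y : sTilde K) m‖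
      ≤ 1 * ‖Pfun (y : sTilde K) m‖ :=
        mul_le_mul_of_nonneg_right (sT_norm_le _ m) (norm_nonneg _)
    _ = ‖Pfun (y : sTilde K) m‖ := one_mul _

/-- The backward map into `c₀`. -/
def bwd (y : ↥(sStar K)) : C₀(ℕ, K) where
  toFun := fun m => ((y : sTilde K) m : K) * Pfun (y : sTilde K) m
  continuous_toFun := continuous_of_discreteTopology
  zero_at_infty' := by
    rw [cocompact_eq_cofinite, Nat.cofinite_eq_atTop]
    exact bwd_zero_at_infty y

lemma bwd_apply (y : ↥(sStar K)) (m : ℕ) :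
    bwd y m = ((y : sTilde K) m : K) * Pfun (y : sTilde K) m := rfl

lemma pSum_bwd (y : ↥(sStar K)) (m : ℕ) :
    pSum K (⇑(bwd y)) m = 1 - Pfun (y : sTilde K) m := by
  induction m with
  | zero => simp [pSum_zero', Pfun_zero]
  | succ m ih =>
    rw [pSum_succ', ih, bwd_apply, Pfun_succ]
    ring

lemma tendsto_Pfun (y : ↥(sStar K)) :
    Tendsto (fun m => Pfun (y : sTilde K) m) atTop (nhds 0) := y.2.1

lemma bwd_mem_A1star (y : ↥(sStar K)) : bwd y ∈ A1star K := by
  constructor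
  · refine ⟨?_, ?_, ?_⟩
    · refine le_antisymm (ciSup_le fun k => ?_) ?_
      · rw [pSum_bwd]
        simpa using norm_one_sub_le' (Pfun_norm_le_one (y : sTilde K) (k + 1))
      · have hev : ∀ᶠ m in atTop, ‖Pfun (y : sTilde K) m‖ < 1 := by
          have := (tendsto_Pfun y).norm
          rw [norm_zero] at this
          exact this.eventually_lt_const one_pos
        obtain ⟨N, hN⟩ := (hev.and (eventually_ge_atTop 1)).exists
        obtain ⟨k, rfl⟩ := Nat.exists_eq_add_of_le hN.2
        have : ‖pSum K (⇑(bwd y)) (1 + k)‖ = 1 := by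
          rw [pSum_bwd]
          exact norm_one_sub_eq' hN.1
        have hb : BddAbove (Set.range fun k : ℕ => ‖pSum K (⇑(bwd y)) (k + 1)‖) := by
          refine ⟨1, fun r hr => ?_⟩
          obtain ⟨j, rfl⟩ := hr
          show ‖pSum K (⇑(bwd y)) (j + 1)‖ ≤ 1
          rw [pSum_bwd]
          simpa using norm_one_sub_le' (Pfun_norm_le_one (y : sTilde K) (j + 1))
        calc (1 : ℝ) = ‖pSum K (⇑(bwd y)) (k + 1)‖ := by rw [← this, add_comm 1 k]
          _ ≤ ⨆ k : ℕ, ‖pSum K (⇑(bwd y)) (k + 1)‖ := le_ciSup hb k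
    · intro k
      rw [pSum_bwd, pSum_bwd, sub_sub_cancel, sub_sub_cancel]
      exact Pfun_norm_succ_le (y : sTilde K) (k + 1)
    · have heq : (fun m => pSum K (⇑(bwd y)) m)
          = fun m => 1 - Pfun (y : sTilde K) m := funext fun m => pSum_bwd y m
      rw [heq]
      have := (tendsto_Pfun y).const_sub 1
      simpa using this
  · intro hmem
    obtain ⟨n, hn⟩ := Set.mem_iUnion.mp hmem
    refine y.2.2 (Set.mem_iUnion.mpr ⟨n, fun k hk => ?_⟩)
    have := hn k hk
    rw [bwd_apply] at this
    rcases mul_eq_zero.mp this with h | h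
    · exact h
    · exact absurd h (Pfun_ne_zero _ k)

end Bwd

/-! ### Continuity of evaluation on `c₀` -/

lemma continuous_eval_C0 (m : ℕ) : Continuous fun x : C₀(ℕ, K) => x m := by
  have h1 : Continuous fun f : BoundedContinuousFunction ℕ K => f m :=
    continuous_eval_const m
  exact h1.comp (ZeroAtInftyContinuousMap.isometry_toBCF.continuous)

lemma continuous_pSum (m : ℕ) : Continuous fun x : C₀(ℕ, K) => pSum K (⇑x) m := by
  refine continuous_finset_sum _ fun j _ => continuous_eval_C0 j

variable (K)

/-- The spaces `A₁*` and `s_*` are homeomorphic, and a homeomorphism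
`q : A₁* → s_*` is given coordinatewise by `y₁ = x₁`,
`y_{m+1} = x_{m+1} / (1 − x₁ − ⋯ − x_m)`, with inverse given by `x₁ = y₁`,
`x_{m+1} = y_{m+1}·(1 − y_m)⋯(1 − y₁)`.  (In 0-based indexing both formulas read
uniformly as `y_m = x_m / (1 − Σ_{j<m} x_j)` and `x_m = y_m · ∏_{j<m} (1 − y_j)`.) -/
theorem A1star_homeomorph_sStar :
    ∃ q : ↥(A1star K) ≃ₜ ↥(sStar K),
      (∀ (x : ↥(A1star K)) (m : ℕ),
        (((q x : sTilde K) m : K)) =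
          (x : C₀(ℕ, K)) m / (1 - pSum K (⇑(x : C₀(ℕ, K))) m)) ∧
      (∀ (y : ↥(sStar K)) (m : ℕ),
        ((q.symm y : C₀(ℕ, K)) m) =
          ((y : sTilde K) m : K) * ∏ j ∈ Finset.range m, (1 - ((y : sTilde K) j : K))) := by
  -- the underlying equivalence
  have left_inv : ∀ x : ↥(A1star K), bwd ⟨fwd x, fwd_mem_sStar x⟩ = (x : C₀(ℕ, K)) := by
    intro x
    ext m
    show ((fwd x) m : K) * Pfun (fwd x) m = (x : C₀(ℕ, K)) m
    rw [Pfun_fwd]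
    show (x : C₀(ℕ, K)) m / (1 - pSum K _ m) * (1 - pSum K _ m) = _
    exact div_mul_cancel₀ _ (r_ne_zero x.2 m)
  have right_inv : ∀ y : ↥(sStar K), fwd ⟨bwd y, bwd_mem_A1star y⟩ = (y : sTilde K) := by
    intro y
    funext m
    apply Subtype.ext
    show bwd y m / (1 - pSum K (⇑(bwd y)) m) = ((y : sTilde K) m : K)
    rw [pSum_bwd, sub_sub_cancel, bwd_apply]
    exact mul_div_cancel_right₀ _ (Pfun_ne_zero _ m)
  let e : ↥(A1star K) ≃ ↥(sStar K) :=
    { toFun := fun x => ⟨fwd x, fwd_mem_sStar x⟩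
      invFun := fun y => ⟨bwd y, bwd_mem_A1star y⟩
      left_inv := fun x => Subtype.ext (left_inv x)
      right_inv := fun y => Subtype.ext (right_inv y) }
  -- continuity of the forward map
  have cont_fwd : Continuous fun x : ↥(A1star K) => fwd x := by
    refine continuous_pi fun m => Continuous.subtype_mk ?_ _
    exact ((continuous_eval_C0 m).comp continuous_subtype_val).div
      ((continuous_const.sub ((continuous_pSum m).comp continuous_subtype_val)))
      (fun x => r_ne_zero x.2 m)
  -- continuity of the backward map
  have cont_bwd : Continuous fun y : ↥(sStar K) => bwd y := by
    rw [continuous_iff_continuousAt]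
    intro y₀
    rw [ContinuousAt, Metric.tendsto_nhds]
    intro ε hε
    have hε2 : (0 : ℝ) < ε / 2 := half_pos hε
    -- choose N with ‖Pfun y₀ N‖ < ε/2
    obtain ⟨N, hN⟩ : ∃ N, ‖Pfun (y₀ : sTilde K) N‖ < ε / 2 := by
      have := (tendsto_Pfun y₀).norm
      rw [norm_zero] at this
      exact (this.eventually_lt_const hε2).exists
    have hPc : Continuous fun y : ↥(sStar K) => Pfun (y : sTilde K) N :=
      (continuous_Pfun N).comp continuous_subtype_val
    have hPt : Tendsto (fun y : ↥(sStar K) => ‖Pfun (y : sTilde K) N‖) (nhds y₀)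
        (nhds ‖Pfun (y₀ : sTilde K) N‖) := (hPc.norm).continuousAt
    have hev1 : ∀ᶠ y : ↥(sStar K) in nhds y₀, ‖Pfun (y : sTilde K) N‖ < ε / 2 :=
      hPt.eventually_lt_const hN
    have hev2 : ∀ᶠ y in nhds y₀, ∀ m ∈ Finset.range N, ‖bwd y m - bwd y₀ m‖ < ε / 2 := by
      rw [eventually_all_finset]
      intro m _
      have hc : Continuous fun y : ↥(sStar K) => bwd y m := by
        simp only [bwd_apply]
        exact (continuous_subtype_val.comp
            ((continuous_apply m).comp continuous_subtype_val)).mul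
          ((continuous_Pfun m).comp continuous_subtype_val)
      have : Tendsto (fun y : ↥(sStar K) => ‖bwd y m - bwd y₀ m‖) (nhds y₀)
          (nhds ‖bwd y₀ m - bwd y₀ m‖) :=
        (continuous_norm.comp (hc.sub continuous_const)).continuousAt
      rw [sub_self, norm_zero] at this
      exact this.eventually_lt_const hε2
    filter_upwards [hev1, hev2] with y h1 h2
    have hle : dist (bwd y) (bwd y₀) ≤ ε / 2 := by
      rw [← ZeroAtInftyContinuousMap.dist_toBCF_eq_dist,
        BoundedContinuousFunction.dist_le hε2.le]
      intro m
      show dist (bwd y m) (bwd y₀ m) ≤ ε / 2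
      rw [dist_eq_norm]
      by_cases hm : m < N
      · exact (h2 m (Finset.mem_range.mpr hm)).le
      · push_neg at hm
        refine (norm_sub_le_max' _ _).trans (max_le ?_ ?_)
        · rw [bwd_apply, norm_mul]
          calc ‖((y : sTilde K) m : K)‖ * ‖Pfun (y : sTilde K) m‖
              ≤ 1 * ‖Pfun (y : sTilde K) m‖ :=
                mul_le_mul_of_nonneg_right (sT_norm_le _ m) (norm_nonneg _)
            _ = ‖Pfun (y : sTilde K) m‖ := one_mul _
            _ ≤ ‖Pfun (y : sTilde K) N‖ := Pfun_norm_anti _ hm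
            _ ≤ ε / 2 := h1.le
        · rw [bwd_apply, norm_mul]
          calc ‖((y₀ : sTilde K) m : K)‖ * ‖Pfun (y₀ : sTilde K) m‖
              ≤ 1 * ‖Pfun (y₀ : sTilde K) m‖ :=
                mul_le_mul_of_nonneg_right (sT_norm_le _ m) (norm_nonneg _)
            _ = ‖Pfun (y₀ : sTilde K) m‖ := one_mul _
            _ ≤ ‖Pfun (y₀ : sTilde K) N‖ := Pfun_norm_anti _ hm
            _ ≤ ε / 2 := hN.le
    exact lt_of_le_of_lt hle (half_lt_self hε)
  refine ⟨{ toEquiv := e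
            continuous_toFun := Continuous.subtype_mk cont_fwd _
            continuous_invFun := Continuous.subtype_mk cont_bwd _ }, ?_, ?_⟩
  · intro x m; rfl
  · intro y m; rfl

end
end

section
/- Let M be a closed subset of X and let f : M → K be a continuous function. Then there exists a continuous function g : X → K extending f, i.e. g|_M = f. -/
open Metric

/-- In an ultrametric space, if `dist x y < infDist x M` then `infDist x M ≤ infDist y M`. -/
theorem ultrametric_infDist_mono {X : Type*} [MetricSpace X] [IsUltrametricDist X]
    {M : Set X} (hne : M.Nonempty) {x y : X} (h : dist x y < infDist x M) :
    infDist x M ≤ infDist y M := by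
  by_contra hlt
  push_neg at hlt
  obtain ⟨m, hmM, hmd⟩ := (infDist_lt_iff hne).mp hlt
  have hxm : infDist x M ≤ dist x m := infDist_le_dist_of_mem hmM
  have htri := IsUltrametricDist.dist_triangle_max x y m
  have : dist x m < infDist x M := lt_of_le_of_lt htri (max_lt h hmd)
  linarith

/-- In an ultrametric space, if `dist x y < infDist x M` then `infDist y M = infDist x M`. -/
theorem ultrametric_infDist_eq {X : Type*} [MetricSpace X] [IsUltrametricDist X]
    {M : Set X} (hne : M.Nonempty) {x y : X} (h : dist x y < infDist x M) :
    infDist y M = infDist x M := by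
  have h1 : infDist x M ≤ infDist y M := ultrametric_infDist_mono hne h
  have h2 : dist y x < infDist y M := by
    rw [dist_comm]; exact lt_of_lt_of_le h h1
  exact le_antisymm (ultrametric_infDist_mono hne h2) h1

/-- A nonempty closed subset of an ultrametric space is a retract. -/
theorem ultrametric_exists_retract {X : Type*} [MetricSpace X] [IsUltrametricDist X]
    {M : Set X} (hM : IsClosed M) (hne : M.Nonempty) :
    ∃ r : X → M, Continuous r ∧ ∀ x : M, r x = x := by
  classical
  have hpos : ∀ x : X, x ∉ M → 0 < infDist x M := fun x hx =>
    (hM.notMem_iff_infDist_pos hne).mp hx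
  -- the setoid on the complement of M
  let s : Setoid {x : X // x ∉ M} :=
    ⟨fun a b => dist a.1 b.1 < infDist a.1 M, by
      constructor
      · intro a; simpa using hpos a.1 a.2
      · intro a b hab
        have := ultrametric_infDist_eq hne hab
        rw [dist_comm] at hab
        rwa [← this] at hab
      · intro a b c hab hbc
        have heq := ultrametric_infDist_eq hne hab
        refine lt_of_le_of_lt (IsUltrametricDist.dist_triangle_max a.1 b.1 c.1) ?_
        exact max_lt hab (heq ▸ hbc)⟩
  have hnear : ∀ a : {x : X // x ∉ M}, ∃ m : M, dist a.1 m.1 < 2 * infDist a.1 M := by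
    intro a
    have h2 : infDist a.1 M < 2 * infDist a.1 M := by linarith [hpos a.1 a.2]
    obtain ⟨m, hmM, hmd⟩ := (infDist_lt_iff hne).mp h2
    exact ⟨⟨m, hmM⟩, hmd⟩
  let pick : Quotient s → M := fun q => (hnear q.out).choose
  let r : X → M := fun x => if h : x ∈ M then ⟨x, h⟩ else pick (Quotient.mk s ⟨x, h⟩)
  have hr_mem : ∀ (x : X) (h : x ∈ M), r x = ⟨x, h⟩ := by
    intro x h; simp only [r, dif_pos h]
  -- key distance bound on the complement
  have hbound : ∀ (x : X) (h : x ∉ M), dist x (r x).1 < 2 * infDist x M := by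
    intro x h
    have hrx : r x = pick (Quotient.mk s ⟨x, h⟩) := by simp only [r, dif_neg h]
    set q := Quotient.mk s ⟨x, h⟩ with hq
    set b := q.out with hb
    have hba : s.r b ⟨x, h⟩ := by
      have := Quotient.mk_out (s := s) ⟨x, h⟩
      exact this
    have hdb : dist b.1 x < infDist b.1 M := hba
    have hib : infDist x M = infDist b.1 M := ultrametric_infDist_eq hne hdb
    have hc := (hnear b).choose_spec
    have htri := IsUltrametricDist.dist_triangle_max x b.1 ((hnear b).choose : M).1
    rw [hrx]
    refine lt_of_le_of_lt htri (max_lt ?_ ?_)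
    · rw [dist_comm]
      calc dist b.1 x < infDist b.1 M := hdb
        _ ≤ 2 * infDist b.1 M := by linarith [hpos b.1 b.2]
        _ = 2 * infDist x M := by rw [hib]
    · calc dist b.1 ((hnear b).choose : M).1 < 2 * infDist b.1 M := hc
        _ = 2 * infDist x M := by rw [hib]
  -- global bound: dist (r x) m ≤ 2 * dist x m for m ∈ M
  have hglob : ∀ (x : X) (m : M), dist (r x).1 m.1 ≤ 2 * dist x m.1 := by
    intro x m
    by_cases h : x ∈ M
    · rw [hr_mem x h]
      have := dist_nonneg (x := x) (y := m.1)
      linarith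
    · have h1 : dist (r x).1 x < 2 * infDist x M := by
        rw [dist_comm]; exact hbound x h
      have h2 : infDist x M ≤ dist x m.1 := infDist_le_dist_of_mem m.2
      refine le_trans (IsUltrametricDist.dist_triangle_max (r x).1 x m.1) (max_le ?_ ?_)
      · linarith
      · linarith [dist_nonneg (x := x) (y := m.1)]
  -- local constancy on the complement
  have hloc : ∀ (x : X) (h : x ∉ M) (y : X), dist x y < infDist x M → r y = r x := by
    intro x h y hxy
    have hy : y ∉ M := by
      intro hyM
      have : infDist x M ≤ dist x y := infDist_le_dist_of_mem hyM
      linarith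
    have hrel : s.r ⟨x, h⟩ ⟨y, hy⟩ := hxy
    have : Quotient.mk s ⟨y, hy⟩ = Quotient.mk s ⟨x, h⟩ := Quotient.sound (s.symm hrel)
    simp only [r, dif_neg hy, dif_neg h, this]
  -- continuity
  have hcont : Continuous r := by
    rw [continuous_iff_continuousAt]
    intro x
    by_cases h : x ∈ M
    · rw [Metric.continuousAt_iff]
      intro ε hε
      refine ⟨ε / 2, by linarith, fun {y} hy => ?_⟩
      rw [Subtype.dist_eq]
      have h1 := hglob y ⟨x, h⟩
      rw [hr_mem x h]
      calc dist (r y).1 x ≤ 2 * dist y x := h1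
        _ < ε := by linarith
    · have hmem : Metric.ball x (infDist x M) ∈ nhds x := ball_mem_nhds x (hpos x h)
      have hev : (fun _ : X => r x) =ᶠ[nhds x] r := by
        refine Filter.eventually_of_mem hmem fun y hy => ?_
        rw [mem_ball, dist_comm] at hy
        exact (hloc x h y hy).symm
      exact ContinuousAt.congr continuousAt_const hev
  refine ⟨r, hcont, fun x => ?_⟩
  rw [hr_mem x.1 x.2]

/-- non-Archimedean Tietze extension theorem.  Let `(X, ρ)` be an
ultrametric space and let `K` be a locally compact field with a complete
non-Archimedean multiplicative norm whose value group is nontrivial.  If `M ⊆ X` is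
closed and `f : M → K` is continuous, then `f` extends to a continuous `g : X → K`. -/
theorem exists_continuous_extension_of_closed {X : Type*} [MetricSpace X]
    [IsUltrametricDist X] (K : Type*) [NontriviallyNormedField K] [IsUltrametricDist K]
    [CompleteSpace K] [LocallyCompactSpace K] (M : Set X) (hM : IsClosed M)
    (f : M → K) (hf : Continuous f) :
    ∃ g : X → K, Continuous g ∧ ∀ x : M, g x = f x := by
  rcases M.eq_empty_or_nonempty with hMe | hne
  · exact ⟨fun _ => 0, continuous_const, fun x => absurd (show (x : X) ∈ (∅ : Set X) from hMe ▸ x.2) (Set.notMem_empty _)⟩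
  · obtain ⟨r, hr, hrx⟩ := ultrametric_exists_retract hM hne
    exact ⟨fun x => f (r x), hf.comp hr, fun x => by simp only [hrx x]⟩
end

section
/- Let X be either K^ℕ with the Tychonoff product topology or c₀(ℕ,K) with its norm topology, and let T be a compact subset of X. Then there exists a homeomorphism η of X onto X such that π₁(η(T)) is a single point of K, where π₁ : X → K is the projection onto the first coordinate. -/
open Filter Topology Metric ZeroAtInftyContinuousMap
open scoped ZeroAtInfty

set_option linter.unusedSectionVars false
set_option maxHeartbeats 1000000

namespace Stmt10


variable {K : Type*} [NontriviallyNormedField K] [IsUltrametricDist K] [CompleteSpace K]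

lemma norm_sub_le_max' (a b : K) : ‖a - b‖ ≤ max ‖a‖ ‖b‖ := by
  simpa [sub_eq_add_neg] using IsUltrametricDist.norm_add_le_max a (-b)

variable {X : Type*} [TopologicalSpace X]

noncomputable def vseq (u : ℕ → X → K) (ε : ℕ → ℝ) : ℕ → X → K
  | 0 => u 0
  | (j+1) => fun y =>
      if ‖u (j+1) y - vseq u ε j y‖ ≤ ε (j+1) then u (j+1) y else vseq u ε j y

lemma vseq_succ (u : ℕ → X → K) (ε : ℕ → ℝ) (j : ℕ) (y : X) :
    vseq u ε (j+1) y =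
      if ‖u (j+1) y - vseq u ε j y‖ ≤ ε (j+1) then u (j+1) y else vseq u ε j y := rfl

lemma norm_vseq_succ_sub (u : ℕ → X → K) {ε : ℕ → ℝ} (hε : ∀ j, 0 < ε j) (j : ℕ) (y : X) :
    ‖vseq u ε (j+1) y - vseq u ε j y‖ ≤ ε (j+1) := by
  rw [vseq_succ]
  split
  · assumption
  · simpa using (hε (j+1)).le

lemma continuous_vseq {u : ℕ → X → K} {ε : ℕ → ℝ} (hu : ∀ j, Continuous (u j))
    (hε : ∀ j, 0 < ε j) : ∀ j, Continuous (vseq u ε j)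
  | 0 => hu 0
  | (j+1) => by
    have hv := continuous_vseq hu hε j
    have hc : Continuous (fun y => u (j+1) y - vseq u ε j y) := (hu _).sub hv
    have hclopen : IsClopen {y | ‖u (j+1) y - vseq u ε j y‖ ≤ ε (j+1)} := by
      have heq : {y | ‖u (j+1) y - vseq u ε j y‖ ≤ ε (j+1)} =
          (fun y => u (j+1) y - vseq u ε j y) ⁻¹' (Metric.closedBall 0 (ε (j+1))) := by
        ext y; simp [Metric.mem_closedBall, dist_zero_right]
      rw [heq]
      exact (IsUltrametricDist.isClopen_closedBall (0 : K) (hε (j+1)).ne').preimage hc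
    show Continuous fun y =>
      if ‖u (j+1) y - vseq u ε j y‖ ≤ ε (j+1) then u (j+1) y else vseq u ε j y
    exact Continuous.if (by simp [hclopen.frontier_eq]) (hu _) hv

lemma vseq_congr {u : ℕ → X → K} {ε : ℕ → ℝ} {y y' : X} (h : ∀ j, u j y = u j y') :
    ∀ j, vseq u ε j y = vseq u ε j y'
  | 0 => h 0
  | (j+1) => by rw [vseq_succ, vseq_succ, vseq_congr h j, h (j+1)]

lemma vseq_eq_of_good {u : ℕ → X → K} {ε : ℕ → ℝ} {y : X}
    (h : ∀ j, ‖u (j+1) y - u j y‖ ≤ ε (j+1)) : ∀ j, vseq u ε j y = u j y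
  | 0 => rfl
  | (j+1) => by
    rw [vseq_succ, vseq_eq_of_good h j, if_pos (h j)]

lemma norm_vseq_sub_le {u : ℕ → X → K} {ε : ℕ → ℝ} (hε : ∀ j, 0 < ε j) {γ : ℝ} (hγ : 0 ≤ γ)
    {j : ℕ} (h : ∀ i, j < i → ε i ≤ γ) :
    ∀ m, j ≤ m → ∀ y, ‖vseq u ε m y - vseq u ε j y‖ ≤ γ := by
  intro m
  induction m with
  | zero =>
    intro hm y
    obtain rfl := Nat.le_zero.mp hm
    simpa using hγ
  | succ m ih =>
    intro hm y
    rcases Nat.lt_or_ge j (m+1) with hlt | hge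
    · have hj : j ≤ m := Nat.lt_succ_iff.mp hlt
      have h1 : ‖vseq u ε (m+1) y - vseq u ε j y‖ ≤
          max ‖vseq u ε (m+1) y - vseq u ε m y‖ ‖vseq u ε m y - vseq u ε j y‖ := by
        have := IsUltrametricDist.norm_add_le_max (vseq u ε (m+1) y - vseq u ε m y)
          (vseq u ε m y - vseq u ε j y)
        simpa using this
      exact h1.trans (max_le ((norm_vseq_succ_sub u hε m y).trans (h _ hlt)) (ih hj y))
    · have hje : j = m + 1 := le_antisymm hm hge
      subst hje
      simpa using hγ

theorem exists_glimit (u : ℕ → X → K) (ε : ℕ → ℝ) (hu : ∀ j, Continuous (u j))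
    (hε : ∀ j, 0 < ε j) (hε0 : Tendsto ε atTop (nhds 0)) :
    ∃ g : X → K, Continuous g ∧
      (∀ y y', (∀ j, u j y = u j y') → g y = g y') ∧
      (∀ y, (∀ j, ‖u (j+1) y - u j y‖ ≤ ε (j+1)) →
        Tendsto (fun j => u j y) atTop (nhds (g y))) := by
  have tail : ∀ γ : ℝ, 0 < γ → ∃ J : ℕ, ∀ j, J ≤ j → ∀ m, j ≤ m → ∀ y,
      ‖vseq u ε m y - vseq u ε j y‖ ≤ γ := by
    intro γ hγ
    obtain ⟨J, hJ⟩ := (Metric.tendsto_atTop.mp hε0) γ hγ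
    refine ⟨J, fun j hj m hm y => norm_vseq_sub_le hε hγ.le (fun i hi => ?_) m hm y⟩
    have := hJ i (hj.trans hi.le)
    rw [Real.dist_eq, sub_zero] at this
    exact (le_abs_self _).trans this.le
  have hcauchy : ∀ y, CauchySeq (fun j => vseq u ε j y) := by
    intro y
    refine Metric.cauchySeq_iff'.mpr fun γ hγ => ?_
    obtain ⟨J, hJ⟩ := tail (γ/2) (half_pos hγ)
    refine ⟨J, fun n hn => ?_⟩
    rw [dist_eq_norm]
    exact lt_of_le_of_lt (hJ J le_rfl n hn y) (half_lt_self hγ)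
  choose g hg using fun y => cauchySeq_tendsto_of_complete (hcauchy y)
  have hunif : TendstoUniformly (fun j y => vseq u ε j y) g atTop := by
    refine Metric.tendstoUniformly_iff.mpr fun γ hγ => ?_
    obtain ⟨J, hJ⟩ := tail (γ/2) (half_pos hγ)
    filter_upwards [eventually_ge_atTop J] with j hj y
    have hlim : Tendsto (fun m => dist (vseq u ε m y) (vseq u ε j y)) atTop
        (nhds (dist (g y) (vseq u ε j y))) := (hg y).dist tendsto_const_nhds
    have hle : dist (g y) (vseq u ε j y) ≤ γ/2 := by
      refine le_of_tendsto hlim ?_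
      filter_upwards [eventually_ge_atTop j] with m hm
      rw [dist_eq_norm]
      exact hJ j hj m hm y
    calc dist (g y) (vseq u ε j y) ≤ γ/2 := hle
      _ < γ := half_lt_self hγ
  refine ⟨g, hunif.continuous (Frequently.of_forall (continuous_vseq hu hε)), ?_, ?_⟩
  · intro y y' h
    refine tendsto_nhds_unique ?_ (hg y')
    have : (fun j => vseq u ε j y) = fun j => vseq u ε j y' := funext (vseq_congr h)
    rw [← this]
    exact hg y
  · intro y h
    have : (fun j => u j y) = fun j => vseq u ε j y := funext fun j => (vseq_eq_of_good h j).symm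
    rw [this]
    exact hg y


theorem part1 (K : Type*) [NontriviallyNormedField K]
    [IsUltrametricDist K] [CompleteSpace K] :
    ∀ T : Set (ℕ → K), IsCompact T →
      ∃ η : (ℕ → K) ≃ₜ (ℕ → K), ∃ c : K, ∀ x ∈ T, η x 0 = c := by
  intro T hT
  -- coordinate bounds
  have hRex : ∀ i : ℕ, ∃ C : ℝ, ∀ x ∈ T, ‖x i‖ ≤ C := by
    intro i
    obtain ⟨C, hC⟩ := isBounded_iff_forall_norm_le.mp (hT.image (continuous_apply i)).isBounded
    exact ⟨C, fun x hx => hC _ (Set.mem_image_of_mem _ hx)⟩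
  choose R hR using hRex
  -- scaling factors
  have hlex : ∀ i : ℕ, ∃ l : K, R i * 2 ^ i < ‖l‖ ∧ 0 < ‖l‖ := by
    intro i
    obtain ⟨l, hl⟩ := NormedField.exists_lt_norm K (max (R i * 2 ^ i) 0)
    exact ⟨l, (le_max_left _ _).trans_lt hl, (le_max_right _ _).trans_lt hl⟩
  choose l hl hl0 using hlex
  have hlne : ∀ i, l i ≠ 0 := fun i => by
    intro h
    have := hl0 i
    rw [h, norm_zero] at this
    exact lt_irrefl _ this
  -- the error bound
  have hkey : ∀ i, ∀ x ∈ T, ‖x i / l i‖ < (1/2 : ℝ) ^ i := by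
    intro i x hx
    rw [norm_div]
    rw [div_lt_iff₀ (hl0 i)]
    refine lt_of_le_of_lt (hR i x hx) ?_
    rw [one_div, inv_pow, inv_mul_eq_div, lt_div_iff₀ (by positivity : (0:ℝ) < 2^i)]
    exact hl i
  -- the limit function g
  obtain ⟨g, hgc, hgcongr, hgtend⟩ := exists_glimit
    (u := fun j (y : ℕ → K) => y (j+1) / l (j+1)) (ε := fun j => (1/2 : ℝ) ^ j)
    (fun j => (continuous_apply (j+1)).div_const _)
    (fun j => by positivity)
    (tendsto_pow_atTop_nhds_zero_of_lt_one (by norm_num) (by norm_num))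
  -- the first shear Φ
  let Φ : (ℕ → K) ≃ₜ (ℕ → K) :=
  { toFun := fun x i => if i = 0 then x 0 else x i + l i * x 0
    invFun := fun y i => if i = 0 then y 0 else y i - l i * y 0
    left_inv := by
      intro x; funext i
      by_cases h : i = 0 <;> simp [h]
    right_inv := by
      intro y; funext i
      by_cases h : i = 0 <;> simp [h]
    continuous_toFun := continuous_pi fun i => by
      by_cases h : i = 0 <;> simp only [h, if_true, if_false, reduceIte]
      · exact continuous_apply 0
      · exact (continuous_apply i).add (continuous_const.mul (continuous_apply 0))
    continuous_invFun := continuous_pi fun i => by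
      by_cases h : i = 0 <;> simp only [h, if_true, if_false, reduceIte]
      · exact continuous_apply 0
      · exact (continuous_apply i).sub (continuous_const.mul (continuous_apply 0)) }
  -- g is unaffected by changes in coordinate 0
  have hgzero : ∀ (y y' : ℕ → K), (∀ j : ℕ, y (j+1) = y' (j+1)) → g y = g y' := by
    intro y y' h
    exact hgcongr y y' fun j => by rw [h j]
  -- the second shear σ
  let σ : (ℕ → K) ≃ₜ (ℕ → K) :=
  { toFun := fun y i => if i = 0 then y 0 - g y else y i
    invFun := fun z i => if i = 0 then z 0 + g z else z i
    left_inv := by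
      intro y; funext i
      have hg' : g (fun i => if i = 0 then y 0 - g y else y i) = g y :=
        hgzero _ _ fun j => by simp
      by_cases h : i = 0 <;> simp [h, hg']
    right_inv := by
      intro z; funext i
      have hg' : g (fun i => if i = 0 then z 0 + g z else z i) = g z :=
        hgzero _ _ fun j => by simp
      by_cases h : i = 0 <;> simp [h, hg']
    continuous_toFun := continuous_pi fun i => by
      by_cases h : i = 0 <;> simp only [h, if_true, if_false, reduceIte]
      · exact (continuous_apply 0).sub hgc
      · exact continuous_apply i
    continuous_invFun := continuous_pi fun i => by
      by_cases h : i = 0 <;> simp only [h, if_true, if_false, reduceIte]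
      · exact (continuous_apply 0).add hgc
      · exact continuous_apply i }
  refine ⟨Φ.trans σ, 0, fun x hx => ?_⟩
  -- compute g (Φ x) = x 0
  have hu : ∀ j : ℕ, (Φ x) (j+1) / l (j+1) = x 0 + x (j+1) / l (j+1) := by
    intro j
    show (x (j+1) + l (j+1) * x 0) / l (j+1) = _
    rw [add_div, mul_comm, mul_div_assoc, div_self (hlne (j+1)), mul_one, add_comm]
  have herr : ∀ j : ℕ, ‖x (j+1) / l (j+1)‖ < (1/2 : ℝ) ^ (j+1) := fun j => hkey (j+1) x hx
  have hgood : ∀ j : ℕ, ‖(Φ x) (j+1+1) / l (j+1+1) - (Φ x) (j+1) / l (j+1)‖ ≤ (1/2 : ℝ) ^ (j+1) := by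
    intro j
    rw [hu (j+1), hu j]
    have : x 0 + x (j+1+1) / l (j+1+1) - (x 0 + x (j+1) / l (j+1))
        = x (j+1+1) / l (j+1+1) - x (j+1) / l (j+1) := by ring
    rw [this]
    refine (norm_sub_le_max' _ _).trans (max_le ?_ ?_)
    · exact (herr (j+1)).le.trans (by
        apply pow_le_pow_of_le_one <;> norm_num)
    · exact (herr j).le
  have htend1 : Tendsto (fun j : ℕ => (Φ x) (j+1) / l (j+1)) atTop (nhds (g (Φ x))) :=
    hgtend (Φ x) hgood
  have htend2 : Tendsto (fun j : ℕ => (Φ x) (j+1) / l (j+1)) atTop (nhds (x 0)) := by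
    have h0 : Tendsto (fun j : ℕ => x (j+1) / l (j+1)) atTop (nhds 0) := by
      apply squeeze_zero_norm (fun j => (herr j).le)
      have := (tendsto_pow_atTop_nhds_zero_of_lt_one (by norm_num : (0:ℝ) ≤ 1/2)
        (by norm_num : (1/2:ℝ) < 1)).comp (tendsto_add_atTop_nat 1)
      exact this
    have := tendsto_const_nhds.add h0 (f := fun _ : ℕ => x 0) (x := atTop)
    rw [add_zero] at this
    exact this.congr fun j => (hu j).symm
  have hgx : g (Φ x) = x 0 := tendsto_nhds_unique htend1 htend2
  show σ (Φ x) 0 = 0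
  show (if (0:ℕ) = 0 then (Φ x) 0 - g (Φ x) else (Φ x) 0) = 0
  rw [if_pos rfl, hgx]
  show x 0 - x 0 = 0
  simp


theorem part2 (K : Type*) [NontriviallyNormedField K]
    [IsUltrametricDist K] [CompleteSpace K] :
    ∀ T : Set C₀(ℕ, K), IsCompact T →
      ∃ η : C₀(ℕ, K) ≃ₜ C₀(ℕ, K), ∃ c : K, ∀ x ∈ T, η x 0 = c := by
  intro T hT
  rcases T.eq_empty_or_nonempty with rfl | hne
  · exact ⟨Homeomorph.refl _, 0, fun x hx => absurd hx (Set.notMem_empty x)⟩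
  haveI : Nonempty ↥T := hne.to_subtype
  -- evaluation maps are continuous and bounded by the norm
  have hevle : ∀ (j : ℕ) (x : C₀(ℕ, K)), ‖x j‖ ≤ ‖x‖ := by
    intro j x
    have := x.toBCF.norm_coe_le_norm j
    simpa using this
  have hev : ∀ j : ℕ, Continuous fun x : C₀(ℕ, K) => x j := by
    intro j
    refine (LipschitzWith.of_dist_le_mul (K := 1) fun x y => ?_).continuous
    have h2 : dist (x.toBCF j) (y.toBCF j) ≤ dist x.toBCF y.toBCF :=
      BoundedContinuousFunction.dist_coe_le_dist j
    rw [dist_toBCF_eq_dist] at h2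
    simpa using h2
  -- uniform smallness of tails on the compact set T
  have hsmall : ∀ γ : ℝ, 0 < γ → ∃ N : ℕ, ∀ j, N ≤ j → ∀ x ∈ T, ‖x j‖ ≤ γ := by
    intro γ hγ
    obtain ⟨s, hsfin, hscov⟩ := (Metric.totallyBounded_iff).mp hT.totallyBounded γ hγ
    have hev' : ∀ᶠ j : ℕ in atTop, ∀ y ∈ s, ‖y j‖ < γ := by
      rw [eventually_all_finite hsfin]
      intro y hy
      have hy0 : Tendsto (fun j => y j) atTop (nhds 0) := by
        have := y.zero_at_infty'
        rwa [cocompact_eq_cofinite, Nat.cofinite_eq_atTop] at this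
      have h := hy0.norm
      rw [norm_zero] at h
      exact h.eventually (eventually_lt_nhds hγ)
    obtain ⟨N, hN⟩ := eventually_atTop.mp hev'
    refine ⟨N, fun j hj x hx => ?_⟩
    obtain ⟨y, hy, hxy⟩ := Set.mem_iUnion₂.mp (hscov hx)
    have h1 : ‖x j - y j‖ ≤ ‖x - y‖ := by
      have := hevle j (x - y)
      simpa [ZeroAtInftyContinuousMap.sub_apply] using this
    have h2 : ‖x - y‖ < γ := by
      have := mem_ball.mp hxy
      rwa [dist_eq_norm] at this
    have h3 : ‖x j‖ = ‖(x j - y j) + y j‖ := by ring_nf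
    rw [h3]
    refine (IsUltrametricDist.norm_add_le_max _ _).trans (max_le ?_ ?_)
    · exact (h1.trans h2.le)
    · exact (hN j hj y hy).le
  -- coordinatewise sup over T
  obtain ⟨CT, hCT⟩ := isBounded_iff_forall_norm_le.mp hT.isBounded
  set R : ℕ → ℝ := fun j => ⨆ x : T, ‖(x : C₀(ℕ, K)) j‖ with hRdef
  have hbdd : ∀ j : ℕ, BddAbove (Set.range fun x : T => ‖(x : C₀(ℕ, K)) j‖) := by
    intro j
    refine ⟨CT, fun r hr => ?_⟩
    obtain ⟨x, rfl⟩ := hr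
    exact (hevle j x).trans (hCT x x.2)
  have hRle : ∀ (j : ℕ) (x : C₀(ℕ, K)), x ∈ T → ‖x j‖ ≤ R j := fun j x hx =>
    le_ciSup (hbdd j) (⟨x, hx⟩ : T)
  have hR0 : ∀ j, 0 ≤ R j := by
    intro j
    obtain ⟨x, hx⟩ := hne
    exact (norm_nonneg _).trans (hRle j x hx)
  have hRtend : Tendsto R atTop (nhds 0) := by
    rw [Metric.tendsto_atTop]
    intro γ hγ
    obtain ⟨N, hN⟩ := hsmall (γ/2) (half_pos hγ)
    refine ⟨N, fun j hj => ?_⟩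
    rw [Real.dist_eq, sub_zero, abs_of_nonneg (hR0 j)]
    have : R j ≤ γ/2 := ciSup_le fun x => hN j hj x x.2
    linarith
  -- the scale sequence b
  set b : ℕ → ℝ := fun j => Real.sqrt (max (R j) ((1/2 : ℝ) ^ j)) with hbdef
  have hbpos : ∀ j, 0 < b j := fun j =>
    Real.sqrt_pos.mpr (lt_of_lt_of_le (by positivity) (le_max_right _ _))
  have hbsq : ∀ j, R j ≤ b j ^ 2 := by
    intro j
    rw [hbdef, Real.sq_sqrt (le_trans (hR0 j) (le_max_left _ _))]
    exact le_max_left _ _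
  have hbtend : Tendsto b atTop (nhds 0) := by
    have h1 : Tendsto (fun j : ℕ => max (R j) ((1/2 : ℝ) ^ j)) atTop (nhds 0) := by
      have := hRtend.max (tendsto_pow_atTop_nhds_zero_of_lt_one
        (by norm_num : (0:ℝ) ≤ 1/2) (by norm_num : (1/2:ℝ) < 1))
      simpa using this
    have h2 := (Real.continuous_sqrt.tendsto 0).comp h1
    rw [Real.sqrt_zero] at h2
    exact h2.congr fun j => rfl
  -- the pivot element and the scalars l j
  obtain ⟨π, hπ⟩ := NormedField.exists_one_lt_norm K
  have hπ0 : π ≠ 0 := by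
    intro h; rw [h, norm_zero] at hπ; linarith
  set c : ℝ := ‖π‖ with hcdef
  have hc0 : 0 < c := lt_trans one_pos hπ
  have hlex : ∀ j : ℕ, ∃ l : K, l ≠ 0 ∧ b j / c < ‖l‖ ∧ ‖l‖ ≤ b j := by
    intro j
    obtain ⟨n, hn1, hn2⟩ := exists_mem_Ico_zpow (hbpos j) hπ
    refine ⟨π ^ n, zpow_ne_zero n hπ0, ?_, ?_⟩
    · rw [norm_zpow, ← hcdef, div_lt_iff₀ hc0]
      calc b j < c ^ (n + 1) := hn2
        _ = c ^ n * c := by rw [zpow_add_one₀ hc0.ne']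
    · rw [norm_zpow]; exact hn1
  choose l hlne hllow hlub using hlex
  have hlpos : ∀ j, 0 < ‖l j‖ := fun j => lt_of_le_of_lt (by positivity) (hllow j)
  -- key estimate
  have hkey : ∀ j, ∀ x ∈ T, ‖x j / l j‖ ≤ c * b j := by
    intro j x hx
    rw [norm_div, div_le_iff₀ (hlpos j)]
    have h1 : c * b j * (b j / c) = b j ^ 2 := by
      field_simp
    calc ‖x j‖ ≤ R j := hRle j x hx
      _ ≤ b j ^ 2 := hbsq j
      _ = c * b j * (b j / c) := h1.symm
      _ ≤ c * b j * ‖l j‖ :=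
        mul_le_mul_of_nonneg_left (hllow j).le (by positivity)
  -- the limit function g
  obtain ⟨g, hgc, hgcongr, hgtend⟩ := exists_glimit
    (u := fun j (y : C₀(ℕ, K)) => y (j+1) / l (j+1))
    (ε := fun j => c * max (b j) (b (j+1)))
    (fun j => (hev (j+1)).div_const _)
    (fun j => by positivity)
    (by
      have h1 : Tendsto (fun j : ℕ => max (b j) (b (j+1))) atTop (nhds 0) := by
        have := hbtend.max (hbtend.comp (tendsto_add_atTop_nat 1))
        simpa using this
      have := h1.const_mul c
      simpa using this)
  -- the element Λ
  let Λ : C₀(ℕ, K) := ⟨⟨fun j => if j = 0 then 0 else l j, continuous_of_discreteTopology⟩, by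
    rw [cocompact_eq_cofinite, Nat.cofinite_eq_atTop]
    refine squeeze_zero_norm (fun j => ?_) hbtend
    show ‖if j = 0 then (0:K) else l j‖ ≤ b j
    by_cases h : j = 0
    · simp [h, (hbpos 0).le]
    · simp only [h, if_false]
      exact hlub j⟩
  have hΛ0 : Λ 0 = 0 := rfl
  have hΛs : ∀ j : ℕ, Λ (j+1) = l (j+1) := fun j => rfl
  -- the element e₀
  let e₀ : C₀(ℕ, K) := ⟨⟨fun j => if j = 0 then 1 else 0, continuous_of_discreteTopology⟩, by
    rw [cocompact_eq_cofinite, Nat.cofinite_eq_atTop]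
    refine Tendsto.congr' ?_ (tendsto_const_nhds (x := (0:K)))
    filter_upwards [eventually_ge_atTop 1] with j hj
    have : j ≠ 0 := by omega
    simp [this]⟩
  have he₀0 : e₀ 0 = 1 := rfl
  have he₀s : ∀ j : ℕ, e₀ (j+1) = 0 := fun j => rfl
  -- first shear Φ
  have hΦ0 : ∀ (x : C₀(ℕ, K)) (a : K), (x + a • Λ) 0 = x 0 := by
    intro x a
    rw [ZeroAtInftyContinuousMap.add_apply, ZeroAtInftyContinuousMap.smul_apply, hΛ0, smul_zero, add_zero]
  have hΦ0' : ∀ (x : C₀(ℕ, K)) (a : K), (x - a • Λ) 0 = x 0 := by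
    intro x a
    rw [ZeroAtInftyContinuousMap.sub_apply, ZeroAtInftyContinuousMap.smul_apply, hΛ0, smul_zero, sub_zero]
  let Φ : C₀(ℕ, K) ≃ₜ C₀(ℕ, K) :=
  { toFun := fun x => x + x 0 • Λ
    invFun := fun y => y - y 0 • Λ
    left_inv := by
      intro x
      show x + x 0 • Λ - ((x + x 0 • Λ) 0) • Λ = x
      rw [hΦ0]
      abel
    right_inv := by
      intro y
      show y - y 0 • Λ + ((y - y 0 • Λ) 0) • Λ = y
      rw [hΦ0']
      abel
    continuous_toFun := continuous_id.add ((hev 0).smul continuous_const)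
    continuous_invFun := continuous_id.sub ((hev 0).smul continuous_const) }
  -- g ignores coordinate 0
  have hgzero : ∀ y y' : C₀(ℕ, K), (∀ j : ℕ, y (j+1) = y' (j+1)) → g y = g y' := by
    intro y y' h
    exact hgcongr y y' fun j => by rw [h j]
  -- second shear σ
  have hσs : ∀ (y : C₀(ℕ, K)) (a : K) (j : ℕ), (y - a • e₀) (j+1) = y (j+1) := by
    intro y a j
    rw [ZeroAtInftyContinuousMap.sub_apply, ZeroAtInftyContinuousMap.smul_apply, he₀s, smul_zero, sub_zero]
  have hσs' : ∀ (y : C₀(ℕ, K)) (a : K) (j : ℕ), (y + a • e₀) (j+1) = y (j+1) := by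
    intro y a j
    rw [ZeroAtInftyContinuousMap.add_apply, ZeroAtInftyContinuousMap.smul_apply, he₀s, smul_zero, add_zero]
  let σ : C₀(ℕ, K) ≃ₜ C₀(ℕ, K) :=
  { toFun := fun y => y - g y • e₀
    invFun := fun z => z + g z • e₀
    left_inv := by
      intro y
      have hgy : g (y - g y • e₀) = g y := hgzero _ _ fun j => hσs y (g y) j
      show y - g y • e₀ + (g (y - g y • e₀)) • e₀ = y
      rw [hgy]
      abel
    right_inv := by
      intro z
      have hgz : g (z + g z • e₀) = g z := hgzero _ _ fun j => hσs' z (g z) j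
      show z + g z • e₀ - (g (z + g z • e₀)) • e₀ = z
      rw [hgz]
      abel
    continuous_toFun := continuous_id.sub (hgc.smul continuous_const)
    continuous_invFun := continuous_id.add (hgc.smul continuous_const) }
  refine ⟨Φ.trans σ, 0, fun x hx => ?_⟩
  -- compute g (Φ x) = x 0
  have hu : ∀ j : ℕ, (Φ.toFun x) (j+1) / l (j+1) = x 0 + x (j+1) / l (j+1) := by
    intro j
    show (x + x 0 • Λ) (j+1) / l (j+1) = _
    rw [ZeroAtInftyContinuousMap.add_apply, ZeroAtInftyContinuousMap.smul_apply, hΛs, smul_eq_mul, add_div, mul_div_assoc,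
      div_self (hlne (j+1)), mul_one, add_comm]
  have herr : ∀ j : ℕ, ‖x (j+1) / l (j+1)‖ ≤ c * b (j+1) := fun j => hkey (j+1) x hx
  have hgood : ∀ j : ℕ, ‖(Φ.toFun x) (j+1+1) / l (j+1+1) - (Φ.toFun x) (j+1) / l (j+1)‖ ≤
      c * max (b (j+1)) (b (j+1+1)) := by
    intro j
    rw [hu (j+1), hu j]
    have heq : x 0 + x (j+1+1) / l (j+1+1) - (x 0 + x (j+1) / l (j+1))
        = x (j+1+1) / l (j+1+1) - x (j+1) / l (j+1) := by ring
    rw [heq]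
    refine (norm_sub_le_max' _ _).trans (max_le ?_ ?_)
    · exact (herr (j+1)).trans (mul_le_mul_of_nonneg_left (le_max_right _ _) hc0.le)
    · exact (herr j).trans (mul_le_mul_of_nonneg_left (le_max_left _ _) hc0.le)
  have htend1 : Tendsto (fun j : ℕ => (Φ.toFun x) (j+1) / l (j+1)) atTop
      (nhds (g (Φ.toFun x))) := hgtend (Φ.toFun x) hgood
  have htend2 : Tendsto (fun j : ℕ => (Φ.toFun x) (j+1) / l (j+1)) atTop (nhds (x 0)) := by
    have h0 : Tendsto (fun j : ℕ => x (j+1) / l (j+1)) atTop (nhds 0) := by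
      refine squeeze_zero_norm herr ?_
      have h1 : Tendsto (fun j : ℕ => b (j+1)) atTop (nhds 0) :=
        hbtend.comp (tendsto_add_atTop_nat 1)
      have := h1.const_mul c
      simpa using this
    have := tendsto_const_nhds.add h0 (f := fun _ : ℕ => x 0) (x := atTop)
    rw [add_zero] at this
    exact this.congr fun j => (hu j).symm
  have hgx : g (Φ.toFun x) = x 0 := tendsto_nhds_unique htend1 htend2
  show (Φ.toFun x - g (Φ.toFun x) • e₀) 0 = 0
  rw [ZeroAtInftyContinuousMap.sub_apply, ZeroAtInftyContinuousMap.smul_apply, he₀0, smul_eq_mul, mul_one, hgx, hΦ0]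
  simp


end Stmt10

/-- Let `K` be a locally compact field with a complete
non-Archimedean multiplicative norm whose value group is nontrivial.  Let `X` be either
`K^ℕ` with the Tychonoff product topology or `c₀(ℕ, K)` with its norm topology, and let
`T` be a compact subset of `X`.  Then there is a homeomorphism `η` of `X` onto itself
such that the first-coordinate projection `π₁` maps `η(T)` to a single point of `K`. -/
theorem exists_homeomorph_compact_first_coord_const (K : Type*) [NontriviallyNormedField K]
    [IsUltrametricDist K] [CompleteSpace K] [LocallyCompactSpace K] :
    (∀ T : Set (ℕ → K), IsCompact T →
      ∃ η : (ℕ → K) ≃ₜ (ℕ → K), ∃ c : K, ∀ x ∈ T, η x 0 = c) ∧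
    (∀ T : Set C₀(ℕ, K), IsCompact T →
      ∃ η : C₀(ℕ, K) ≃ₜ C₀(ℕ, K), ∃ c : K, ∀ x ∈ T, η x 0 = c) :=
  ⟨Stmt10.part1 K, Stmt10.part2 K⟩
end

section
/- If {C_j : j ∈ ℕ} is a countable family of compact subsets of K^ℕ, then K^ℕ \ ⋃_{j=1}^∞ C_j, with the subspace topology, is homeomorphic to K^ℕ. -/
open Set Metric Topology Function Filter

/-- Every compact subset of `K^ℕ` has empty interior. -/
theorem AUX.compact_empty_interior (K : Type*) [NontriviallyNormedField K]
    (S : Set (ℕ → K)) (hS : IsCompact S) : interior S = ∅ := by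
  by_contra h
  obtain ⟨x, hx⟩ := nonempty_iff_ne_empty.2 h
  obtain ⟨I, u, hu, hsub⟩ := isOpen_pi_iff.1 isOpen_interior x hx
  obtain ⟨n, hn⟩ : ∃ n : ℕ, n ∉ I := Infinite.exists_notMem_finset I
  have hmap : ∀ y : K, Function.update x n y ∈ S := by
    intro y
    refine interior_subset (hsub ?_)
    intro i hi
    rw [Function.update_of_ne (by rintro rfl; exact hn hi)]
    exact (hu i hi).2
  have hKcpt : IsCompact (univ : Set K) := by
    have himg : IsCompact ((fun z : ℕ → K => z n) '' S) := hS.image (continuous_apply n)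
    have : (univ : Set K) ⊆ (fun z : ℕ → K => z n) '' S := by
      intro y _
      exact ⟨Function.update x n y, hmap y, by simp⟩
    rw [← univ_subset_iff.1 this]
    exact himg
  obtain ⟨c, hc⟩ := NormedField.exists_one_lt_norm K
  obtain ⟨r, hr⟩ := hKcpt.isBounded.subset_closedBall 0
  obtain ⟨m, hm⟩ := pow_unbounded_of_one_lt r hc
  have : ‖c ^ m‖ ≤ r := by
    have := hr (mem_univ (c ^ m))
    simpa [Metric.mem_closedBall, dist_zero_right] using this
  rw [norm_pow] at this
  linarith

/-- No nonempty open subset of `K^ℕ` is contained in a countable union of compacts. -/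
theorem AUX.not_subset_iUnion_compact (K : Type*) [NontriviallyNormedField K]
    [CompleteSpace K] [LocallyCompactSpace K]
    (W : Set (ℕ → K)) (hW : IsOpen W) (hWne : W.Nonempty)
    (D : ℕ → Set (ℕ → K)) (hD : ∀ j, IsCompact (D j)) : ¬ W ⊆ ⋃ j, D j := by
  haveI : ProperSpace K := .of_locallyCompactSpace K
  haveI : PolishSpace (ℕ → K) := inferInstance
  letI := TopologicalSpace.upgradeIsCompletelyMetrizable (ℕ → K)
  intro hsub
  have hdense : Dense (⋂ j, (D j)ᶜ) :=
    dense_iInter_of_isOpen (fun j => (hD j).isClosed.isOpen_compl)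
      (fun j => interior_eq_empty_iff_dense_compl.1 (AUX.compact_empty_interior K _ (hD j)))
  obtain ⟨y, hy, hyW⟩ := hdense.exists_mem_open hW hWne
  obtain ⟨j, hj⟩ := mem_iUnion.1 (hsub hyW)
  exact (mem_iInter.1 hy j) hj

/-- A countable intersection of open subsets of a Polish space is Polish. -/
theorem AUX.polish_iInter_opens {X : Type*} [TopologicalSpace X] [PolishSpace X]
    {s : ℕ → Set X} (hs : ∀ n, IsOpen (s n)) : PolishSpace ↥(⋂ n, s n) := by
  haveI : ∀ n, PolishSpace ↥(s n) := fun n => (hs n).polishSpace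
  let f : ↥(⋂ n, s n) → ∀ n, ↥(s n) := fun x n => ⟨x.1, mem_iInter.1 x.2 n⟩
  have hcont : Continuous f := continuous_pi fun n => Continuous.subtype_mk continuous_subtype_val _
  have hcomp : (fun y : ∀ n, ↥(s n) => (y 0).1) ∘ f = Subtype.val := rfl
  have hind : Topology.IsInducing f :=
    Topology.IsInducing.of_comp hcont ((continuous_apply 0).subtype_val)
      (by rw [hcomp]; exact Topology.IsInducing.subtypeVal)
  have hinj : Function.Injective f := by
    intro a b hab
    ext1
    exact congrArg (fun y => (y 0).1) hab
  have hrange : range f = {y : ∀ n, ↥(s n) | ∀ n, (y n).1 = (y 0).1} := by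
    ext y
    constructor
    · rintro ⟨x, rfl⟩
      intro n
      rfl
    · intro hy
      have hmem : (y 0).1 ∈ ⋂ n, s n := by
        rw [mem_iInter]
        intro n
        rw [← hy n]
        exact (y n).2
      refine ⟨⟨(y 0).1, hmem⟩, ?_⟩
      funext n
      ext
      exact (hy n).symm
  have hclosed : IsClosed (range f) := by
    rw [hrange]
    have : {y : ∀ n, ↥(s n) | ∀ n, (y n).1 = (y 0).1} = ⋂ n, {y | (y n).1 = (y 0).1} := by
      ext; simp
    rw [this]
    exact isClosed_iInter fun n =>
      isClosed_eq ((continuous_apply n).subtype_val) ((continuous_apply 0).subtype_val)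
  have hemb : Topology.IsClosedEmbedding f := ⟨⟨hind, hinj⟩, hclosed⟩
  exact hemb.polishSpace

/-- In a complete second-countable metric space with a clopen basis in which compact sets have
empty interior, every nonempty clopen set can be partitioned into countably infinitely many
nonempty clopen sets of diameter at most `ε`. -/
theorem AUX.clopen_partition {X : Type*} [MetricSpace X] [CompleteSpace X]
    [SecondCountableTopology X]
    (hbasis : ∀ x : X, ∀ V : Set X, IsOpen V → x ∈ V → ∃ D : Set X, IsClopen D ∧ x ∈ D ∧ D ⊆ V)
    (hcpt : ∀ S : Set X, IsCompact S → interior S = ∅) :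
    ∀ C : Set X, IsClopen C → C.Nonempty → ∀ ε : ℝ, 0 < ε →
    ∃ f : ℕ → Set X, (∀ n, IsClopen (f n)) ∧ (∀ n, (f n).Nonempty) ∧
      Pairwise (Function.onFun Disjoint f) ∧ (⋃ n, f n) = C ∧
      ∀ n, EMetric.diam (f n) ≤ ENNReal.ofReal ε := by
  intro C hC hne ε hε
  classical
  have hncpt : ¬ IsCompact C := by
    intro h
    have h2 := hcpt C h
    rw [hC.isOpen.interior_eq] at h2
    exact hne.ne_empty h2
  have htb : ¬ TotallyBounded C := fun h =>
    hncpt (TotallyBounded.isCompact_of_isClosed h hC.isClosed)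
  rw [Metric.totallyBounded_iff] at htb
  push_neg at htb
  obtain ⟨ε₀, hε₀, hnet⟩ := htb
  set δ : ℝ := min (ε / 2) (ε₀ / 3) with hδdef
  have hδpos : 0 < δ := lt_min (by linarith) (by linarith)
  have hδε : 2 * δ ≤ ε := by
    have := min_le_left (ε / 2) (ε₀ / 3)
    simp only [← hδdef] at this
    linarith
  have hδε₀ : 2 * δ < ε₀ := by
    have := min_le_right (ε / 2) (ε₀ / 3)
    simp only [← hδdef] at this
    linarith
  -- clopen neighborhoods of points of C
  have hD : ∀ x : ↥C, ∃ D : Set X, IsClopen D ∧ (x : X) ∈ D ∧ D ⊆ C ∩ ball (x : X) δ :=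
    fun x => hbasis x (C ∩ ball (x : X) δ) (hC.isOpen.inter isOpen_ball)
      ⟨x.2, mem_ball_self hδpos⟩
  choose D hDclopen hDmem hDsub using hD
  obtain ⟨T, hTc, hTU⟩ :=
    TopologicalSpace.isOpen_iUnion_countable D (fun x => (hDclopen x).isOpen)
  have hUD : ⋃ x, D x = C := by
    apply Subset.antisymm
    · exact iUnion_subset fun x => (hDsub x).trans inter_subset_left
    · intro y hy
      exact mem_iUnion.2 ⟨⟨y, hy⟩, hDmem _⟩
  have hTne : T.Nonempty := by
    rw [nonempty_iff_ne_empty]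
    intro h
    rw [h] at hTU
    simp only [mem_empty_iff_false, iUnion_of_empty, iUnion_empty] at hTU
    rw [hUD] at hTU
    exact hne.ne_empty hTU.symm
  obtain ⟨g, hg⟩ := hTc.exists_eq_range hTne
  set B : ℕ → Set X := fun n => D (g n) with hBdef
  have hUB : ⋃ n, B n = C := by
    rw [← hUD, ← hTU, hg, biUnion_range]
  have hclB : ∀ n, IsClopen (B n) := fun n => hDclopen _
  have hBsmall : ∀ n, ∀ x ∈ B n, ∀ y ∈ B n, dist x y < 2 * δ := by
    intro n x hx y hy
    have hx' : dist x ((g n : X)) < δ := mem_ball.1 ((hDsub (g n)) hx).2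
    have hy' : dist y ((g n : X)) < δ := mem_ball.1 ((hDsub (g n)) hy).2
    calc dist x y ≤ dist x (g n : X) + dist y (g n : X) := dist_triangle_right _ _ _
    _ < 2 * δ := by linarith
  -- partialSups are clopen
  have hps : ∀ n, IsClopen ((partialSups B) n) := by
    intro n
    induction n with
    | zero => simpa using hclB 0
    | succ n ih =>
      rw [← Order.succ_eq_add_one, partialSups_succ]
      exact ih.union (hclB _)
  have hclE : ∀ n, IsClopen (disjointed B n) := by
    intro n
    cases n with
    | zero => rw [disjointed_zero]; exact hclB 0
    | succ n => rw [← Order.succ_eq_add_one, disjointed_succ _ (not_isMax n)]; exact (hclB _).diff (hps n)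
  -- the set of indices with nonempty pieces is infinite
  set p : ℕ → Prop := fun n => (disjointed B n).Nonempty with hpdef
  have hSinf : {n | p n}.Infinite := by
    by_contra hinf
    rw [Set.not_infinite] at hinf
    have hfin := hinf
    set pt : ℕ → X := fun n => if h : (disjointed B n).Nonempty then h.some else hne.some with hptdef
    have htfin : (pt '' {n | p n}).Finite := hfin.image pt
    refine hnet (pt '' {n | p n}) htfin ?_
    intro y hy
    rw [← hUB, ← iUnion_disjointed] at hy
    obtain ⟨n, hn⟩ := mem_iUnion.1 hy
    have hnp : p n := ⟨y, hn⟩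
    refine mem_biUnion (mem_image_of_mem pt hnp) ?_
    have hptn : pt n ∈ disjointed B n := by
      rw [hptdef]
      simp only [dif_pos hnp]
      rw [dif_pos (show (disjointed B n).Nonempty from hnp)]
      exact hnp.some_mem
    have : dist y (pt n) < 2 * δ :=
      hBsmall n y (disjointed_subset B n hn) (pt n) (disjointed_subset B n hptn)
    rw [mem_ball]
    linarith
  refine ⟨fun k => disjointed B (Nat.nth p k), fun k => hclE _,
    fun k => Nat.nth_mem_of_infinite hSinf k, ?_, ?_, ?_⟩
  · intro i j hij
    exact disjoint_disjointed B (Nat.nth_injective hSinf |>.ne hij)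
  · apply Subset.antisymm
    · exact iUnion_subset fun k => (disjointed_subset B _).trans
        (by rw [← hUB]; exact subset_iUnion B _)
    · intro y hy
      rw [← hUB, ← iUnion_disjointed] at hy
      obtain ⟨n, hn⟩ := mem_iUnion.1 hy
      have hnp : p n := ⟨y, hn⟩
      obtain ⟨k, hk⟩ : n ∈ range (Nat.nth p) := by
        rw [Nat.range_nth_of_infinite hSinf]
        exact hnp
      exact mem_iUnion.2 ⟨k, by rw [hk]; exact hn⟩
  · intro k
    apply EMetric.diam_le
    intro x hx y hy
    rw [edist_dist]
    refine ENNReal.ofReal_le_ofReal ?_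
    have := hBsmall _ x (disjointed_subset B _ hx) y (disjointed_subset B _ hy)
    linarith

/-- Alexandrov–Urysohn: a nonempty Polish space with a clopen basis in which every compact
set has empty interior is homeomorphic to the Baire space `ℕ → ℕ`. -/
theorem AUX.au_homeo {X : Type*} [TopologicalSpace X] [PolishSpace X] [Nonempty X]
    (hbasis : ∀ x : X, ∀ V : Set X, IsOpen V → x ∈ V → ∃ D : Set X, IsClopen D ∧ x ∈ D ∧ D ⊆ V)
    (hcpt : ∀ S : Set X, IsCompact S → interior S = ∅) :
    Nonempty (X ≃ₜ (ℕ → ℕ)) := by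
  classical
  letI := TopologicalSpace.upgradeIsCompletelyMetrizable X
  choose! f hf using AUX.clopen_partition hbasis hcpt
  let A : List ℕ → Set X := fun l =>
    List.rec Set.univ (fun a l ih => f ih ((1 / 2 : ℝ) ^ (l.length + 1)) a) l
  have hAcons : ∀ (a : ℕ) (l : List ℕ),
      A (a :: l) = f (A l) ((1 / 2 : ℝ) ^ (l.length + 1)) a := fun a l => rfl
  have hpow : ∀ n : ℕ, (0 : ℝ) < (1 / 2) ^ n := fun n => by positivity
  have hinv : ∀ l, IsClopen (A l) ∧ (A l).Nonempty := by
    intro l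
    induction l with
    | nil => exact ⟨isClopen_univ, univ_nonempty⟩
    | cons a l ih =>
      obtain ⟨h1, h2, -, -, -⟩ := hf (A l) ih.1 ih.2 _ (hpow (l.length + 1))
      rw [hAcons]
      exact ⟨h1 a, h2 a⟩
  have hUnionChildren : ∀ l, (⋃ n, A (n :: l)) = A l := by
    intro l
    have h := (hf (A l) (hinv l).1 (hinv l).2 _ (hpow (l.length + 1))).2.2.2.1
    rw [← h]
  have hchild : ∀ (a : ℕ) (l : List ℕ), A (a :: l) ⊆ A l := fun a l =>
    (hUnionChildren l) ▸ subset_iUnion (fun n => A (n :: l)) a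
  have hdisj : CantorScheme.Disjoint A := by
    intro l a b hab
    have h := (hf (A l) (hinv l).1 (hinv l).2 _ (hpow (l.length + 1))).2.2.1 hab
    simpa only [Function.onFun, hAcons] using h
  have hanti : CantorScheme.ClosureAntitone A := by
    intro l a
    rw [(hinv (a :: l)).1.isClosed.closure_eq]
    exact hchild a l
  have hdiam : ∀ l, l ≠ [] → EMetric.diam (A l) ≤ ENNReal.ofReal ((1 / 2 : ℝ) ^ l.length) := by
    intro l hl
    cases l with
    | nil => exact absurd rfl hl
    | cons a l =>
      have h := (hf (A l) (hinv l).1 (hinv l).2 _ (hpow (l.length + 1))).2.2.2.2 a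
      rw [hAcons]
      simpa [List.length_cons] using h
  have hVD : CantorScheme.VanishingDiam A := by
    intro x
    have hb : ∀ n : ℕ, 1 ≤ n →
        EMetric.diam (A (PiNat.res x n)) ≤ ENNReal.ofReal ((1 / 2 : ℝ) ^ n) := by
      intro n hn
      have hlen := PiNat.res_length x n
      have hne' : PiNat.res x n ≠ [] := by
        intro h
        rw [h] at hlen
        simp at hlen
        omega
      simpa [hlen] using hdiam _ hne'
    have h0 : Tendsto (fun n : ℕ => ENNReal.ofReal ((1 / 2 : ℝ) ^ n)) atTop (nhds 0) := by
      have h1 : Tendsto (fun n : ℕ => (1 / 2 : ℝ) ^ n) atTop (nhds 0) :=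
        tendsto_pow_atTop_nhds_zero_of_lt_one (by norm_num) (by norm_num)
      simpa using ENNReal.tendsto_ofReal h1
    exact tendsto_of_tendsto_of_tendsto_of_le_of_le' tendsto_const_nhds h0
      (Eventually.of_forall fun n => zero_le)
      (eventually_atTop.2 ⟨1, fun n hn => hb n hn⟩)
  have htotal : (CantorScheme.inducedMap A).1 = Set.univ :=
    CantorScheme.ClosureAntitone.map_of_vanishingDiam hVD hanti fun l => (hinv l).2
  set σ := (CantorScheme.inducedMap A).2 with hσ
  -- surjectivity
  have hsurj : ∀ x : X, ∃ b : (CantorScheme.inducedMap A).1, σ b = x := by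
    intro x
    have hstep : ∀ l : List ℕ, x ∈ A l → ∃ a, x ∈ A (a :: l) := by
      intro l hl
      have : x ∈ ⋃ n, A (n :: l) := by rw [hUnionChildren l]; exact hl
      exact mem_iUnion.1 this
    let L : ℕ → {l : List ℕ // x ∈ A l} := fun n =>
      Nat.rec ⟨[], mem_univ x⟩
        (fun _ ih => ⟨(hstep ih.1 ih.2).choose :: ih.1, (hstep ih.1 ih.2).choose_spec⟩) n
    let b : ℕ → ℕ := fun n => ((L (n + 1)).1).headI
    have hres : ∀ n, PiNat.res b n = (L n).1 := by
      intro n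
      induction n with
      | zero => rfl
      | succ n ih =>
        rw [PiNat.res_succ, ih]
        rfl
    have hmem : b ∈ (CantorScheme.inducedMap A).1 := by
      refine ⟨x, ?_⟩
      rw [mem_iInter]
      intro n
      rw [hres n]
      exact (L n).2
    refine ⟨⟨b, hmem⟩, ?_⟩
    by_contra hne'
    have hd : 0 < dist (σ ⟨b, hmem⟩) x := dist_pos.2 hne'
    obtain ⟨n, hn⟩ := hVD.dist_lt _ hd b
    refine absurd (hn _ (CantorScheme.map_mem ⟨b, hmem⟩ n) x ?_) (lt_irrefl _)
    rw [hres n]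
    exact (L n).2
  -- separation
  have hsep : ∀ (b c : ℕ → ℕ) (n : ℕ) (y : X),
      y ∈ A (PiNat.res b n) → y ∈ A (PiNat.res c n) → PiNat.res b n = PiNat.res c n := by
    intro b c n
    induction n with
    | zero => intro y _ _; rfl
    | succ n ih =>
      intro y hb hc
      have hb' : y ∈ A (PiNat.res b n) := by
        rw [PiNat.res_succ] at hb
        exact hchild _ _ hb
      have hc' : y ∈ A (PiNat.res c n) := by
        rw [PiNat.res_succ] at hc
        exact hchild _ _ hc
      have hres : PiNat.res b n = PiNat.res c n := ih y hb' hc'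
      have hbc : b n = c n := by
        by_contra hne'
        have hd := hdisj (PiNat.res b n) hne'
        rw [PiNat.res_succ] at hb hc
        rw [← hres] at hc
        exact (Set.disjoint_left.1 hd hb hc).elim
      rw [PiNat.res_succ, PiNat.res_succ, hres, hbc]
  -- open map
  have hopen : IsOpenMap σ := by
    intro O hO
    rw [isOpen_iff_forall_mem_open]
    rintro x ⟨⟨b, hb⟩, hbO, rfl⟩
    obtain ⟨O', hO', hOeq⟩ := isOpen_induced_iff.1 hO
    have hbO' : b ∈ O' := by
      rw [← hOeq] at hbO
      exact hbO
    obtain ⟨s, ⟨y, n, rfl⟩, hbs, hsub⟩ :=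
      (PiNat.isTopologicalBasis_cylinders (fun _ : ℕ => ℕ)).exists_subset_of_mem_open hbO' hO'
    have hcyl : PiNat.cylinder b n = PiNat.cylinder y n := PiNat.mem_cylinder_iff_eq.1 hbs
    refine ⟨A (PiNat.res b n), ?_, (hinv _).1.isOpen, CantorScheme.map_mem ⟨b, hb⟩ n⟩
    intro z hz
    obtain ⟨⟨c, hc⟩, rfl⟩ := hsurj z
    have hzc : σ ⟨c, hc⟩ ∈ A (PiNat.res c n) := CantorScheme.map_mem ⟨c, hc⟩ n
    have hresfix : PiNat.res c n = PiNat.res b n := hsep c b n _ hzc hz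
    have hcmem : c ∈ PiNat.cylinder b n := by
      rw [PiNat.cylinder_eq_res, mem_setOf_eq]
      exact hresfix
    refine ⟨⟨c, hc⟩, ?_, rfl⟩
    rw [← hOeq]
    exact hsub (hcyl ▸ hcmem)
  have hbij : Function.Bijective σ := ⟨hdisj.map_injective, fun x => hsurj x⟩
  let E := Equiv.ofBijective σ hbij
  have hcont : Continuous σ := hVD.map_continuous
  let H : ↥(CantorScheme.inducedMap A).1 ≃ₜ X :=
    E.toHomeomorphOfContinuousOpen hcont hopen
  exact ⟨H.symm.trans ((Homeomorph.setCongr htotal).trans (Homeomorph.Set.univ _))⟩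

/-- Let `K` be a locally compact field with a complete
non-Archimedean multiplicative norm whose value group is nontrivial.  If `{C_j}` is a
countable family of compact subsets of `K^ℕ` (with the Tychonoff product topology),
then `K^ℕ \ ⋃_j C_j`, with the subspace topology, is homeomorphic to `K^ℕ`. -/
theorem pi_sdiff_countable_compacts_homeomorph (K : Type*) [NontriviallyNormedField K]
    [IsUltrametricDist K] [CompleteSpace K] [LocallyCompactSpace K]
    (C : ℕ → Set (ℕ → K)) (hC : ∀ j, IsCompact (C j)) :
    Nonempty (↥((⋃ j, C j)ᶜ) ≃ₜ (ℕ → K)) := by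
  classical
  haveI : ProperSpace K := .of_locallyCompactSpace K
  haveI : PolishSpace (ℕ → K) := inferInstance
  -- clopen basis for `K^ℕ`
  have hbasisK : ∀ x : ℕ → K, ∀ V : Set (ℕ → K), IsOpen V → x ∈ V →
      ∃ D, IsClopen D ∧ x ∈ D ∧ D ⊆ V := by
    intro x V hV hx
    obtain ⟨I, u, hu, hsub⟩ := isOpen_pi_iff.1 hV x hx
    have hr : ∀ i : ℕ, i ∈ I → ∃ r : ℝ, 0 < r ∧ ball (x i) r ⊆ u i := fun i hi =>
      Metric.isOpen_iff.1 (hu i hi).1 (x i) (hu i hi).2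
    choose r hrpos hrsub using hr
    set g : ℕ → Set K := fun i => if h : i ∈ I then ball (x i) (r i h) else univ with hgdef
    refine ⟨(I : Set ℕ).pi g, ⟨?_, ?_⟩, ?_, ?_⟩
    · apply isClosed_set_pi
      intro i hi
      have hi' : i ∈ I := hi
      rw [hgdef]
      simp only [dif_pos hi']
      exact (IsUltrametricDist.isClosed_ball (x i) (r i hi'))
    · apply isOpen_set_pi I.finite_toSet
      intro i hi
      have hi' : i ∈ I := hi
      rw [hgdef]
      simp only [dif_pos hi']
      exact isOpen_ball
    · intro i hi
      have hi' : i ∈ I := hi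
      rw [hgdef]
      simp only [dif_pos hi']
      exact mem_ball_self (hrpos i hi')
    · intro y hy
      apply hsub
      intro i hi
      have hi' : i ∈ I := hi
      have := hy i hi
      rw [hgdef] at this
      simp only [dif_pos hi'] at this
      exact hrsub i hi' this
  have hcptK : ∀ S : Set (ℕ → K), IsCompact S → interior S = ∅ := fun S hS =>
    AUX.compact_empty_interior K S hS
  haveI : Nonempty (ℕ → K) := ⟨fun _ => 0⟩
  obtain ⟨e1⟩ := AUX.au_homeo hbasisK hcptK
  -- the complement
  have hUne : ((⋃ j, C j)ᶜ : Set (ℕ → K)).Nonempty := by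
    have h := AUX.not_subset_iUnion_compact K univ isOpen_univ ⟨fun _ => 0, mem_univ _⟩ C hC
    obtain ⟨x, -, hx⟩ := not_subset.1 h
    exact ⟨x, hx⟩
  haveI : Nonempty ↥((⋃ j, C j)ᶜ) := hUne.to_subtype
  haveI : PolishSpace ↥((⋃ j, C j)ᶜ) := by
    rw [Set.compl_iUnion]
    exact AUX.polish_iInter_opens fun j => (hC j).isClosed.isOpen_compl
  have hbasisU : ∀ x : ↥((⋃ j, C j)ᶜ), ∀ V : Set ↥((⋃ j, C j)ᶜ), IsOpen V → x ∈ V →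
      ∃ D, IsClopen D ∧ x ∈ D ∧ D ⊆ V := by
    intro x V hV hx
    obtain ⟨W, hW, hWeq⟩ := isOpen_induced_iff.1 hV
    have hxW : (x : ℕ → K) ∈ W := by
      rw [← hWeq] at hx
      exact hx
    obtain ⟨D, hD, hxD, hDW⟩ := hbasisK x.1 W hW hxW
    refine ⟨Subtype.val ⁻¹' D, hD.preimage continuous_subtype_val, hxD, ?_⟩
    rw [← hWeq]
    exact preimage_mono hDW
  have hcptU : ∀ S : Set ↥((⋃ j, C j)ᶜ), IsCompact S → interior S = ∅ := by
    intro S hS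
    by_contra h
    obtain ⟨x, hx⟩ := nonempty_iff_ne_empty.2 h
    obtain ⟨W, hW, hWeq⟩ := isOpen_induced_iff.1 (isOpen_interior (s := S))
    have hxW : (x : ℕ → K) ∈ W := by
      rw [← hWeq] at hx
      exact hx
    set D' : ℕ → Set (ℕ → K) := fun j => Nat.casesOn j (Subtype.val '' S) C with hD'def
    have hD' : ∀ j, IsCompact (D' j) := by
      intro j
      cases j with
      | zero => exact hS.image continuous_subtype_val
      | succ j => exact hC j
    refine AUX.not_subset_iUnion_compact K W hW ⟨x, hxW⟩ D' hD' ?_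
    intro y hy
    by_cases hyU : y ∈ ⋃ j, C j
    · obtain ⟨j, hj⟩ := mem_iUnion.1 hyU
      exact mem_iUnion.2 ⟨j + 1, hj⟩
    · have hyU' : y ∈ (⋃ j, C j)ᶜ := hyU
      have hmem : (⟨y, hyU'⟩ : ↥((⋃ j, C j)ᶜ)) ∈ interior S := by
        rw [← hWeq]
        exact hy
      exact mem_iUnion.2 ⟨0, ⟨⟨y, hyU'⟩, interior_subset hmem, rfl⟩⟩
  obtain ⟨e2⟩ := AUX.au_homeo hbasisU hcptU
  exact ⟨e2.trans e1.symm⟩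
end

section
/- Let U be an open subset of c₀ and let K_j be a compact subset of U for each j ∈ ℕ. Then there exists a homeomorphism g of c₀ \ ⋃_{j=1}^∞ K_j onto c₀ such that g restricted to c₀ \ U is the identity. -/
open scoped ZeroAtInfty
open Metric Set Filter Topology

namespace NAAnderson

variable {X : Type*} [MetricSpace X]

lemma dist_eq_of_dist_lt [IsUltrametricDist X] {x y z : X} (h : dist x y < dist x z) :
    dist y z = dist x z := by
  have h1 : dist y z ≤ max (dist y x) (dist x z) := IsUltrametricDist.dist_triangle_max y x z
  have h2 : dist x z ≤ max (dist x y) (dist y z) := IsUltrametricDist.dist_triangle_max x y z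
  rw [dist_comm y x, max_eq_right h.le] at h1
  refine le_antisymm h1 ?_
  rcases max_cases (dist x y) (dist y z) with ⟨he, _⟩ | ⟨he, _⟩ <;> rw [he] at h2
  · exact absurd (lt_of_lt_of_le h h2) (lt_irrefl _)
  · exact h2


attribute [local instance] Classical.propDecidable

variable {X : Type*} [MetricSpace X]

/-- Packaged hypotheses for the scheme construction. -/
structure Setup (X : Type*) [MetricSpace X] : Type _ where
  s : Set X
  V : ℕ → Set X
  hVo : ∀ n, IsOpen (V n)
  hsV : s = ⋂ n, V n
  hs : s.Nonempty
  hclop : ∀ (x : X) (r : ℝ), 0 < r → ∃ D : Set X, IsClopen D ∧ x ∈ D ∧ D ⊆ ball x r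
  hTB : ∀ W : Set X, IsOpen W → (W ∩ s).Nonempty → ¬ TotallyBounded (W ∩ s)

/-- A good family of children for node-set `D` at level `n`. -/
def Good (S : Setup X) (D : Set X) (n : ℕ) (E : ℕ → Set X) : Prop :=
  (∀ k, IsClopen (E k)) ∧ (∀ k, (E k ∩ S.s).Nonempty) ∧ (∀ k, E k ⊆ D) ∧
  (∀ k, E k ⊆ S.V n) ∧ (∀ k, ∀ a ∈ E k, ∀ b ∈ E k, dist a b ≤ (1/2 : ℝ)^n) ∧
  (∀ k l, k ≠ l → Disjoint (E k) (E l)) ∧ (D ∩ S.s ⊆ ⋃ k, E k)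

variable [SecondCountableTopology X]

lemma exists_good (S : Setup X) {D : Set X} (hD : IsClopen D)
    (hne : (D ∩ S.s).Nonempty) (n : ℕ) : ∃ E : ℕ → Set X, Good S D n E := by
  classical
  -- extract a scale at which D ∩ s has no finite net
  have hnb := S.hTB D hD.isOpen hne
  rw [Metric.totallyBounded_iff] at hnb
  push_neg at hnb
  obtain ⟨δ, hδ, hnet⟩ := hnb
  set r : ℝ := min ((1/2 : ℝ)^n) δ with hr
  have hr0 : 0 < r := lt_min (by positivity) hδ
  -- choose small clopen neighborhoods
  have hDV : IsOpen (D ∩ S.V n) := hD.isOpen.inter (S.hVo n)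
  have hmem : ∀ p : ↥(D ∩ S.s), ∃ C : Set X,
      IsClopen C ∧ (p : X) ∈ C ∧ C ⊆ D ∩ S.V n ∧ C ⊆ ball (p : X) (r/3) := by
    rintro ⟨p, hpD, hps⟩
    have hpV : p ∈ S.V n := by
      have := S.hsV ▸ hps; exact mem_iInter.1 this n
    obtain ⟨ε, hε, hball⟩ := Metric.isOpen_iff.1 hDV p ⟨hpD, hpV⟩
    obtain ⟨C, hC, hpC, hCb⟩ := S.hclop p (min ε (r/3)) (lt_min hε (by positivity))
    exact ⟨C, hC, hpC,
      (hCb.trans (ball_subset_ball (min_le_left _ _))).trans hball,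
      hCb.trans (ball_subset_ball (min_le_right _ _))⟩
  choose C hC1 hC2 hC3 hC4 using hmem
  -- countable subcover
  obtain ⟨t, htc, htU⟩ := TopologicalSpace.isOpen_iUnion_countable C (fun p => (hC1 p).isOpen)
  have hcover : D ∩ S.s ⊆ ⋃ p ∈ t, C p := by
    rw [htU]; intro x hx; exact mem_iUnion.2 ⟨⟨x, hx⟩, hC2 _⟩
  have htne : t.Nonempty := by
    obtain ⟨x, hx⟩ := hne
    obtain ⟨p, hp, _⟩ := mem_iUnion₂.1 (hcover hx)
    exact ⟨p, hp⟩
  obtain ⟨u, hu⟩ := (Set.Countable.exists_eq_range htc htne)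
  -- disjointify
  set E' : ℕ → Set X := fun k => C (u k) \ ⋃ j ∈ Finset.range k, C (u j) with hE'
  have hE'clopen : ∀ k, IsClopen (E' k) := fun k =>
    (hC1 _).diff (isClopen_biUnion_finset (fun j _ => hC1 _))
  have hE'cover : D ∩ S.s ⊆ ⋃ k, E' k := by
    intro x hx
    have hex : ∃ k, x ∈ C (u k) := by
      obtain ⟨p, hp, hxp⟩ := mem_iUnion₂.1 (hcover hx)
      rw [hu] at hp; obtain ⟨k, rfl⟩ := hp
      exact ⟨k, hxp⟩
    refine mem_iUnion.2 ⟨Nat.find hex, Nat.find_spec hex, ?_⟩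
    simp only [mem_iUnion, Finset.mem_range, not_exists]
    intro j hj
    exact fun hxj => Nat.find_min hex hj hxj
  have hE'sub : ∀ k, E' k ⊆ C (u k) := fun k => diff_subset
  have hE'small : ∀ k, ∀ a ∈ E' k, ∀ b ∈ E' k, dist a b ≤ 2*r/3 := by
    intro k a ha b hb
    have ha' := hC4 (u k) (hE'sub k ha)
    have hb' := hC4 (u k) (hE'sub k hb)
    rw [mem_ball] at ha' hb'
    calc dist a b ≤ dist a ((u k : ↥(D ∩ S.s)) : X) + dist ((u k : ↥(D ∩ S.s)) : X) b :=
          dist_triangle _ _ _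
    _ ≤ 2*r/3 := by rw [dist_comm ((u k : ↥(D ∩ S.s)) : X) b]; linarith
  have hE'diam : ∀ k, ∀ a ∈ E' k, ∀ b ∈ E' k, dist a b ≤ (1/2 : ℝ)^n := fun k a ha b hb =>
    (hE'small k a ha b hb).trans (by linarith [min_le_left ((1/2 : ℝ)^n) δ])
  have hE'disj : ∀ k l, k ≠ l → Disjoint (E' k) (E' l) := by
    have key : ∀ k l, k < l → Disjoint (E' k) (E' l) := by
      intro k l hkl
      refine Set.disjoint_left.2 fun x hxk hxl => ?_
      exact hxl.2 (mem_iUnion₂.2 ⟨k, Finset.mem_range.2 hkl, hE'sub k hxk⟩)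
    intro k l hkl
    rcases lt_or_gt_of_ne hkl with h | h
    · exact key k l h
    · exact (key l k h).symm
  have hE'subD : ∀ k, E' k ⊆ D := fun k hx => fun h => (hC3 _ ((hE'sub k) h)).1
  have hE'subV : ∀ k, E' k ⊆ S.V n := fun k hx => fun h => (hC3 _ ((hE'sub k) h)).2
  -- the set of indices whose piece meets s is infinite
  set G : Set ℕ := {k | (E' k ∩ S.s).Nonempty} with hG
  have hq : ∀ k : ↥G, ((E' (k : ℕ)) ∩ S.s).Nonempty := fun k => k.2
  choose q hq1 hq2 using fun k => hq k
  have hGinf : G.Infinite := by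
    intro hGfin
    haveI := hGfin.to_subtype
    refine hnet (Set.range q) (Set.finite_range q) ?_
    intro x hx
    obtain ⟨k, hk⟩ := mem_iUnion.1 (hE'cover hx)
    have hkG : k ∈ G := ⟨x, hk, hx.2⟩
    refine mem_iUnion₂.2 ⟨q ⟨k, hkG⟩, mem_range_self _, ?_⟩
    rw [mem_ball]
    have := hE'small k x hk (q ⟨k, hkG⟩) (hq1 ⟨k, hkG⟩)
    have hrδ : r ≤ δ := min_le_right _ _
    linarith
  haveI := hGinf.to_subtype
  haveI := Encodable.ofCountable ↥G
  haveI := Denumerable.ofEncodableOfInfinite ↥G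
  set e := Denumerable.eqv ↥G with he
  refine ⟨fun k => E' ((e.symm k : ↥G) : ℕ), fun k => hE'clopen _, fun k => (e.symm k).2,
    fun k => hE'subD _, fun k => hE'subV _, fun k => hE'diam _, ?_, ?_⟩
  · intro k l hkl
    refine hE'disj _ _ fun hvv => hkl ?_
    have : e.symm k = e.symm l := Subtype.ext hvv
    simpa using congrArg e this
  · intro x hx
    obtain ⟨k, hk⟩ := mem_iUnion.1 (hE'cover hx)
    have hkG : k ∈ G := ⟨x, hk, hx.2⟩
    refine mem_iUnion.2 ⟨e ⟨k, hkG⟩, ?_⟩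
    simpa using hk

variable (S : Setup X)

/-- Totalized choice of a good family of children. -/
noncomputable def fam (D : Set X) (n : ℕ) : ℕ → Set X :=
  if h : IsClopen D ∧ (D ∩ S.s).Nonempty then (exists_good S h.1 h.2 n).choose
  else fun _ => ∅

lemma fam_spec {D : Set X} (h1 : IsClopen D) (h2 : (D ∩ S.s).Nonempty) (n : ℕ) :
    Good S D n (fam S D n) := by
  rw [fam, dif_pos ⟨h1, h2⟩]
  exact (exists_good S h1 h2 n).choose_spec

/-- The scheme of clopen sets, indexed by reversed finite sequences. -/
noncomputable def T : List ℕ → Set X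
  | [] => univ
  | k :: l => fam S (T l) l.length k

lemma T_inv : ∀ l : List ℕ, IsClopen (T S l) ∧ ((T S l) ∩ S.s).Nonempty
  | [] => ⟨isClopen_univ, by rw [show T S [] = univ from rfl]; simpa using S.hs⟩
  | k :: l => by
    have ih := T_inv l
    have hg := fam_spec S ih.1 ih.2 l.length
    exact ⟨hg.1 k, hg.2.1 k⟩

lemma T_good (l : List ℕ) : Good S (T S l) l.length (fun k => T S (k :: l)) := by
  have ih := T_inv S l
  exact fam_spec S ih.1 ih.2 l.length

lemma T_cons_subset (k : ℕ) (l : List ℕ) : T S (k :: l) ⊆ T S l := (T_good S l).2.2.1 k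

open PiNat

lemma T_res_anti (x : ℕ → ℕ) {m n : ℕ} (h : m ≤ n) : T S (res x n) ⊆ T S (res x m) := by
  induction n with
  | zero => rw [Nat.le_zero.1 h]
  | succ n ih =>
    rcases Nat.lt_or_ge m (n+1) with h' | h'
    · rw [res_succ]
      exact (T_cons_subset S _ _).trans (ih (Nat.lt_succ_iff.1 h'))
    · rw [le_antisymm h h']

lemma T_res_diam (x : ℕ → ℕ) (n : ℕ) :
    ∀ a ∈ T S (res x (n+1)), ∀ b ∈ T S (res x (n+1)), dist a b ≤ (1/2 : ℝ)^n := by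
  have := (T_good S (res x n)).2.2.2.2.1 (x n)
  rw [res_length] at this
  intro a ha b hb
  rw [res_succ] at ha hb
  exact this a ha b hb

lemma T_res_subset_V (x : ℕ → ℕ) (n : ℕ) : T S (res x (n+1)) ⊆ S.V n := by
  have := (T_good S (res x n)).2.2.2.1 (x n)
  rw [res_length] at this
  rw [res_succ]
  exact this

/-- A chosen point in each node. -/
noncomputable def pt (l : List ℕ) : X := (T_inv S l).2.choose

lemma pt_mem (l : List ℕ) : pt S l ∈ T S l ∩ S.s := (T_inv S l).2.choose_spec

variable [CompleteSpace X]

lemma exists_lim (x : ℕ → ℕ) :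
    ∃ y : X, Tendsto (fun n => pt S (res x n)) atTop (𝓝 y) := by
  apply cauchySeq_tendsto_of_complete
  apply cauchySeq_of_le_geometric (1/2 : ℝ)
    (max (dist (pt S (res x 0)) (pt S (res x 1))) 2) (by norm_num)
  intro n
  match n with
  | 0 => simpa using le_max_left _ _
  | (m+1) =>
    have h1 : pt S (res x (m+1)) ∈ T S (res x (m+1)) := (pt_mem S _).1
    have h2 : pt S (res x (m+2)) ∈ T S (res x (m+1)) :=
      T_res_anti S x (by omega) (pt_mem S _).1
    have := T_res_diam S x m _ h1 _ h2
    have h3 : (1/2 : ℝ)^m = 2 * (1/2)^(m+1) := by ring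
    calc dist (pt S (res x (m+1))) (pt S (res x (m+2))) ≤ (1/2 : ℝ)^m := this
    _ = 2 * (1/2)^(m+1) := h3
    _ ≤ max (dist (pt S (res x 0)) (pt S (res x 1))) 2 * (1/2)^(m+1) := by
        have : (0:ℝ) < (1/2 : ℝ)^(m+1) := by positivity
        nlinarith [le_max_right (dist (pt S (res x 0)) (pt S (res x 1))) (2:ℝ)]

/-- The limit point along a branch. -/
noncomputable def lim (x : ℕ → ℕ) : X := (exists_lim S x).choose

lemma lim_spec (x : ℕ → ℕ) : Tendsto (fun n => pt S (res x n)) atTop (𝓝 (lim S x)) :=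
  (exists_lim S x).choose_spec

lemma lim_mem_T (x : ℕ → ℕ) (n : ℕ) : lim S x ∈ T S (res x n) := by
  refine (T_inv S (res x n)).1.isClosed.mem_of_tendsto (lim_spec S x) ?_
  filter_upwards [eventually_ge_atTop n] with m hm
  exact T_res_anti S x hm (pt_mem S _).1

lemma lim_mem_s (x : ℕ → ℕ) : lim S x ∈ S.s := by
  rw [S.hsV, mem_iInter]
  intro n
  exact T_res_subset_V S x n (lim_mem_T S x (n+1))

lemma lim_injective : Function.Injective (lim S) := by
  intro x y h
  by_contra hne
  set n := firstDiff x y with hn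
  have hxy : x n ≠ y n := apply_firstDiff_ne hne
  have hres : res x n = res y n := res_eq_res.2 fun i hi => apply_eq_of_lt_firstDiff hi
  have hdisj := (T_good S (res x n)).2.2.2.2.2.1 (x n) (y n) hxy
  have h1 : lim S x ∈ T S (x n :: res x n) := by rw [← res_succ]; exact lim_mem_T S x (n+1)
  have h2 : lim S y ∈ T S (y n :: res x n) := by
    rw [hres, ← res_succ]; exact lim_mem_T S y (n+1)
  rw [h] at h1
  exact Set.disjoint_left.1 hdisj h1 h2

lemma res_reconstruct (x : ℕ → ℕ) : ∀ (l : List ℕ),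
    (∀ i, i < l.length → x i = l.getD (l.length - 1 - i) 0) → res x l.length = l := by
  intro l
  induction l with
  | nil => intro _; simp [res]
  | cons k l ih =>
    intro hx
    have h1 : res x (l.length + 1) = x l.length :: res x l.length := res_succ x l.length
    have h2 : x l.length = k := by
      have := hx l.length (by simp)
      simpa using this
    have h3 : res x l.length = l := by
      apply ih
      intro i hi
      have := hx i (by simp; omega)
      rw [this]
      have harith : (k :: l).length - 1 - i = (l.length - 1 - i) + 1 := by simp; omega
      rw [harith]
      simp
    simp only [List.length_cons, h1, h2, h3]

lemma dist_lim_le (x : ℕ → ℕ) {y : X} (h : ∀ n, y ∈ T S (res x n)) : lim S x = y := by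
  have key : ∀ n : ℕ, dist (lim S x) y ≤ (1/2 : ℝ)^n := fun n =>
    T_res_diam S x n _ (lim_mem_T S x (n+1)) _ (h (n+1))
  have h0 : dist (lim S x) y ≤ 0 := by
    refine ge_of_tendsto (tendsto_pow_atTop_nhds_zero_of_lt_one
      (by norm_num : (0:ℝ) ≤ 1/2) (by norm_num : (1/2:ℝ) < 1)) (Filter.Eventually.of_forall key)
  rw [← dist_le_zero]
  exact h0

lemma exists_lim_eq (l : List ℕ) (y : X) (hyT : y ∈ T S l) (hys : y ∈ S.s) :
    ∃ x : ℕ → ℕ, res x l.length = l ∧ lim S x = y := by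
  classical
  have hcov : ∀ l' : List ℕ, y ∈ T S l' → ∃ k, y ∈ T S (k :: l') := by
    intro l' hl'
    have := (T_good S l').2.2.2.2.2.2 ⟨hl', hys⟩
    exact mem_iUnion.1 this
  -- the chain of extensions
  let L : ∀ _ : ℕ, {l' : List ℕ // y ∈ T S l' ∧ l'.length = l.length + _} := fun m =>
    Nat.rec (motive := fun m => {l' : List ℕ // y ∈ T S l' ∧ l'.length = l.length + m})
      ⟨l, hyT, rfl⟩
      (fun _ ih => ⟨(hcov ih.1 ih.2.1).choose :: ih.1,
        (hcov ih.1 ih.2.1).choose_spec, by simp only [List.length_cons, ih.2.2]; omega⟩) m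
  set x : ℕ → ℕ := fun i =>
    if i < l.length then l.getD (l.length - 1 - i) 0
    else (L (i + 1 - l.length)).1.headI with hxdef
  have hbase : res x l.length = l := by
    apply res_reconstruct
    intro i hi
    simp [hxdef, hi]
  have hstep : ∀ m : ℕ, res x (l.length + m) = (L m).1 := by
    intro m
    induction m with
    | zero => exact hbase
    | succ m ih =>
      have hL : (L (m+1)).1 = (hcov (L m).1 (L m).2.1).choose :: (L m).1 := rfl
      have hlen : l.length + m ≥ l.length := by omega
      have hxval : x (l.length + m) = (hcov (L m).1 (L m).2.1).choose := by
        simp only [hxdef]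
        rw [if_neg (by omega)]
        have : l.length + m + 1 - l.length = m + 1 := by omega
        rw [this, hL]
        simp
      exact (res_succ x (l.length+m)).trans ((congrArg₂ List.cons hxval ih).trans hL.symm)
  refine ⟨x, hbase, dist_lim_le S x ?_⟩
  intro n
  rcases Nat.lt_or_ge n l.length with h | h
  · have hy' : y ∈ T S (res x l.length) := by rw [hbase]; exact hyT
    exact T_res_anti S x h.le hy'
  · obtain ⟨m, rfl⟩ := Nat.exists_eq_add_of_le h
    rw [hstep m]
    exact (L m).2.1

/-- The homeomorphism between a scheme space and the Baire space. -/
theorem nonempty_homeo_natNat : Nonempty (↥S.s ≃ₜ (ℕ → ℕ)) := by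
  classical
  have hbij : Function.Bijective (fun x : ℕ → ℕ => (⟨lim S x, lim_mem_s S x⟩ : ↥S.s)) := by
    constructor
    · intro a b hab
      exact lim_injective S (congrArg Subtype.val hab)
    · rintro ⟨y, hy⟩
      obtain ⟨x, _, hx⟩ := exists_lim_eq S [] y (mem_univ y) hy
      exact ⟨x, Subtype.ext hx⟩
  have hcont : Continuous (fun x : ℕ → ℕ => (⟨lim S x, lim_mem_s S x⟩ : ↥S.s)) := by
    apply Continuous.subtype_mk
    rw [continuous_iff_continuousAt]
    intro x
    rw [ContinuousAt, Metric.tendsto_nhds]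
    intro ε hε
    obtain ⟨n, hn⟩ := exists_pow_lt_of_lt_one hε (by norm_num : (1/2 : ℝ) < 1)
    have hcyl : cylinder x (n+1) ∈ 𝓝 x :=
      (isOpen_cylinder (fun _ => ℕ) x (n+1)).mem_nhds (self_mem_cylinder x (n+1))
    filter_upwards [hcyl] with x' hx'
    have hres : res x' (n+1) = res x (n+1) := res_eq_res.2 (mem_cylinder_iff.1 hx')
    have h1 : lim S x' ∈ T S (res x (n+1)) := hres ▸ lim_mem_T S x' (n+1)
    calc dist (lim S x') (lim S x) ≤ (1/2 : ℝ)^n :=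
          T_res_diam S x n _ h1 _ (lim_mem_T S x (n+1))
    _ < ε := lt_of_le_of_lt (le_refl _) hn
  have hopen : IsOpenMap (fun x : ℕ → ℕ => (⟨lim S x, lim_mem_s S x⟩ : ↥S.s)) := by
    intro O hO
    rw [isOpen_iff_forall_mem_open]
    rintro z ⟨x, hxO, rfl⟩
    obtain ⟨v, ⟨x', n, rfl⟩, hxv, hvO⟩ :=
      (isTopologicalBasis_cylinders (fun _ : ℕ => ℕ)).exists_subset_of_mem_open hxO hO
    have hcyl : cylinder x n = cylinder x' n := mem_cylinder_iff_eq.1 hxv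
    refine ⟨Subtype.val ⁻¹' (T S (res x n)), ?_, ?_, ?_⟩
    · rintro ⟨y, hy⟩ hyT
      obtain ⟨x'', hres, hlim⟩ := exists_lim_eq S (res x n) y hyT hy
      rw [res_length] at hres
      have hx''cyl : x'' ∈ cylinder x n := mem_cylinder_iff.2 (res_eq_res.1 hres)
      exact ⟨x'', hvO (hcyl ▸ hx''cyl), Subtype.ext hlim⟩
    · exact (T_inv S (res x n)).1.isOpen.preimage continuous_subtype_val
    · exact lim_mem_T S x n
  exact ⟨(Equiv.toHomeomorphOfContinuousOpen (Equiv.ofBijective _ hbij) hcont hopen).symm⟩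


variable (K : Type*) [NontriviallyNormedField K] [IsUltrametricDist K]

lemma apply_norm_le (f : C₀(ℕ, K)) (n : ℕ) : ‖f n‖ ≤ ‖f‖ := by
  rw [← ZeroAtInftyContinuousMap.norm_toBCF_eq_norm]
  exact f.toBCF.norm_coe_le_norm n

lemma norm_le_of_forall (f : C₀(ℕ, K)) {C : ℝ} (h0 : 0 ≤ C) (h : ∀ n, ‖f n‖ ≤ C) :
    ‖f‖ ≤ C := by
  rw [← ZeroAtInftyContinuousMap.norm_toBCF_eq_norm]
  exact (BoundedContinuousFunction.norm_le h0).2 h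

instance : IsUltrametricDist C₀(ℕ, K) := by
  apply IsUltrametricDist.isUltrametricDist_of_forall_norm_add_le_max_norm
  intro f g
  apply norm_le_of_forall
  · exact le_max_of_le_left (norm_nonneg f)
  · intro n
    rw [ZeroAtInftyContinuousMap.coe_add]
    refine (IsUltrametricDist.norm_add_le_max (f n) (g n)).trans ?_
    exact max_le_max (apply_norm_le K f n) (apply_norm_le K g n)

/-- The function supported at a single point. -/
noncomputable def sgl (n : ℕ) (c : K) : C₀(ℕ, K) :=
  ⟨⟨fun m => if m = n then c else 0, continuous_of_discreteTopology⟩, by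
    rw [cocompact_eq_atTop (α := ℕ)]
    refine Tendsto.congr' ?_ tendsto_const_nhds
    filter_upwards [eventually_ge_atTop (n+1)] with m hm
    show 0 = (if m = n then c else 0)
    rw [if_neg (by omega)]⟩

@[simp] lemma sgl_apply (n : ℕ) (c : K) (m : ℕ) : sgl K n c m = if m = n then c else 0 := rfl

lemma norm_sgl_le (n : ℕ) (c : K) : ‖sgl K n c‖ ≤ ‖c‖ := by
  apply norm_le_of_forall _ _ (norm_nonneg c)
  intro m
  simp only [sgl_apply]
  split <;> simp [norm_nonneg]

lemma compact_interior_empty (C : Set C₀(ℕ, K)) (hC : IsCompact C) : interior C = ∅ := by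
  classical
  by_contra h
  obtain ⟨x, hx⟩ := nonempty_iff_ne_empty.2 h
  obtain ⟨r, hr, hball⟩ := Metric.isOpen_iff.1 isOpen_interior x hx
  obtain ⟨c, hc0, hcr⟩ := NormedField.exists_norm_lt K hr
  have hmem : ∀ n : ℕ, x + sgl K n c ∈ C := by
    intro n
    apply interior_subset (hball ?_)
    rw [mem_ball, dist_eq_norm, add_sub_cancel_left]
    exact lt_of_le_of_lt (norm_sgl_le K n c) hcr
  have htb := hC.totallyBounded
  rw [Metric.totallyBounded_iff] at htb
  obtain ⟨t, htf, htcov⟩ := htb (‖c‖/2) (by linarith)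
  have hchoice : ∀ n : ℕ, ∃ y ∈ t, x + sgl K n c ∈ ball y (‖c‖/2) := by
    intro n
    have := htcov (hmem n)
    simpa using this
  choose y hy hyb using hchoice
  haveI : Finite ↥t := htf.to_subtype
  obtain ⟨n, m, hnm, heq⟩ := Finite.exists_ne_map_eq_of_infinite (fun n => (⟨y n, hy n⟩ : ↥t))
  have hd1 : dist (x + sgl K n c) (x + sgl K m c) < ‖c‖ := by
    have h1 := mem_ball.1 (hyb n)
    have h2 := mem_ball.1 (hyb m)
    have : y n = y m := congrArg Subtype.val heq
    rw [this] at h1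
    calc dist (x + sgl K n c) (x + sgl K m c)
        ≤ dist (x + sgl K n c) (y m) + dist (y m) (x + sgl K m c) := dist_triangle _ _ _
    _ < ‖c‖ := by rw [dist_comm (y m) (x + sgl K m c)]; linarith
  have hd2 : ‖c‖ ≤ dist (x + sgl K n c) (x + sgl K m c) := by
    rw [dist_eq_norm]
    have hv : (x + sgl K n c - (x + sgl K m c)) n = c := by
      simp [hnm]
    calc ‖c‖ = ‖(x + sgl K n c - (x + sgl K m c)) n‖ := by rw [hv]
    _ ≤ _ := apply_norm_le K _ n
  linarith

variable [CompleteSpace K] [LocallyCompactSpace K]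

/-- Extension of a finite vector by zero. -/
noncomputable def ext0 (N : ℕ) (v : Fin N → K) : C₀(ℕ, K) :=
  ⟨⟨fun m => if h : m < N then v ⟨m, h⟩ else 0, continuous_of_discreteTopology⟩, by
    rw [cocompact_eq_atTop (α := ℕ)]
    refine Tendsto.congr' ?_ tendsto_const_nhds
    filter_upwards [eventually_ge_atTop N] with m hm
    show 0 = (if h : m < N then v ⟨m, h⟩ else 0)
    rw [dif_neg (by omega)]⟩

instance : TopologicalSpace.SeparableSpace C₀(ℕ, K) := by
  haveI : ProperSpace K :=
    ProperSpace.of_nontriviallyNormedField_of_weaklyLocallyCompactSpace K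
  obtain ⟨D, hDc, hDd⟩ := TopologicalSpace.exists_countable_dense K
  haveI := hDc.to_subtype
  refine ⟨⟨⋃ N : ℕ, Set.range (fun v : Fin N → ↥D => ext0 K N (fun i => (v i : K))), ?_, ?_⟩⟩
  · exact Set.countable_iUnion (fun N => Set.countable_range _)
  · rw [Metric.dense_iff]
    intro f ε hε
    -- find N beyond which f is small
    have hz : Tendsto (fun m => ‖f m‖) atTop (𝓝 0) := by
      have := f.zero_at_infty'
      rw [cocompact_eq_atTop (α := ℕ)] at this
      simpa using this.norm
    obtain ⟨N, hN⟩ := (Metric.tendsto_atTop.1 hz (ε/2) (by linarith))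
    have happrox : ∀ i : Fin N, ∃ d : ↥D, ‖f i - (d : K)‖ < ε/2 := by
      intro i
      have := hDd (f i)
      rw [Metric.mem_closure_iff] at this
      obtain ⟨d, hd, hdist⟩ := this (ε/2) (by linarith)
      exact ⟨⟨d, hd⟩, by rwa [← dist_eq_norm]⟩
    choose d hd using happrox
    refine ⟨ext0 K N (fun i => (d i : K)), ?_, ?_⟩
    · rw [mem_ball, dist_eq_norm, norm_sub_rev]
      have : ‖f - ext0 K N (fun i => (d i : K))‖ ≤ ε/2 := by
        apply norm_le_of_forall _ _ (by linarith)
        intro m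
        simp only [ZeroAtInftyContinuousMap.coe_sub, Pi.sub_apply]
        by_cases hm : m < N
        · have : ext0 K N (fun i => (d i : K)) m = (d ⟨m, hm⟩ : K) := by
            simp [ext0, dif_pos hm]
          rw [this]
          exact (hd ⟨m, hm⟩).le
        · have h1 : ext0 K N (fun i => (d i : K)) m = 0 := by
            simp [ext0, dif_neg hm]
          rw [h1, sub_zero]
          have := hN m (by omega)
          rw [Real.dist_eq, sub_zero] at this
          exact (lt_of_le_of_lt (le_abs_self _) this).le
      linarith
    · exact mem_iUnion.2 ⟨N, Set.mem_range.2 ⟨d, rfl⟩⟩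

section Assembly

variable {X : Type*} [MetricSpace X] [CompleteSpace X] [SecondCountableTopology X]
  [IsUltrametricDist X]

lemma hclop_ultra : ∀ (x : X) (r : ℝ), 0 < r → ∃ D : Set X, IsClopen D ∧ x ∈ D ∧ D ⊆ ball x r :=
  fun x r hr => ⟨ball x r, IsUltrametricDist.isClopen_ball x r, mem_ball_self hr, subset_rfl⟩

lemma not_tb (hci : ∀ C : Set X, IsCompact C → interior C = ∅) {B t : Set X}
    (hB : IsOpen B) (ht : Dense t) :
    ∀ W, IsOpen W → (W ∩ (B ∩ t)).Nonempty → ¬ TotallyBounded (W ∩ (B ∩ t)) := by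
  intro W hW hne htb
  have hWB : IsOpen (W ∩ B) := hW.inter hB
  have h1 : W ∩ B ⊆ closure (W ∩ (B ∩ t)) := by
    have := ht.open_subset_closure_inter hWB
    rwa [inter_assoc] at this
  have hcpt : IsCompact (closure (W ∩ (B ∩ t))) :=
    TotallyBounded.isCompact_of_isClosed htb.closure isClosed_closure
  have h3 : W ∩ B ⊆ interior (closure (W ∩ (B ∩ t))) := hWB.subset_interior_iff.2 h1
  rw [hci _ hcpt] at h3
  obtain ⟨x, hx⟩ := hne
  exact h3 ⟨hx.1, hx.2.1⟩

theorem homeo_ball_compl (hci : ∀ C : Set X, IsCompact C → interior C = ∅)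
    {A : ℕ → Set X} (hA : ∀ j, IsClosed (A j)) (hAd : Dense (⋃ j, A j)ᶜ)
    {B : Set X} (hB : IsOpen B) (hne : (B ∩ (⋃ j, A j)ᶜ).Nonempty) :
    Nonempty (↥(B ∩ (⋃ j, A j)ᶜ) ≃ₜ ↥B) := by
  let S1 : Setup X :=
    { s := B ∩ (⋃ j, A j)ᶜ
      V := fun n => B ∩ (A n)ᶜ
      hVo := fun n => hB.inter (hA n).isOpen_compl
      hsV := by rw [compl_iUnion, inter_iInter]
      hs := hne
      hclop := hclop_ultra
      hTB := by
        intro W hW h1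
        exact not_tb hci hB hAd W hW h1 }
  let S2 : Setup X :=
    { s := B
      V := fun _ => B
      hVo := fun _ => hB
      hsV := (iInter_const B).symm
      hs := hne.mono inter_subset_left
      hclop := hclop_ultra
      hTB := by
        intro W hW h1 h2
        refine not_tb hci hB dense_univ W hW ?_ ?_ <;> rwa [inter_univ]
    }
  exact ⟨(nonempty_homeo_natNat S1).some.trans (nonempty_homeo_natNat S2).some.symm⟩

theorem main_abstract [Nonempty X]
    (hci : ∀ C : Set X, IsCompact C → interior C = ∅)
    (U : Set X) (hU : IsOpen U) (Kj : ℕ → Set X)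
    (hKc : ∀ j, IsCompact (Kj j)) (hKU : ∀ j, Kj j ⊆ U) :
    ∃ g : ↥((⋃ j, Kj j)ᶜ) ≃ₜ X,
      ∀ x : ↥((⋃ j, Kj j)ᶜ), (x : X) ∉ U → g x = (x : X) := by
  classical
  have hAcl : ∀ j, IsClosed (Kj j) := fun j => (hKc j).isClosed
  have hAd : Dense (⋃ j, Kj j)ᶜ := by
    rw [compl_iUnion]
    exact dense_iInter_of_isOpen (fun j => (hAcl j).isOpen_compl)
      (fun j => interior_eq_empty_iff_dense_compl.1 (hci _ (hKc j)))
  by_cases hUu : U = univ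
  · have hne : (univ ∩ (⋃ j, Kj j)ᶜ).Nonempty := by
      rw [univ_inter]; exact hAd.nonempty
    obtain ⟨e⟩ := homeo_ball_compl hci hAcl hAd isOpen_univ hne
    refine ⟨(Homeomorph.setCongr (univ_inter _).symm).trans
      (e.trans (Homeomorph.Set.univ X)), ?_⟩
    intro x hx
    exact absurd (hUu ▸ mem_univ (x : X)) hx
  · have hUc : Uᶜ.Nonempty := Set.nonempty_compl.2 hUu
    set ρ : X → ℝ := fun x => infDist x Uᶜ with hρdef
    set b : X → Set X := fun x => ball x (ρ x) with hbdef
    have hρpos : ∀ x ∈ U, 0 < ρ x := fun x hx =>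
      (IsClosed.notMem_iff_infDist_pos hU.isClosed_compl hUc).1 (by simpa using hx)
    have hmemself : ∀ y ∈ U, y ∈ b y := fun y hy => mem_ball_self (hρpos y hy)
    have hbU : ∀ x ∈ U, b x ⊆ U := by
      intro x hx y hy
      by_contra hyU
      have h1 : ρ x ≤ dist x y := infDist_le_dist_of_mem hyU
      rw [hbdef, mem_ball, dist_comm] at hy
      linarith
    have hdist_eq : ∀ x ∈ U, ∀ y ∈ b x, ∀ z ∉ U, dist z y = dist z x := by
      intro x hx y hy z hz
      have h1 : ρ x ≤ dist x z := infDist_le_dist_of_mem hz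
      have h2 : dist x y < dist x z := by
        rw [hbdef, mem_ball, dist_comm] at hy
        linarith
      have h3 := dist_eq_of_dist_lt h2
      rw [dist_comm z y, dist_comm z x]
      exact h3
    have hρ_eq : ∀ x ∈ U, ∀ y ∈ b x, ρ y = ρ x := by
      intro x hx y hy
      simp only [hρdef]
      rw [infDist_eq_iInf, infDist_eq_iInf]
      congr 1
      funext z
      have := hdist_eq x hx y hy z z.2
      rw [dist_comm y (z : X), dist_comm x (z : X)]
      exact this
    have hbb : ∀ x ∈ U, ∀ y ∈ b x, b y = b x := by
      intro x hx y hy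
      have hρe := hρ_eq x hx y hy
      have hyx : dist y x < ρ x := by rw [hbdef, mem_ball] at hy; exact hy
      ext z
      simp only [hbdef, mem_ball, hρe]
      constructor
      · intro h
        exact lt_of_le_of_lt (IsUltrametricDist.dist_triangle_max z y x) (max_lt h hyx)
      · intro h
        have hxy : dist x y < ρ x := by rw [dist_comm]; exact hyx
        exact lt_of_le_of_lt (IsUltrametricDist.dist_triangle_max z x y) (max_lt h hxy)
    -- choose homeomorphism data on each ball
    have hQ : ∀ S : Set X, (∃ x ∈ U, S = b x) → ∃ FG : (X → X) × (X → X),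
        (∀ y ∈ S ∩ (⋃ j, Kj j)ᶜ, FG.1 y ∈ S) ∧
        (∀ z ∈ S, FG.2 z ∈ S ∩ (⋃ j, Kj j)ᶜ) ∧
        (∀ y ∈ S ∩ (⋃ j, Kj j)ᶜ, FG.2 (FG.1 y) = y) ∧
        (∀ z ∈ S, FG.1 (FG.2 z) = z) ∧
        ContinuousOn FG.1 (S ∩ (⋃ j, Kj j)ᶜ) ∧ ContinuousOn FG.2 S := by
      rintro S ⟨x, hxU, rfl⟩
      have hBo : IsOpen (b x) := isOpen_ball
      have hBne : (b x ∩ (⋃ j, Kj j)ᶜ).Nonempty :=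
        hAd.inter_open_nonempty _ hBo ⟨x, hmemself x hxU⟩
      obtain ⟨e⟩ := homeo_ball_compl hci hAcl hAd hBo hBne
      refine ⟨(fun y => if h : y ∈ b x ∩ (⋃ j, Kj j)ᶜ then (e ⟨y, h⟩ : X) else y,
               fun z => if h : z ∈ b x then ((e.symm ⟨z, h⟩ : ↥(b x ∩ (⋃ j, Kj j)ᶜ)) : X) else z),
        ?_, ?_, ?_, ?_, ?_, ?_⟩
      · intro y hy; simp only [dif_pos hy]; exact (e ⟨y, hy⟩).2
      · intro z hz; simp only [dif_pos hz]; exact (e.symm ⟨z, hz⟩).2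
      · intro y hy
        simp only [dif_pos hy]
        have h1 : ((e ⟨y, hy⟩ : ↥(b x)) : X) ∈ b x := (e ⟨y, hy⟩).2
        rw [dif_pos h1]
        have h2 : (⟨((e ⟨y, hy⟩ : ↥(b x)) : X), h1⟩ : ↥(b x)) = e ⟨y, hy⟩ := Subtype.ext rfl
        rw [h2, Homeomorph.symm_apply_apply]
      · intro z hz
        simp only [dif_pos hz]
        have h1 : ((e.symm ⟨z, hz⟩ : ↥(b x ∩ (⋃ j, Kj j)ᶜ)) : X) ∈ b x ∩ (⋃ j, Kj j)ᶜ :=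
          (e.symm ⟨z, hz⟩).2
        rw [dif_pos h1]
        have h2 : (⟨((e.symm ⟨z, hz⟩ : ↥(b x ∩ (⋃ j, Kj j)ᶜ)) : X), h1⟩ :
            ↥(b x ∩ (⋃ j, Kj j)ᶜ)) = e.symm ⟨z, hz⟩ := Subtype.ext rfl
        rw [h2, Homeomorph.apply_symm_apply]
      · rw [continuousOn_iff_continuous_restrict]
        have h2 : domRestrict (b x ∩ (⋃ j, Kj j)ᶜ)
            (fun y => if h : y ∈ b x ∩ (⋃ j, Kj j)ᶜ then (e ⟨y, h⟩ : X) else y)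
            = fun p => (e p : X) := by
          funext p
          simp only [domRestrict_apply, dif_pos p.2]
        rw [h2]
        exact continuous_subtype_val.comp e.continuous
      · rw [continuousOn_iff_continuous_restrict]
        have h2 : domRestrict (b x)
            (fun z => if h : z ∈ b x then ((e.symm ⟨z, h⟩ : ↥(b x ∩ (⋃ j, Kj j)ᶜ)) : X) else z)
            = fun p => ((e.symm p : ↥(b x ∩ (⋃ j, Kj j)ᶜ)) : X) := by
          funext p
          simp only [domRestrict_apply, dif_pos p.2]
        rw [h2]
        exact continuous_subtype_val.comp e.symm.continuous
    choose FG hFG using hQ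
    have hFGc : ∀ (S S' : Set X) (hS : ∃ x ∈ U, S = b x) (hS' : ∃ x ∈ U, S' = b x),
        S = S' → FG S hS = FG S' hS' := by
      rintro S S' hS hS' rfl; rfl
    set Φ : X → X := fun y =>
      if h : y ∈ U ∧ y ∈ (⋃ j, Kj j)ᶜ then (FG (b y) ⟨y, h.1, rfl⟩).1 y else y with hΦdef
    set Ψ : X → X := fun z =>
      if h : z ∈ U then (FG (b z) ⟨z, h, rfl⟩).2 z else z with hΨdef
    have hΦU : ∀ y (h1 : y ∈ U) (h2 : y ∈ (⋃ j, Kj j)ᶜ),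
        Φ y = (FG (b y) ⟨y, h1, rfl⟩).1 y := fun y h1 h2 => dif_pos ⟨h1, h2⟩
    have hΦn : ∀ y, y ∉ U → Φ y = y := fun y h => dif_neg (fun hc => h hc.1)
    have hΨU : ∀ z (h1 : z ∈ U), Ψ z = (FG (b z) ⟨z, h1, rfl⟩).2 z := fun z h1 => dif_pos h1
    have hΨn : ∀ z, z ∉ U → Ψ z = z := fun z h => dif_neg h
    have hΦmem : ∀ y (h1 : y ∈ U) (h2 : y ∈ (⋃ j, Kj j)ᶜ), Φ y ∈ b y := by
      intro y h1 h2
      rw [hΦU y h1 h2]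
      exact (hFG (b y) ⟨y, h1, rfl⟩).1 y ⟨hmemself y h1, h2⟩
    have hΨmem : ∀ z (h1 : z ∈ U), Ψ z ∈ b z ∩ (⋃ j, Kj j)ᶜ := by
      intro z h1
      rw [hΨU z h1]
      exact (hFG (b z) ⟨z, h1, rfl⟩).2.1 z (hmemself z h1)
    have hAU : (⋃ j, Kj j) ⊆ U := iUnion_subset hKU
    have hΨA : ∀ z, Ψ z ∈ (⋃ j, Kj j)ᶜ := by
      intro z
      by_cases h1 : z ∈ U
      · exact (hΨmem z h1).2
      · rw [hΨn z h1]; exact fun hz => h1 (hAU hz)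
    have hleft : ∀ y ∈ (⋃ j, Kj j)ᶜ, Ψ (Φ y) = y := by
      intro y hy
      by_cases h1 : y ∈ U
      · have hz := hΦmem y h1 hy
        have hzU : Φ y ∈ U := hbU y h1 hz
        have hbz : b (Φ y) = b y := hbb y h1 (Φ y) hz
        rw [hΨU (Φ y) hzU, hFGc (b (Φ y)) (b y) ⟨Φ y, hzU, rfl⟩ ⟨y, h1, rfl⟩ hbz,
          hΦU y h1 hy]
        exact (hFG (b y) ⟨y, h1, rfl⟩).2.2.1 y ⟨hmemself y h1, hy⟩
      · rw [hΦn y h1, hΨn y h1]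
    have hright : ∀ z, Φ (Ψ z) = z := by
      intro z
      by_cases h1 : z ∈ U
      · have hw := hΨmem z h1
        have hwU : Ψ z ∈ U := hbU z h1 hw.1
        have hbw : b (Ψ z) = b z := hbb z h1 (Ψ z) hw.1
        rw [hΦU (Ψ z) hwU hw.2, hFGc (b (Ψ z)) (b z) ⟨Ψ z, hwU, rfl⟩ ⟨z, h1, rfl⟩ hbw,
          hΨU z h1]
        exact (hFG (b z) ⟨z, h1, rfl⟩).2.2.2.1 z (hmemself z h1)
      · rw [hΨn z h1, hΦn z h1]
    -- continuity of Φ on the complement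
    have hΦcont : ContinuousOn Φ (⋃ j, Kj j)ᶜ := by
      intro y hy
      by_cases h1 : y ∈ U
      · have hF := (hFG (b y) ⟨y, h1, rfl⟩).2.2.2.2.1
        have hcw : ContinuousWithinAt ((FG (b y) ⟨y, h1, rfl⟩).1) (b y ∩ (⋃ j, Kj j)ᶜ) y :=
          hF y ⟨hmemself y h1, hy⟩
        have hcw2 : ContinuousWithinAt Φ (b y ∩ (⋃ j, Kj j)ᶜ) y := by
          refine hcw.congr ?_ (hΦU y h1 hy)
          intro y' hy'
          have h2 : y' ∈ U := hbU y h1 hy'.1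
          rw [hΦU y' h2 hy'.2,
            hFGc (b y') (b y) ⟨y', h2, rfl⟩ ⟨y, h1, rfl⟩ (hbb y h1 y' hy'.1)]
        rw [inter_comm] at hcw2
        exact (continuousWithinAt_inter (isOpen_ball.mem_nhds (hmemself y h1))).1 hcw2
      · have key : ∀ y', y' ∈ (⋃ j, Kj j)ᶜ → dist (Φ y') y = dist y' y := by
          intro y' hy'
          by_cases h2 : y' ∈ U
          · have hm := hΦmem y' h2 hy'
            have h3 := hdist_eq y' h2 (Φ y') hm y h1
            rw [dist_comm (Φ y') y, dist_comm y' y, h3]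
          · rw [hΦn y' h2]
        have htend : Tendsto Φ (𝓝[(⋃ j, Kj j)ᶜ] y) (𝓝 y) := by
          rw [Metric.tendsto_nhds]
          intro ε hε
          filter_upwards [self_mem_nhdsWithin,
            mem_nhdsWithin_of_mem_nhds (ball_mem_nhds y hε)] with y' hy' hb'
          rw [key y' hy']
          exact mem_ball.1 hb'
        show ContinuousWithinAt Φ (⋃ j, Kj j)ᶜ y
        unfold ContinuousWithinAt
        rw [hΦn y h1]
        exact htend
    -- continuity of Ψ everywhere
    have hΨcont : Continuous Ψ := by
      rw [continuous_iff_continuousAt]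
      intro z
      by_cases h1 : z ∈ U
      · have hG := (hFG (b z) ⟨z, h1, rfl⟩).2.2.2.2.2
        have hca : ContinuousAt ((FG (b z) ⟨z, h1, rfl⟩).2) z :=
          hG.continuousAt (isOpen_ball.mem_nhds (hmemself z h1))
        refine hca.congr ?_
        filter_upwards [isOpen_ball.mem_nhds (hmemself z h1)] with z' hz'
        have h2 : z' ∈ U := hbU z h1 hz'
        rw [hΨU z' h2, hFGc (b z') (b z) ⟨z', h2, rfl⟩ ⟨z, h1, rfl⟩ (hbb z h1 z' hz')]
      · have key : ∀ z', dist (Ψ z') z = dist z' z := by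
          intro z'
          by_cases h2 : z' ∈ U
          · have hm := (hΨmem z' h2).1
            have h3 := hdist_eq z' h2 (Ψ z') hm z h1
            rw [dist_comm (Ψ z') z, dist_comm z' z, h3]
          · rw [hΨn z' h2]
        have htend : Tendsto Ψ (𝓝 z) (𝓝 z) := by
          rw [Metric.tendsto_nhds]
          intro ε hε
          filter_upwards [ball_mem_nhds z hε] with z' hb'
          rw [key z']
          exact mem_ball.1 hb'
        unfold ContinuousAt
        rw [hΨn z h1]
        exact htend
    refine ⟨⟨⟨fun y => Φ (y : X), fun z => ⟨Ψ z, hΨA z⟩,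
      fun y => Subtype.ext (hleft (y : X) y.2), fun z => hright z⟩,
      hΦcont.restrict, hΨcont.subtype_mk hΨA⟩, ?_⟩
    intro x hx
    exact hΦn (x : X) hx

end Assembly
end NAAnderson

open scoped ZeroAtInfty

/-- Let `K` be a locally compact field with a complete
non-Archimedean multiplicative norm whose value group is nontrivial.  Let `U` be an
open subset of `c₀ = c₀(ℕ, K)` and let `K_j ⊆ U` be compact for each `j ∈ ℕ`.  Then
there is a homeomorphism `g` of `c₀ \ ⋃_j K_j` onto `c₀` which is the identity on
`c₀ \ U`. -/
theorem exists_homeomorph_c0_sdiff_compacts (K : Type*) [NontriviallyNormedField K]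
    [IsUltrametricDist K] [CompleteSpace K] [LocallyCompactSpace K]
    (U : Set C₀(ℕ, K)) (hU : IsOpen U) (Kj : ℕ → Set C₀(ℕ, K))
    (hKc : ∀ j, IsCompact (Kj j)) (hKU : ∀ j, Kj j ⊆ U) :
    ∃ g : ↥((⋃ j, Kj j)ᶜ) ≃ₜ C₀(ℕ, K),
      ∀ x : ↥((⋃ j, Kj j)ᶜ), (x : C₀(ℕ, K)) ∉ U → g x = (x : C₀(ℕ, K)) := by
  haveI : Nonempty C₀(ℕ, K) := ⟨0⟩
  haveI : SecondCountableTopology C₀(ℕ, K) :=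
    UniformSpace.secondCountable_of_separable _
  exact NAAnderson.main_abstract (NAAnderson.compact_interior_empty K) U hU Kj hKc hKU
end
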